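/- arXiv:1201.4899 — 10 statements merged into one kernel-verified Lean document; each statement's English description precedes it below -/
import Mathlib

section
/- Let S be a (θ,α,β)-self-determined community in an affinity system on a finite set V, let γ = α − β, and let M = ⌈ln(16/γ)/α⌉. Then there exists a set U ⊆ S with |U| ≤ M such that the set S₁ = {i ∈ V : ∃ s ∈ U with i ∈ π_s(1:⌈θ|S|⌉)} satisfies |S \ S₁| ≤ (γ/16)|S|. -/
open Finset

def topSet (n : ℕ) (π : Fin n → Equiv.Perm (Fin n)) (s : Fin n) (t : ℕ) : Finset (Fin n) :=
  Finset.univ.filter (fun x => ((π s).symm x : ℕ) < t)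

def votes (n : ℕ) (π : Fin n → Equiv.Perm (Fin n)) (S : Finset (Fin n)) (t : ℕ)
    (i : Fin n) : ℕ :=
  (S.filter (fun s => i ∈ topSet n π s t)).card

def IsCommunity (n : ℕ) (π : Fin n → Equiv.Perm (Fin n)) (θ α β : ℝ)
    (S : Finset (Fin n)) : Prop :=
  (∀ i ∈ S, α * S.card ≤ (votes n π S ⌈θ * S.card⌉₊ i : ℝ)) ∧
  (∀ j, j ∉ S → (votes n π S ⌈θ * S.card⌉₊ j : ℝ) ≤ β * S.card)

theorem stmt_1 (n : ℕ) (π : Fin n → Equiv.Perm (Fin n)) (θ α β γ : ℝ)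
    (hθ : 0 < θ) (hβ : 0 ≤ β) (hβα : β < α) (hα : α ≤ 1) (hγ : γ = α - β)
    (S : Finset (Fin n)) (hS : IsCommunity n π θ α β S)
    (M : ℕ) (hM : M = ⌈Real.log (16 / γ) / α⌉₊) :
    ∃ U ⊆ S, U.card ≤ M ∧
      (((S \ (Finset.univ.filter (fun i => ∃ s ∈ U, i ∈ topSet n π s ⌈θ * S.card⌉₊))).card : ℝ)
        ≤ (γ / 16) * S.card) := by
  have hαpos : 0 < α := lt_of_le_of_lt hβ hβα
  have hγpos : 0 < γ := by rw [hγ]; linarith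
  have hγ1 : γ ≤ 1 := by linarith [hγ ▸ (by linarith : α - β ≤ 1)]
  set t := ⌈θ * (S.card : ℝ)⌉₊ with ht
  have key : ∀ k : ℕ, ∃ U ⊆ S, U.card ≤ k ∧
      ((S \ (Finset.univ.filter (fun i => ∃ s ∈ U, i ∈ topSet n π s t))).card : ℝ)
        ≤ (1 - α) ^ k * S.card := by
    intro k
    induction k with
    | zero =>
      refine ⟨∅, Finset.empty_subset S, le_refl 0, ?_⟩
      have : (Finset.univ.filter fun i => ∃ s ∈ (∅ : Finset (Fin n)), i ∈ topSet n π s t) = ∅ := by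
        simp
      rw [this]
      simp
    | succ k ih =>
      obtain ⟨U, hU, hcard, hle⟩ := ih
      set R := S \ (Finset.univ.filter (fun i => ∃ s ∈ U, i ∈ topSet n π s t)) with hRdef
      by_cases hR : R = ∅
      · refine ⟨U, hU, hcard.trans (Nat.le_succ k), ?_⟩
        rw [← hRdef, hR]
        simp
        have h1α : (0:ℝ) ≤ 1 - α := by linarith
        positivity
      · have hRne : R.Nonempty := Finset.nonempty_of_ne_empty hR
        have hSne : S.Nonempty := hRne.mono (Finset.sdiff_subset)
        have hScard : (0 : ℝ) < S.card := by
          exact_mod_cast Finset.card_pos.mpr hSne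
        -- double counting
        have hdc : ∑ s ∈ S, ((R.filter (fun i => i ∈ topSet n π s t)).card : ℝ)
            = ∑ i ∈ R, (votes n π S t i : ℝ) := by
          push_cast
          rw [← Nat.cast_sum, ← Nat.cast_sum]
          congr 1
          simp only [votes, Finset.card_filter]
          rw [Finset.sum_comm]
        have hlow : α * S.card * R.card
            ≤ ∑ s ∈ S, ((R.filter (fun i => i ∈ topSet n π s t)).card : ℝ) := by
          rw [hdc]
          calc α * S.card * R.card = ∑ _i ∈ R, α * S.card := by
                rw [Finset.sum_const, nsmul_eq_mul]; ring
            _ ≤ ∑ i ∈ R, (votes n π S t i : ℝ) := by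
                apply Finset.sum_le_sum
                intro i hi
                have hiS : i ∈ S := (Finset.mem_sdiff.mp hi).1
                exact hS.1 i hiS
        obtain ⟨s, hsS, hs⟩ : ∃ s ∈ S,
            α * R.card ≤ ((R.filter (fun i => i ∈ topSet n π s t)).card : ℝ) := by
          by_contra h
          push_neg at h
          have : ∑ s ∈ S, ((R.filter (fun i => i ∈ topSet n π s t)).card : ℝ)
              < ∑ _s ∈ S, α * R.card :=
            Finset.sum_lt_sum_of_nonempty hSne (fun s hs => h s hs)
          rw [Finset.sum_const, nsmul_eq_mul] at this
          nlinarith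
        refine ⟨insert s U, Finset.insert_subset hsS hU, ?_, ?_⟩
        · exact (Finset.card_insert_le _ _).trans (Nat.succ_le_succ hcard)
        · have hsub : S \ (Finset.univ.filter (fun i => ∃ s' ∈ insert s U, i ∈ topSet n π s' t))
              = R \ (R.filter (fun i => i ∈ topSet n π s t)) := by
            ext i
            simp only [hRdef, Finset.mem_sdiff, Finset.mem_filter, Finset.mem_univ,
              true_and, Finset.mem_insert]
            aesop
          rw [hsub]
          have hcardeq : ((R \ R.filter (fun i => i ∈ topSet n π s t)).card : ℝ)
              = R.card - (R.filter (fun i => i ∈ topSet n π s t)).card := by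
            rw [Finset.card_sdiff_of_subset (Finset.filter_subset _ _)]
            have := Finset.card_filter_le R (fun i => i ∈ topSet n π s t)
            push_cast [Nat.cast_sub this]
            ring
          rw [hcardeq]
          have h1 : (R.card : ℝ) - (R.filter (fun i => i ∈ topSet n π s t)).card
              ≤ (1 - α) * R.card := by nlinarith
          calc (R.card : ℝ) - (R.filter (fun i => i ∈ topSet n π s t)).card
              ≤ (1 - α) * R.card := h1
            _ ≤ (1 - α) * ((1 - α) ^ k * S.card) := by
                apply mul_le_mul_of_nonneg_left hle (by linarith)
            _ = (1 - α) ^ (k + 1) * S.card := by ring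
  obtain ⟨U, hU, hcard, hle⟩ := key M
  refine ⟨U, hU, hcard, hle.trans ?_⟩
  have hpow : (1 - α) ^ M ≤ γ / 16 := by
    have hMle : Real.log (16 / γ) ≤ α * M := by
      rw [hM]
      calc Real.log (16 / γ) = α * (Real.log (16 / γ) / α) := by field_simp
        _ ≤ α * ⌈Real.log (16 / γ) / α⌉₊ :=
            mul_le_mul_of_nonneg_left (Nat.le_ceil _) (le_of_lt hαpos)
    calc (1 - α) ^ M ≤ Real.exp (-α) ^ M := by
          apply pow_le_pow_left₀ (by linarith)
          linarith [Real.add_one_le_exp (-α)]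
      _ = Real.exp (-(α * M)) := by rw [← Real.exp_nat_mul]; ring_nf
      _ ≤ Real.exp (-(Real.log (16 / γ))) := Real.exp_le_exp.mpr (by linarith)
      _ = γ / 16 := by
          rw [Real.exp_neg, Real.exp_log (by positivity)]
          field_simp
  exact mul_le_mul_of_nonneg_right hpow (Nat.cast_nonneg _)
end

section
/- Fix a (θ,α,β)-self-determined community S with γ = α − β and t = |S|, and let S₁ ⊆ V satisfy |S₁| ≤ Mθt (for some M ≥ 1) and |S \ S₁| ≤ γt/16; set S̃ = S ∩ S₁. Then: (1) every i ∈ S̃ is voted for (with respect to community size t) by at least an (α − γ/16) fraction of the members of S̃; and (2) every j ∈ S₁ \ S is voted for by at most an (α − 3γ/4) fraction of the members of S̃. -/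
open Finset

theorem stmt_2 (n : ℕ) (π : Fin n → Equiv.Perm (Fin n)) (θ α β γ : ℝ)
    (hθ : 0 < θ) (hβ : 0 ≤ β) (hβα : β < α) (hα : α ≤ 1) (hγ : γ = α - β)
    (S S₁ : Finset (Fin n)) (t : ℕ) (ht : t = S.card)
    (hS : IsCommunity n π θ α β S)
    (M : ℝ) (hM : 1 ≤ M)
    (hS₁card : (S₁.card : ℝ) ≤ M * θ * t)
    (hcover : ((S \ S₁).card : ℝ) ≤ γ * t / 16) :
    (∀ i ∈ S ∩ S₁,
      (α - γ / 16) * ((S ∩ S₁).card : ℝ) ≤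
        (((S ∩ S₁).filter (fun s => i ∈ topSet n π s ⌈θ * (t : ℝ)⌉₊)).card : ℝ)) ∧
    (∀ j ∈ S₁ \ S,
      (((S ∩ S₁).filter (fun s => j ∈ topSet n π s ⌈θ * (t : ℝ)⌉₊)).card : ℝ) ≤
        (α - 3 * γ / 4) * ((S ∩ S₁).card : ℝ)) := by
  subst ht hγ
  obtain ⟨h1, h2⟩ := hS
  set t' := ⌈θ * ((S.card : ℕ) : ℝ)⌉₊ with ht'
  have hcardsum : ((S ∩ S₁).card : ℝ) + ((S \ S₁).card : ℝ) = S.card := by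
    exact_mod_cast Finset.card_inter_add_card_sdiff S S₁
  have hsub : ∀ i : Fin n, (((S ∩ S₁).filter (fun s => i ∈ topSet n π s t')).card : ℝ)
      ≤ ((S.filter (fun s => i ∈ topSet n π s t')).card : ℝ) := fun i => by
    exact_mod_cast Finset.card_le_card
      (Finset.filter_subset_filter _ Finset.inter_subset_left)
  have hsup : ∀ i : Fin n, ((S.filter (fun s => i ∈ topSet n π s t')).card : ℝ)
      ≤ (((S ∩ S₁).filter (fun s => i ∈ topSet n π s t')).card : ℝ)
        + ((S \ S₁).card : ℝ) := fun i => by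
    have hss : S.filter (fun s => i ∈ topSet n π s t') ⊆
        ((S ∩ S₁).filter (fun s => i ∈ topSet n π s t')) ∪ (S \ S₁) := by
      intro x hx
      simp only [Finset.mem_filter, Finset.mem_union, Finset.mem_inter,
        Finset.mem_sdiff] at *
      by_cases h : x ∈ S₁ <;> tauto
    calc ((S.filter (fun s => i ∈ topSet n π s t')).card : ℝ)
        ≤ (((((S ∩ S₁).filter (fun s => i ∈ topSet n π s t'))) ∪ (S \ S₁)).card : ℝ) := by
          exact_mod_cast Finset.card_le_card hss
      _ ≤ _ := by exact_mod_cast Finset.card_union_le _ _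
  have hd0 : (0:ℝ) ≤ ((S \ S₁).card : ℝ) := Nat.cast_nonneg _
  have hc0 : (0:ℝ) ≤ ((S ∩ S₁).card : ℝ) := Nat.cast_nonneg _
  have hcle : ((S ∩ S₁).card : ℝ) ≤ S.card := by
    exact_mod_cast Finset.card_le_card Finset.inter_subset_left
  have hT0 : (0:ℝ) ≤ (S.card : ℝ) := Nat.cast_nonneg _
  constructor
  · intro i hi
    have hiS : i ∈ S := Finset.mem_of_mem_inter_left hi
    have hv := h1 i hiS
    unfold votes at hv
    have hup := hsup i
    nlinarith [mul_nonneg (show (0:ℝ) ≤ α - β by linarith) hT0,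
      mul_le_mul_of_nonneg_left hcle (show (0:ℝ) ≤ α - (α - β)/16 by linarith)]
  · intro j hj
    rw [Finset.mem_sdiff] at hj
    have hv := h2 j hj.2
    unfold votes at hv
    have hlo := hsub j
    nlinarith [mul_nonneg (show (0:ℝ) ≤ α - β by linarith) hT0,
      mul_nonneg (mul_nonneg (show (0:ℝ) ≤ α - β by linarith) hT0)
        (show (0:ℝ) ≤ 1 - (α - 3*(α-β)/4) by linarith),
      mul_le_mul_of_nonneg_left (show ((S:Finset (Fin n)).card : ℝ) - (α-β)*S.card/16 ≤ ((S ∩ S₁).card : ℝ) by linarith)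
        (show (0:ℝ) ≤ α - 3*(α-β)/4 by linarith)]
end

section
/- Fix a (θ,α,β)-self-determined community S with γ = α − β and t = |S|, and let S₁ ⊆ V satisfy |S₁| ≤ Mθt (for some M ≥ 1) and |S \ S₁| ≤ γt/16; set S̃ = S ∩ S₁. Let δ ∈ (0,1) and let U be a multiset of k = ⌈8 ln(32θM/(δγ))/γ²⌉ points drawn independently and uniformly at random from S̃, and let S₂ = {i ∈ S₁ : v^{⌈θt⌉}_U(i) ≥ (α − γ/2)k}, where votes from U are counted with multiplicity. Then with probability at least 1 − δ the symmetric difference satisfies |Δ(S₂, S)| ≤ γt/8. -/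
open Finset
open scoped symmDiff

/-- The number of coordinates of the tuple `u` (draws counted with multiplicity) whose
top-`T` list contains `i`. -/
def tupleVotes (n : ℕ) (π : Fin n → Equiv.Perm (Fin n)) (k : ℕ) (u : Fin k → Fin n)
    (T : ℕ) (i : Fin n) : ℕ :=
  (Finset.univ.filter (fun j : Fin k => i ∈ topSet n π (u j) T)).card

/-- The purified set `S₂` obtained from the sample `u` drawn from `S̃`. -/
noncomputable def purified (n : ℕ) (π : Fin n → Equiv.Perm (Fin n)) (k : ℕ) (u : Fin k → Fin n)
    (T : ℕ) (S₁ : Finset (Fin n)) (α γ : ℝ) : Finset (Fin n) :=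
  S₁.filter (fun i => (α - γ / 2) * k ≤ (tupleVotes n π k u T i : ℝ))

/-- Hoeffding's lemma for a Bernoulli(p) variable, mgf form. -/
lemma bern_mgf (p l : ℝ) (hp0 : 0 ≤ p) (hp1 : p ≤ 1) (hl : 0 ≤ l) :
    1 - p + p * Real.exp l ≤ Real.exp (l * p + l ^ 2 / 8) := by
  rcases eq_or_lt_of_le hp0 with h0 | hp0'
  · -- p = 0
    rw [← h0]
    simpa using Real.one_le_exp (by positivity)
  -- p > 0
  -- Step A : ∀ x ≥ 0, p * exp x ≤ (p + x/4) * exp (x*p + x^2/8)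
  have stepA : ∀ x : ℝ, 0 ≤ x → p * Real.exp x ≤ (p + x / 4) * Real.exp (x * p + x ^ 2 / 8) := by
    intro x hx
    set h : ℝ → ℝ := fun y => Real.log (p + y / 4) + (y * p + y ^ 2 / 8 - y) - Real.log p with hh
    have hpos : ∀ y : ℝ, 0 ≤ y → 0 < p + y / 4 := fun y hy => by linarith
    have hderiv : ∀ y : ℝ, 0 ≤ y →
        HasDerivAt h ((1 / 4) / (p + y / 4) + (p + y / 4 - 1)) y := by
      intro y hy
      have h1 : HasDerivAt (fun z : ℝ => p + z / 4) (1 / 4) y := by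
        simpa using (hasDerivAt_id y).div_const 4 |>.const_add p
      have h2 : HasDerivAt (fun z : ℝ => Real.log (p + z / 4)) ((1 / 4) / (p + y / 4)) y :=
        h1.log (ne_of_gt (hpos y hy))
      have h3 : HasDerivAt (fun z : ℝ => z * p + z ^ 2 / 8 - z) (p + y / 4 - 1) y := by
        have : HasDerivAt (fun z : ℝ => z * p + z ^ 2 / 8 - z)
            (1 * p + (2 * y ^ 1) / 8 - 1) y := by
          exact (((hasDerivAt_id y).mul_const p).add
            (((hasDerivAt_pow 2 y)).div_const 8)).sub (hasDerivAt_id y)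
        simpa [pow_one] using this.congr_deriv (by ring)
      simpa [hh] using (h2.add h3).sub_const (Real.log p)
    have hmono : MonotoneOn h (Set.Ici 0) := by
      apply monotoneOn_of_deriv_nonneg (convex_Ici 0)
      · exact fun y hy => ((hderiv y hy).continuousAt.continuousWithinAt)
      · intro y hy
        rw [interior_Ici] at hy
        exact ((hderiv y (le_of_lt hy)).differentiableAt.differentiableWithinAt)
      · intro y hy
        rw [interior_Ici] at hy
        rw [(hderiv y hy.le).deriv]
        have hs : 0 < p + y / 4 := hpos y hy.le
        have hne : p + y / 4 ≠ 0 := ne_of_gt hs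
        rw [div_add' _ _ _ hne]
        have : 1 / 4 + (p + y / 4 - 1) * (p + y / 4) = (p + y / 4 - 1 / 2) ^ 2 := by ring
        rw [this]; positivity
    have h0' : h 0 = 0 := by simp [hh]
    have hx' : 0 ≤ h x := by
      have := hmono (Set.self_mem_Ici) (Set.mem_Ici.2 hx) hx
      rwa [h0'] at this
    -- unfold : log (p + x/4) + (x*p + x^2/8 - x) ≥ log p
    have hineq : Real.log p + x ≤ Real.log (p + x / 4) + (x * p + x ^ 2 / 8) := by
      simp only [hh] at hx'; linarith
    have := Real.exp_le_exp.2 hineq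
    rw [Real.exp_add, Real.exp_add, Real.exp_log hp0', Real.exp_log (hpos x hx)] at this
    linarith
  -- Step B : F y = exp (y*p + y^2/8) - (1 - p + p * exp y) is monotone on [0,∞)
  set F : ℝ → ℝ := fun y => Real.exp (y * p + y ^ 2 / 8) - (1 - p + p * Real.exp y) with hF
  have hFderiv : ∀ y : ℝ,
      HasDerivAt F ((p + y / 4) * Real.exp (y * p + y ^ 2 / 8) - p * Real.exp y) y := by
    intro y
    have h3 : HasDerivAt (fun z : ℝ => z * p + z ^ 2 / 8) (p + y / 4) y := by
      have : HasDerivAt (fun z : ℝ => z * p + z ^ 2 / 8) (1 * p + (2 * y ^ 1) / 8) y :=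
        ((hasDerivAt_id y).mul_const p).add (((hasDerivAt_pow 2 y)).div_const 8)
      simpa [pow_one] using this.congr_deriv (by ring)
    have h4 : HasDerivAt (fun z : ℝ => Real.exp (z * p + z ^ 2 / 8))
        (Real.exp (y * p + y ^ 2 / 8) * (p + y / 4)) y := h3.exp
    have h5 : HasDerivAt (fun z : ℝ => 1 - p + p * Real.exp z) (p * Real.exp y) y := by
      simpa using ((Real.hasDerivAt_exp y).const_mul p).const_add (1 - p)
    exact (h4.sub h5).congr_deriv (by ring)
  have hFmono : MonotoneOn F (Set.Ici 0) := by
    apply monotoneOn_of_deriv_nonneg (convex_Ici 0)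
    · exact fun y _ => (hFderiv y).continuousAt.continuousWithinAt
    · exact fun y _ => (hFderiv y).differentiableAt.differentiableWithinAt
    · intro y hy
      rw [interior_Ici] at hy
      rw [(hFderiv y).deriv]
      have := stepA y hy.le
      linarith
  have hF0 : F 0 = 0 := by simp [hF]
  have := hFmono Set.self_mem_Ici (Set.mem_Ici.2 hl) hl
  rw [hF0] at this
  simp only [hF] at this
  linarith

lemma sum_prod_pi {ι : Type*} [Fintype ι] [DecidableEq ι] (W : Finset ι) (k : ℕ) (g : ι → ℝ) :
    ∑ u ∈ Fintype.piFinset (fun _ : Fin k => W), ∏ j, g (u j) = (∑ s ∈ W, g s) ^ k := by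
  rw [← Finset.prod_univ_sum]
  simp [Finset.prod_const]

lemma chernoff_upper {ι : Type*} [Fintype ι] [DecidableEq ι] (W : Finset ι) (hW : 0 < W.card)
    (Q : ι → Prop) [DecidablePred Q] (k : ℕ) (ε : ℝ) (hε : 0 ≤ ε)
    (hbm : ∀ p l : ℝ, 0 ≤ p → p ≤ 1 → 0 ≤ l →
      1 - p + p * Real.exp l ≤ Real.exp (l * p + l ^ 2 / 8)) :
    (((Fintype.piFinset (fun _ : Fin k => W)).filter
        (fun u => (((W.filter Q).card : ℝ) / W.card + ε) * k
            ≤ ((Finset.univ.filter (fun j : Fin k => Q (u j))).card : ℝ))).card : ℝ)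
      ≤ (W.card : ℝ) ^ k * Real.exp (-(2 * ε ^ 2 * k)) := by
  set m : ℝ := (W.card : ℝ) with hm'
  have hm : 0 < m := by rw [hm']; exact_mod_cast hW
  set p : ℝ := ((W.filter Q).card : ℝ) / m with hp'
  have hp0 : 0 ≤ p := by positivity
  have hp1 : p ≤ 1 := by
    rw [hp', div_le_one hm, hm']
    exact_mod_cast card_le_card (filter_subset _ _)
  set l : ℝ := 4 * ε with hl'
  have hl : 0 ≤ l := by positivity
  set cnt : (Fin k → ι) → ℝ :=
    fun u => ((Finset.univ.filter (fun j : Fin k => Q (u j))).card : ℝ) with hcnt'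
  set A := Fintype.piFinset (fun _ : Fin k => W) with hA'
  set C : ℝ := l * ((p + ε) * k) with hC'
  have step1 : ((A.filter (fun u => (p + ε) * k ≤ cnt u)).card : ℝ)
      ≤ ∑ u ∈ A, Real.exp (l * cnt u - C) := by
    calc ((A.filter (fun u => (p + ε) * k ≤ cnt u)).card : ℝ)
        = ∑ _u ∈ A.filter (fun u => (p + ε) * k ≤ cnt u), (1 : ℝ) := by simp
      _ ≤ ∑ u ∈ A.filter (fun u => (p + ε) * k ≤ cnt u), Real.exp (l * cnt u - C) := by
          refine Finset.sum_le_sum fun u hu => Real.one_le_exp ?_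
          have hu' := (Finset.mem_filter.1 hu).2
          have : 0 ≤ l * (cnt u - (p + ε) * k) := mul_nonneg hl (by linarith)
          rw [hC']; nlinarith
      _ ≤ ∑ u ∈ A, Real.exp (l * cnt u - C) :=
          Finset.sum_le_sum_of_subset_of_nonneg (filter_subset _ _)
            (fun u _ _ => (Real.exp_pos _).le)
  have hexp : ∀ u : Fin k → ι, Real.exp (l * cnt u)
      = ∏ j, Real.exp (l * (if Q (u j) then (1 : ℝ) else 0)) := by
    intro u
    rw [← Real.exp_sum, ← Finset.mul_sum]
    congr 1
    simp only [hcnt', Finset.card_filter]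
    push_cast
    simp
  have step2 : ∑ u ∈ A, Real.exp (l * cnt u - C)
      = Real.exp (-C) * ∑ u ∈ A, ∏ j, Real.exp (l * (if Q (u j) then (1 : ℝ) else 0)) := by
    rw [Finset.mul_sum]
    refine Finset.sum_congr rfl fun u _ => ?_
    rw [← hexp, ← Real.exp_add]
    congr 1
    ring
  have step3 : ∑ u ∈ A, ∏ j, Real.exp (l * (if Q (u j) then (1 : ℝ) else 0))
      = (∑ s ∈ W, Real.exp (l * (if Q s then (1 : ℝ) else 0))) ^ k := by
    rw [hA']; exact sum_prod_pi W k (fun s => Real.exp (l * (if Q s then (1 : ℝ) else 0)))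
  have step4 : ∑ s ∈ W, Real.exp (l * (if Q s then (1 : ℝ) else 0))
      = m * (1 - p + p * Real.exp l) := by
    have hsplit := Finset.sum_filter_add_sum_filter_not W Q
      (fun s => Real.exp (l * (if Q s then (1 : ℝ) else 0)))
    rw [← hsplit]
    have e1 : ∑ s ∈ W.filter Q, Real.exp (l * (if Q s then (1 : ℝ) else 0))
        = ((W.filter Q).card : ℝ) * Real.exp l := by
      rw [Finset.sum_congr rfl (fun s hs => by
        rw [if_pos (Finset.mem_filter.1 hs).2, mul_one])]
      rw [Finset.sum_const, nsmul_eq_mul]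
    have e2 : ∑ s ∈ W.filter (fun s => ¬ Q s), Real.exp (l * (if Q s then (1 : ℝ) else 0))
        = ((W.filter (fun s => ¬ Q s)).card : ℝ) := by
      rw [Finset.sum_congr rfl (fun s hs => by
        rw [if_neg (Finset.mem_filter.1 hs).2, mul_zero, Real.exp_zero])]
      rw [Finset.sum_const, nsmul_eq_mul, mul_one]
    rw [e1, e2]
    have hcards : ((W.filter (fun s => ¬ Q s)).card : ℝ) = m - ((W.filter Q).card : ℝ) := by
      have := Finset.card_filter_add_card_filter_not (s := W) (p := Q)
      rw [hm']
      push_cast [← this]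
      ring
    have hpm : p * m = ((W.filter Q).card : ℝ) := by
      rw [hp', div_mul_cancel₀ _ (ne_of_gt hm)]
    rw [hcards, ← hpm]
    ring
  have step5 : (m * (1 - p + p * Real.exp l)) ^ k ≤ (m * Real.exp (l * p + l ^ 2 / 8)) ^ k := by
    apply pow_le_pow_left₀
    · have : (0:ℝ) ≤ 1 - p + p * Real.exp l := by nlinarith [Real.exp_pos l]
      positivity
    · exact mul_le_mul_of_nonneg_left (hbm p l hp0 hp1 hl) hm.le
  have final : Real.exp (-C) * (m * Real.exp (l * p + l ^ 2 / 8)) ^ k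
      = m ^ k * Real.exp (-(2 * ε ^ 2 * k)) := by
    rw [mul_pow, ← Real.exp_nat_mul]
    rw [mul_comm (Real.exp (-C)) _, mul_assoc, ← Real.exp_add]
    congr 1
    rw [hC', hl']
    ring
  calc ((A.filter (fun u => (p + ε) * k ≤ cnt u)).card : ℝ)
      ≤ Real.exp (-C) * (m * (1 - p + p * Real.exp l)) ^ k := by
        rw [← step4, ← step3, ← step2]; exact step1
    _ ≤ Real.exp (-C) * (m * Real.exp (l * p + l ^ 2 / 8)) ^ k :=
        mul_le_mul_of_nonneg_left step5 (Real.exp_pos _).le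
    _ = m ^ k * Real.exp (-(2 * ε ^ 2 * k)) := final

lemma chernoff_lower {ι : Type*} [Fintype ι] [DecidableEq ι] (W : Finset ι) (hW : 0 < W.card)
    (Q : ι → Prop) [DecidablePred Q] (k : ℕ) (ε : ℝ) (hε : 0 ≤ ε)
    (hbm : ∀ p l : ℝ, 0 ≤ p → p ≤ 1 → 0 ≤ l →
      1 - p + p * Real.exp l ≤ Real.exp (l * p + l ^ 2 / 8)) :
    (((Fintype.piFinset (fun _ : Fin k => W)).filter
        (fun u => ((Finset.univ.filter (fun j : Fin k => Q (u j))).card : ℝ)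
            ≤ (((W.filter Q).card : ℝ) / W.card - ε) * k)).card : ℝ)
      ≤ (W.card : ℝ) ^ k * Real.exp (-(2 * ε ^ 2 * k)) := by
  refine le_trans ?_ (chernoff_upper W hW (fun s => ¬ Q s) k ε hε hbm)
  have hm : (0:ℝ) < (W.card : ℝ) := by exact_mod_cast hW
  refine Nat.cast_le.2 (card_le_card (Finset.monotone_filter_right _ ?_))
  intro u _ hu
  have hWsplit : ((W.filter Q).card : ℝ) + ((W.filter (fun s => ¬ Q s)).card : ℝ)
      = (W.card : ℝ) := by
    exact_mod_cast Finset.card_filter_add_card_filter_not (s := W) (p := Q)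
  have hksplit : ((Finset.univ.filter (fun j : Fin k => Q (u j))).card : ℝ)
      + ((Finset.univ.filter (fun j : Fin k => ¬ Q (u j))).card : ℝ) = (k : ℝ) := by
    have := Finset.card_filter_add_card_filter_not
      (s := (Finset.univ : Finset (Fin k))) (p := fun j => Q (u j))
    rw [Finset.card_univ, Fintype.card_fin] at this
    exact_mod_cast this
  have hdiv : ((W.filter (fun s => ¬ Q s)).card : ℝ) / (W.card : ℝ)
      = 1 - ((W.filter Q).card : ℝ) / (W.card : ℝ) := by
    field_simp
    linarith
  rw [hdiv]
  have hk0 : (0:ℝ) ≤ (k:ℝ) := Nat.cast_nonneg k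
  nlinarith [hu, hksplit]

set_option maxHeartbeats 1000000 in
theorem stmt_3 (n : ℕ) (π : Fin n → Equiv.Perm (Fin n)) (θ α β γ δ : ℝ)
    (hθ : 0 < θ) (hβ : 0 ≤ β) (hβα : β < α) (hα : α ≤ 1) (hγ : γ = α - β)
    (hδ0 : 0 < δ) (hδ1 : δ < 1)
    (S S₁ : Finset (Fin n)) (t : ℕ) (ht : t = S.card)
    (hS : IsCommunity n π θ α β S)
    (M : ℝ) (hM : 1 ≤ M)
    (hS₁card : (S₁.card : ℝ) ≤ M * θ * t)
    (hcover : ((S \ S₁).card : ℝ) ≤ γ * t / 16)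
    (k : ℕ) (hk : k = ⌈8 * Real.log (32 * θ * M / (δ * γ)) / γ ^ 2⌉₊) :
    (1 - δ) *
      (((Finset.univ : Finset (Fin k → Fin n)).filter
          (fun u => ∀ j, u j ∈ S ∩ S₁)).card : ℝ) ≤
    (((Finset.univ : Finset (Fin k → Fin n)).filter
        (fun u => (∀ j, u j ∈ S ∩ S₁) ∧
          (((purified n π k u ⌈θ * (t : ℝ)⌉₊ S₁ α γ ∆ S).card : ℝ) ≤ γ * t / 8))).card : ℝ) := by
  classical
  have hγpos : 0 < γ := by rw [hγ]; linarith
  have hγ1 : γ ≤ 1 := by rw [hγ]; linarith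
  set T : ℕ := ⌈θ * (t : ℝ)⌉₊ with hT
  -- trivial case t = 0
  rcases Nat.eq_zero_or_pos t with ht0 | htpos
  · have hS0 : S = ∅ := Finset.card_eq_zero.1 (by rw [← ht]; exact ht0)
    have hS₁0 : S₁ = ∅ := by
      have : (S₁.card : ℝ) ≤ 0 := by
        rw [ht0] at hS₁card; simpa using hS₁card
      have : S₁.card = 0 := by exact_mod_cast le_antisymm this (by positivity)
      exact Finset.card_eq_zero.1 this
    have heq : ∀ u : Fin k → Fin n,
        ((purified n π k u T S₁ α γ ∆ S).card : ℝ) ≤ γ * t / 8 := by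
      intro u
      have : purified n π k u T S₁ α γ = ∅ := by
        rw [purified, hS₁0, Finset.filter_empty]
      rw [this, hS0, ht0]
      simp
    have : (Finset.univ.filter
        (fun u : Fin k → Fin n => (∀ j, u j ∈ S ∩ S₁) ∧
          ((purified n π k u T S₁ α γ ∆ S).card : ℝ) ≤ γ * t / 8))
        = Finset.univ.filter (fun u : Fin k → Fin n => ∀ j, u j ∈ S ∩ S₁) := by
      apply Finset.filter_congr
      intro u _
      simp [heq u]
    rw [this]
    have h1 : (0:ℝ) ≤ ((Finset.univ.filter
        (fun u : Fin k → Fin n => ∀ j, u j ∈ S ∩ S₁)).card : ℝ) := by positivity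
    nlinarith
  -- main case t ≥ 1
  have htR : (0:ℝ) < (t:ℝ) := by exact_mod_cast htpos
  set St : Finset (Fin n) := S ∩ S₁ with hSt
  set m : ℕ := St.card with hm
  have hmle : (m : ℝ) ≤ (t : ℝ) := by
    rw [ht]; exact_mod_cast card_le_card (Finset.inter_subset_left)
  have hmsplit : (m : ℝ) + ((S \ S₁).card : ℝ) = (t : ℝ) := by
    rw [ht]; exact_mod_cast Finset.card_inter_add_card_sdiff S S₁
  have hmge : (t : ℝ) - γ * t / 16 ≤ (m : ℝ) := by linarith
  have hmpos : 0 < m := by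
    have : (0:ℝ) < (m:ℝ) := by nlinarith
    exact_mod_cast this
  set A := Fintype.piFinset (fun _ : Fin k => St) with hA
  have hLHS : Finset.univ.filter (fun u : Fin k → Fin n => ∀ j, u j ∈ S ∩ S₁) = A := by
    ext u; simp [hA, Fintype.mem_piFinset, hSt]
  have hAcard : (A.card : ℝ) = (m : ℝ) ^ k := by
    rw [hA, Fintype.card_piFinset]
    push_cast
    simp [hm]
  -- the misclassification predicate
  set mis : Fin n → (Fin k → Fin n) → Prop := fun i u =>
    (i ∈ S ∧ ¬ ((α - γ / 2) * k ≤ (tupleVotes n π k u T i : ℝ))) ∨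
    (i ∉ S ∧ (α - γ / 2) * k ≤ (tupleVotes n π k u T i : ℝ)) with hmis
  -- geometric claim
  have hsubset : ∀ u : Fin k → Fin n,
      (purified n π k u T S₁ α γ ∆ S) ⊆ (S \ S₁) ∪ S₁.filter (fun i => mis i u) := by
    intro u x hx
    rw [Finset.mem_symmDiff] at hx
    rcases hx with ⟨hxp, hxS⟩ | ⟨hxS, hxp⟩
    · rw [purified, Finset.mem_filter] at hxp
      exact Finset.mem_union_right _ (Finset.mem_filter.2 ⟨hxp.1, Or.inr ⟨hxS, hxp.2⟩⟩)
    · by_cases hxS₁ : x ∈ S₁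
      · have hnt : ¬ ((α - γ / 2) * k ≤ (tupleVotes n π k u T x : ℝ)) := by
          intro hcontra
          exact hxp (Finset.mem_filter.2 ⟨hxS₁, hcontra⟩)
        exact Finset.mem_union_right _ (Finset.mem_filter.2 ⟨hxS₁, Or.inl ⟨hxS, hnt⟩⟩)
      · exact Finset.mem_union_left _ (Finset.mem_sdiff.2 ⟨hxS, hxS₁⟩)
  -- per-element chernoff bound
  have hper : ∀ i ∈ S₁, ((A.filter (fun u => mis i u)).card : ℝ)
      ≤ (m : ℝ) ^ k * Real.exp (-(γ ^ 2 / 8 * k)) := by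
    obtain ⟨hcomm1, hcomm2⟩ := hS
    rw [← ht] at hcomm1 hcomm2
    intro i _
    have hmR : (0:ℝ) < (m:ℝ) := by exact_mod_cast hmpos
    have hkR : (0:ℝ) ≤ (k:ℝ) := Nat.cast_nonneg k
    have hcnt : ∀ u : Fin k → Fin n, tupleVotes n π k u T i
        = (Finset.univ.filter (fun j : Fin k => i ∈ topSet n π (u j) T)).card :=
      fun u => rfl
    by_cases hiS : i ∈ S
    · -- lower tail
      have hvotes : α * t ≤ ((S.filter (fun s => i ∈ topSet n π s T)).card : ℝ) := hcomm1 i hiS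
      have hsub2 : S.filter (fun s => i ∈ topSet n π s T)
          ⊆ (St.filter (fun s => i ∈ topSet n π s T)) ∪ (S \ S₁) := by
        intro s hs
        rw [Finset.mem_filter] at hs
        by_cases hsS₁ : s ∈ S₁
        · exact Finset.mem_union_left _
            (Finset.mem_filter.2 ⟨Finset.mem_inter.2 ⟨hs.1, hsS₁⟩, hs.2⟩)
        · exact Finset.mem_union_right _ (Finset.mem_sdiff.2 ⟨hs.1, hsS₁⟩)
      have hcard2 : ((S.filter (fun s => i ∈ topSet n π s T)).card : ℝ)
          ≤ ((St.filter (fun s => i ∈ topSet n π s T)).card : ℝ) + ((S \ S₁).card : ℝ) := by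
        have h1 := card_le_card hsub2
        have h2 := Finset.card_union_le (St.filter (fun s => i ∈ topSet n π s T)) (S \ S₁)
        exact_mod_cast le_trans h1 h2
      have hnum : α * t - γ * t / 16 ≤ ((St.filter (fun s => i ∈ topSet n π s T)).card : ℝ) := by
        linarith
      have hnumnn : (0:ℝ) ≤ α * t - γ * t / 16 := by nlinarith
      obtain ⟨p, hp'⟩ : ∃ x : ℝ,
          x = ((St.filter (fun s => i ∈ topSet n π s T)).card : ℝ) / (m:ℝ) := ⟨_, rfl⟩
      have hp : α - γ / 16 ≤ p := by
        have h1 : (α * t - γ * t / 16) / (t:ℝ)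
            ≤ ((St.filter (fun s => i ∈ topSet n π s T)).card : ℝ) / (m:ℝ) :=
          div_le_div₀ (by positivity) hnum hmR hmle
        have h2 : (α * t - γ * t / 16) / (t:ℝ) = α - γ / 16 := by
          field_simp
        rw [h2] at h1
        rw [hp']
        exact h1
      obtain ⟨ε, hε'⟩ : ∃ x : ℝ, x = p - (α - γ / 2) := ⟨_, rfl⟩
      have hεge : γ / 4 ≤ ε := by rw [hε']; linarith
      have hεnn : 0 ≤ ε := by linarith
      have hsubf : A.filter (fun u => mis i u)
          ⊆ A.filter (fun u =>
            ((Finset.univ.filter (fun j : Fin k => i ∈ topSet n π (u j) T)).card : ℝ)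
              ≤ (p - ε) * k) := by
        apply Finset.monotone_filter_right
        intro u _ hu
        rcases hu with ⟨_, hnt⟩ | ⟨hiS', _⟩
        · push_neg at hnt
          rw [hcnt u] at hnt
          have : p - ε = α - γ / 2 := by rw [hε']; ring
          rw [this]
          exact le_of_lt hnt
        · exact absurd hiS hiS'
      calc ((A.filter (fun u => mis i u)).card : ℝ)
          ≤ ((A.filter (fun u =>
              ((Finset.univ.filter (fun j : Fin k => i ∈ topSet n π (u j) T)).card : ℝ)
                ≤ (p - ε) * k)).card : ℝ) := by exact_mod_cast card_le_card hsubf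
        _ ≤ (m : ℝ) ^ k * Real.exp (-(2 * ε ^ 2 * k)) := by
            rw [hp']
            exact chernoff_lower St hmpos (fun s => i ∈ topSet n π s T) k ε hεnn bern_mgf
        _ ≤ (m : ℝ) ^ k * Real.exp (-(γ ^ 2 / 8 * k)) := by
            apply mul_le_mul_of_nonneg_left _ (pow_nonneg (Nat.cast_nonneg m) k)
            apply Real.exp_le_exp.2
            have hcoef : γ ^ 2 / 8 ≤ 2 * ε ^ 2 := by nlinarith
            nlinarith [mul_le_mul_of_nonneg_right hcoef hkR]
    · -- upper tail
      have hvotes : ((S.filter (fun s => i ∈ topSet n π s T)).card : ℝ) ≤ β * t :=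
        hcomm2 i hiS
      have hcard2 : ((St.filter (fun s => i ∈ topSet n π s T)).card : ℝ)
          ≤ ((S.filter (fun s => i ∈ topSet n π s T)).card : ℝ) := by
        exact_mod_cast card_le_card
          (Finset.filter_subset_filter _ (Finset.inter_subset_left))
      obtain ⟨p, hp'⟩ : ∃ x : ℝ,
          x = ((St.filter (fun s => i ∈ topSet n π s T)).card : ℝ) / (m:ℝ) := ⟨_, rfl⟩
      have hβ1 : β ≤ 1 := by linarith
      have hp : p ≤ β + γ / 4 := by
        have h1 : p ≤ β * t / (m:ℝ) := by
          rw [hp']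
          exact div_le_div₀ (by positivity) (le_trans hcard2 hvotes) hmR le_rfl
        have h2 : β * t / (m:ℝ) ≤ β + γ / 4 := by
          rw [div_le_iff₀ hmR]
          nlinarith
        linarith
      obtain ⟨ε, hε'⟩ : ∃ x : ℝ, x = (α - γ / 2) - p := ⟨_, rfl⟩
      have hεge : γ / 4 ≤ ε := by rw [hε']; linarith
      have hεnn : 0 ≤ ε := by linarith
      have hsubf : A.filter (fun u => mis i u)
          ⊆ A.filter (fun u => (p + ε) * k
            ≤ ((Finset.univ.filter (fun j : Fin k => i ∈ topSet n π (u j) T)).card : ℝ)) := by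
        apply Finset.monotone_filter_right
        intro u _ hu
        rcases hu with ⟨hiS', _⟩ | ⟨_, hth⟩
        · exact absurd hiS' hiS
        · rw [hcnt u] at hth
          have : p + ε = α - γ / 2 := by rw [hε']; ring
          rw [this]
          exact hth
      calc ((A.filter (fun u => mis i u)).card : ℝ)
          ≤ ((A.filter (fun u => (p + ε) * k
              ≤ ((Finset.univ.filter (fun j : Fin k => i ∈ topSet n π (u j) T)).card : ℝ))).card : ℝ) := by
            exact_mod_cast card_le_card hsubf
        _ ≤ (m : ℝ) ^ k * Real.exp (-(2 * ε ^ 2 * k)) := by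
            rw [hp']
            exact chernoff_upper St hmpos (fun s => i ∈ topSet n π s T) k ε hεnn bern_mgf
        _ ≤ (m : ℝ) ^ k * Real.exp (-(γ ^ 2 / 8 * k)) := by
            apply mul_le_mul_of_nonneg_left _ (pow_nonneg (Nat.cast_nonneg m) k)
            apply Real.exp_le_exp.2
            have hcoef : γ ^ 2 / 8 ≤ 2 * ε ^ 2 := by nlinarith
            nlinarith [mul_le_mul_of_nonneg_right hcoef hkR]
  -- markov + summation
  set bad := A.filter (fun u => ¬ (((purified n π k u T S₁ α γ ∆ S).card : ℝ) ≤ γ * t / 8))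
    with hbad
  have hmarkov : (bad.card : ℝ)
      ≤ ∑ u ∈ A, (16 / (γ * t)) * ((S₁.filter (fun i => mis i u)).card : ℝ) := by
    have hstep : bad ⊆ A.filter
        (fun u => γ * t / 16 < ((S₁.filter (fun i => mis i u)).card : ℝ)) := by
      intro u hu
      rw [hbad, Finset.mem_filter] at hu
      refine Finset.mem_filter.2 ⟨hu.1, ?_⟩
      by_contra hle
      push_neg at hle
      apply hu.2
      have h1 : ((purified n π k u T S₁ α γ ∆ S).card : ℝ)
          ≤ ((S \ S₁).card : ℝ) + ((S₁.filter (fun i => mis i u)).card : ℝ) := by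
        have ha := card_le_card (hsubset u)
        have hb := Finset.card_union_le (S \ S₁) (S₁.filter (fun i => mis i u))
        exact_mod_cast le_trans ha hb
      linarith
    have hγt : (0:ℝ) < γ * t := mul_pos hγpos htR
    calc (bad.card : ℝ)
        ≤ ((A.filter (fun u => γ * t / 16
            < ((S₁.filter (fun i => mis i u)).card : ℝ))).card : ℝ) := by
          exact_mod_cast card_le_card hstep
      _ = ∑ _u ∈ A.filter (fun u => γ * t / 16
            < ((S₁.filter (fun i => mis i u)).card : ℝ)), (1:ℝ) := by simp
      _ ≤ ∑ u ∈ A.filter (fun u => γ * t / 16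
            < ((S₁.filter (fun i => mis i u)).card : ℝ)),
            (16 / (γ * t)) * ((S₁.filter (fun i => mis i u)).card : ℝ) := by
          refine Finset.sum_le_sum fun u hu => ?_
          have h2 := (Finset.mem_filter.1 hu).2
          rw [div_mul_eq_mul_div, le_div_iff₀ hγt]
          linarith
      _ ≤ ∑ u ∈ A, (16 / (γ * t)) * ((S₁.filter (fun i => mis i u)).card : ℝ) :=
          Finset.sum_le_sum_of_subset_of_nonneg (filter_subset _ _)
            (fun u _ _ => mul_nonneg (le_of_lt (div_pos (by norm_num) hγt))
              (Nat.cast_nonneg _))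
  have hswap : ∑ u ∈ A, ((S₁.filter (fun i => mis i u)).card : ℝ)
      = ∑ i ∈ S₁, ((A.filter (fun u => mis i u)).card : ℝ) := by
    have e1 : ∀ u, ((S₁.filter (fun i => mis i u)).card : ℝ)
        = ∑ i ∈ S₁, if mis i u then (1:ℝ) else 0 := by
      intro u; rw [Finset.card_filter]; push_cast; simp
    have e2 : ∀ i, ((A.filter (fun u => mis i u)).card : ℝ)
        = ∑ u ∈ A, if mis i u then (1:ℝ) else 0 := by
      intro i; rw [Finset.card_filter]; push_cast; simp
    simp only [e1, e2]
    exact Finset.sum_comm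
  -- final numeric bound
  have hexp : Real.exp (-(γ ^ 2 / 8 * k)) ≤ δ * γ / (32 * θ * M) := by
    have hx : (0:ℝ) < 32 * θ * M / (δ * γ) := by positivity
    have hkL : 8 * Real.log (32 * θ * M / (δ * γ)) / γ ^ 2 ≤ (k:ℝ) := by
      rw [hk]
      exact Nat.le_ceil _
    have hγ2 : (0:ℝ) < γ ^ 2 := by positivity
    rw [div_le_iff₀ hγ2] at hkL
    have hL : Real.log (32 * θ * M / (δ * γ)) ≤ γ ^ 2 / 8 * k := by linarith
    calc Real.exp (-(γ ^ 2 / 8 * k))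
        ≤ Real.exp (-(Real.log (32 * θ * M / (δ * γ)))) := Real.exp_le_exp.2 (by linarith)
      _ = δ * γ / (32 * θ * M) := by
          rw [Real.exp_neg, Real.exp_log hx, inv_div]
  have hbadbound : (bad.card : ℝ) ≤ δ * (m : ℝ) ^ k := by
    have h1 : (bad.card : ℝ)
        ≤ (16 / (γ * t)) * ∑ i ∈ S₁, ((A.filter (fun u => mis i u)).card : ℝ) := by
      rw [← hswap, Finset.mul_sum]
      exact hmarkov
    have h2 : ∑ i ∈ S₁, ((A.filter (fun u => mis i u)).card : ℝ)
        ≤ (S₁.card : ℝ) * ((m : ℝ) ^ k * Real.exp (-(γ ^ 2 / 8 * k))) := by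
      calc ∑ i ∈ S₁, ((A.filter (fun u => mis i u)).card : ℝ)
          ≤ ∑ _i ∈ S₁, (m : ℝ) ^ k * Real.exp (-(γ ^ 2 / 8 * k)) :=
            Finset.sum_le_sum hper
        _ = (S₁.card : ℝ) * ((m : ℝ) ^ k * Real.exp (-(γ ^ 2 / 8 * k))) := by
            rw [Finset.sum_const, nsmul_eq_mul]
    have hmk : (0:ℝ) ≤ (m:ℝ)^k := pow_nonneg (Nat.cast_nonneg m) k
    have h3 : (bad.card : ℝ) ≤ (16 / (γ * t)) * ((M * θ * t) *
        ((m : ℝ) ^ k * (δ * γ / (32 * θ * M)))) := by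
      calc (bad.card : ℝ)
          ≤ (16 / (γ * t)) * ∑ i ∈ S₁, ((A.filter (fun u => mis i u)).card : ℝ) := h1
        _ ≤ (16 / (γ * t)) * ((S₁.card : ℝ) * ((m : ℝ) ^ k * Real.exp (-(γ ^ 2 / 8 * k)))) := by
            apply mul_le_mul_of_nonneg_left h2
            positivity
        _ ≤ (16 / (γ * t)) * ((M * θ * t) * ((m : ℝ) ^ k * (δ * γ / (32 * θ * M)))) := by
            apply mul_le_mul_of_nonneg_left _ (by positivity)
            apply mul_le_mul hS₁card (mul_le_mul_of_nonneg_left hexp hmk)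
              (mul_nonneg hmk (Real.exp_pos _).le) (by positivity)
    have heq : (16 / (γ * t)) * ((M * θ * t) * ((m : ℝ) ^ k * (δ * γ / (32 * θ * M))))
        = (δ / 2) * (m : ℝ) ^ k := by
      field_simp
      ring
    rw [heq] at h3
    nlinarith
  -- conclude
  have hRHS : Finset.univ.filter
      (fun u : Fin k → Fin n => (∀ j, u j ∈ S ∩ S₁) ∧
        (((purified n π k u T S₁ α γ ∆ S).card : ℝ) ≤ γ * t / 8))
      = A.filter (fun u => ((purified n π k u T S₁ α γ ∆ S).card : ℝ) ≤ γ * t / 8) := by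
    ext u
    simp only [Finset.mem_filter, Finset.mem_univ, true_and, hA, Fintype.mem_piFinset, hSt]
  rw [hLHS, hRHS]
  have hsplitcard : ((A.filter (fun u =>
      ((purified n π k u T S₁ α γ ∆ S).card : ℝ) ≤ γ * t / 8)).card : ℝ) + (bad.card : ℝ)
      = (A.card : ℝ) := by
    rw [hbad]
    exact_mod_cast Finset.card_filter_add_card_filter_not
      (s := A) (p := fun u => ((purified n π k u T S₁ α γ ∆ S).card : ℝ) ≤ γ * t / 8)
  rw [hAcard] at hsplitcard
  nlinarith [hbadbound, hsplitcard]
end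

section
/- Let S be a (θ,α,β)-self-determined community in an affinity system on n elements, with γ = α − β, and let k = ⌈2 ln(4n)/γ²⌉. If U is a multiset of k members drawn independently and uniformly at random from S, then with probability at least 1/2 the set {i ∈ V : v^{⌈θ|S|⌉}_U(i) ≥ (α − γ/2)k} (votes counted with multiplicity) is identical to S. -/
open Finset

lemma hoeffding_mgf (p : ℝ) (hp0 : 0 ≤ p) (hp1 : p ≤ 1) (l : ℝ) :
    (1 - p) + p * Real.exp l ≤ Real.exp (p * l + l ^ 2 / 8) := by
  set q : ℝ := 1 - p with hq
  have hq0 : 0 ≤ q := by simp [hq]; linarith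
  set g : ℝ → ℝ := fun x => q + p * Real.exp x with hgdef
  have hgpos : ∀ x, 0 < g x := by
    intro x
    rcases eq_or_lt_of_le hp0 with h | h
    · simp [hgdef, ← h, hq]
    · have := Real.exp_pos x
      have : 0 < p * Real.exp x := by positivity
      simp only [hgdef]; linarith
  -- F x = p*x + x^2/8 - log (g x), want F x ≥ 0
  set F : ℝ → ℝ := fun x => p * x + x ^ 2 / 8 - Real.log (g x) with hF
  set f1 : ℝ → ℝ := fun x => p + x / 4 - p * Real.exp x / g x with hf1
  have hgd : ∀ x, HasDerivAt g (p * Real.exp x) x := by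
    intro x
    have := (hasDerivAt_const x q).add ((Real.hasDerivAt_exp x).const_mul p)
    rw [zero_add] at this
    exact this
  have hFd : ∀ x, HasDerivAt F (f1 x) x := by
    intro x
    have h1 : HasDerivAt (fun x : ℝ => p * x) p x := by
      simpa using (hasDerivAt_id x).const_mul p
    have h2 : HasDerivAt (fun x : ℝ => x ^ 2 / 8) (2 * x / 8) x := by
      simpa using (hasDerivAt_pow 2 x).div_const 8
    have h3 : HasDerivAt (fun x => Real.log (g x)) (p * Real.exp x / g x) x :=
      (hgd x).log (hgpos x).ne'
    have := (h1.add h2).sub h3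
    refine this.congr_deriv ?_
    simp [hf1]; ring
  have hf1d : ∀ x, HasDerivAt f1 (1 / 4 - p * q * Real.exp x / (g x) ^ 2) x := by
    intro x
    have h1 : HasDerivAt (fun x : ℝ => p + x / 4) (1 / 4) x := by
      simpa using ((hasDerivAt_id x).div_const 4).const_add p
    have h2 : HasDerivAt (fun x => p * Real.exp x / g x)
        ((p * Real.exp x * g x - p * Real.exp x * (p * Real.exp x)) / (g x) ^ 2) x :=
      ((Real.hasDerivAt_exp x).const_mul p).div (hgd x) (hgpos x).ne'
    have := h1.sub h2
    refine this.congr_deriv ?_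
    have hgx := (hgpos x).ne'
    field_simp
    ring
  have hf1mono : Monotone f1 := by
    apply monotone_of_deriv_nonneg
    · exact fun x => (hf1d x).differentiableAt
    · intro x
      rw [(hf1d x).deriv]
      have hgx := hgpos x
      have hsq : p * q * Real.exp x ≤ 1 / 4 * (g x) ^ 2 := by
        have h := sq_nonneg (q - p * Real.exp x)
        have he := Real.exp_pos x
        have hgx2 : g x = q + p * Real.exp x := rfl
        nlinarith
      rw [sub_nonneg, div_le_iff₀ (by positivity)]
      linarith
  have hf10 : f1 0 = 0 := by
    simp [hf1, hgdef, hq]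
  have hF0 : F 0 = 0 := by
    simp [hF, hgdef, hq]
  have key : ∀ x, 0 ≤ F x := by
    intro x
    rcases le_total 0 x with h | h
    · have : MonotoneOn F (Set.Ici 0) := by
        apply monotoneOn_of_deriv_nonneg (convex_Ici 0)
        · exact (fun y _ => (hFd y).differentiableAt.continuousAt.continuousWithinAt)
        · exact fun y hy => (hFd y).differentiableAt.differentiableWithinAt
        · intro y hy
          rw [(hFd y).deriv]
          rw [interior_Ici, Set.mem_Ioi] at hy
          have := hf1mono hy.le
          rw [hf10] at this
          exact this
      have := this (Set.self_mem_Ici) (Set.mem_Ici.mpr h) h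
      rwa [hF0] at this
    · have hA : AntitoneOn F (Set.Iic 0) := by
        apply antitoneOn_of_deriv_nonpos (convex_Iic 0)
        · exact (fun y _ => (hFd y).differentiableAt.continuousAt.continuousWithinAt)
        · exact fun y hy => (hFd y).differentiableAt.differentiableWithinAt
        · intro y hy
          rw [(hFd y).deriv]
          rw [interior_Iic, Set.mem_Iio] at hy
          have := hf1mono hy.le
          rw [hf10] at this
          exact this
      have := hA (Set.mem_Iic.mpr h) Set.self_mem_Iic h
      rwa [hF0] at this
  have := key l
  rw [hF, sub_nonneg] at this
  have := Real.exp_le_exp.mpr this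
  rwa [Real.exp_log (hgpos l)] at this

lemma chernoff_count (n k : ℕ) (π : Fin n → Equiv.Perm (Fin n)) (S : Finset (Fin n))
    (T : ℕ) (i : Fin n) (E : (Fin k → Fin n) → Prop) [DecidablePred E] (l a : ℝ)
    (hE : ∀ u, E u → l * a ≤ l * (tupleVotes n π k u T i : ℝ)) :
    (((Fintype.piFinset fun _ : Fin k => S).filter E).card : ℝ) * Real.exp (l * a) ≤
      (∑ s ∈ S, Real.exp (l * (if i ∈ topSet n π s T then 1 else 0))) ^ k := by
  have h1 : (∑ s ∈ S, Real.exp (l * (if i ∈ topSet n π s T then 1 else 0))) ^ k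
      = ∑ u ∈ Fintype.piFinset (fun _ : Fin k => S),
          ∏ j : Fin k, Real.exp (l * (if i ∈ topSet n π (u j) T then 1 else 0)) := by
    have h0 := Finset.prod_univ_sum (fun _ : Fin k => S)
      (fun _ s => Real.exp (l * (if i ∈ topSet n π s T then 1 else 0)))
    rw [← h0]
    simp [Finset.prod_const]
  rw [h1]
  have h2 : ∀ u : Fin k → Fin n,
      ∏ j : Fin k, Real.exp (l * (if i ∈ topSet n π (u j) T then 1 else 0))
      = Real.exp (l * (tupleVotes n π k u T i : ℝ)) := by
    intro u
    rw [← Real.exp_sum, ← Finset.mul_sum]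
    congr 2
    rw [Finset.sum_boole]
    rfl
  calc (((Fintype.piFinset fun _ : Fin k => S).filter E).card : ℝ) * Real.exp (l * a)
      = ∑ _u ∈ (Fintype.piFinset fun _ : Fin k => S).filter E, Real.exp (l * a) := by
        rw [Finset.sum_const, nsmul_eq_mul]
    _ ≤ ∑ u ∈ (Fintype.piFinset fun _ : Fin k => S).filter E,
          ∏ j : Fin k, Real.exp (l * (if i ∈ topSet n π (u j) T then 1 else 0)) := by
        apply Finset.sum_le_sum
        intro u hu
        rw [h2 u]
        exact Real.exp_le_exp.mpr (hE u (Finset.mem_filter.mp hu).2)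
    _ ≤ ∑ u ∈ Fintype.piFinset (fun _ : Fin k => S),
          ∏ j : Fin k, Real.exp (l * (if i ∈ topSet n π (u j) T then 1 else 0)) := by
        apply Finset.sum_le_sum_of_subset_of_nonneg (Finset.filter_subset _ _)
        intro u _ _
        positivity

lemma bad_bound (n k : ℕ) (π : Fin n → Equiv.Perm (Fin n)) (S : Finset (Fin n))
    (hSne : S.Nonempty) (T : ℕ) (i : Fin n) (E : (Fin k → Fin n) → Prop) [DecidablePred E]
    (l a : ℝ) (hE : ∀ u, E u → l * a ≤ l * (tupleVotes n π k u T i : ℝ)) :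
    (((Fintype.piFinset fun _ : Fin k => S).filter E).card : ℝ) ≤
      (S.card : ℝ) ^ k *
        Real.exp (k * (((votes n π S T i : ℝ) / S.card) * l + l ^ 2 / 8) - l * a) := by
  have hc : (0:ℝ) < S.card := by exact_mod_cast Finset.card_pos.mpr hSne
  set p : ℝ := (votes n π S T i : ℝ) / S.card with hp
  have hvle : (votes n π S T i : ℝ) ≤ S.card := by
    exact_mod_cast Finset.card_filter_le S _
  have hp0 : 0 ≤ p := by positivity
  have hp1 : p ≤ 1 := by rw [hp, div_le_one hc]; exact hvle
  have hsum : ∑ s ∈ S, Real.exp (l * (if i ∈ topSet n π s T then 1 else 0))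
      = (votes n π S T i : ℝ) * Real.exp l + ((S.card : ℝ) - votes n π S T i) := by
    rw [← Finset.sum_filter_add_sum_filter_not S (fun s => i ∈ topSet n π s T)]
    have hA : ∑ s ∈ S.filter (fun s => i ∈ topSet n π s T),
        Real.exp (l * (if i ∈ topSet n π s T then 1 else 0))
        = (votes n π S T i : ℝ) * Real.exp l := by
      rw [Finset.sum_congr rfl (g := fun _ => Real.exp l) (fun s hs => by
        rw [if_pos (Finset.mem_filter.mp hs).2, mul_one]),
        Finset.sum_const, nsmul_eq_mul]
      rfl
    have hB : ∑ s ∈ S.filter (fun s => ¬ i ∈ topSet n π s T),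
        Real.exp (l * (if i ∈ topSet n π s T then 1 else 0))
        = ((S.filter (fun s => ¬ i ∈ topSet n π s T)).card : ℝ) := by
      rw [Finset.sum_congr rfl (g := fun _ => (1:ℝ)) (fun s hs => by
        rw [if_neg (Finset.mem_filter.mp hs).2, mul_zero, Real.exp_zero]),
        Finset.sum_const, nsmul_eq_mul, mul_one]
    rw [hA, hB]
    have h2 : (votes n π S T i) + (S.filter (fun s => ¬ i ∈ topSet n π s T)).card
        = S.card := Finset.card_filter_add_card_filter_not
      (s := S) (p := fun s => i ∈ topSet n π s T)
    have h3 : ((S.filter (fun s => ¬ i ∈ topSet n π s T)).card : ℝ)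
        = (S.card : ℝ) - votes n π S T i := by
      push_cast [← h2]; ring
    rw [h3]
  have hmgf : ∑ s ∈ S, Real.exp (l * (if i ∈ topSet n π s T then 1 else 0))
      ≤ (S.card : ℝ) * Real.exp (p * l + l ^ 2 / 8) := by
    rw [hsum]
    have := hoeffding_mgf p hp0 hp1 l
    have hrw : (votes n π S T i : ℝ) * Real.exp l + ((S.card : ℝ) - votes n π S T i)
        = (S.card : ℝ) * ((1 - p) + p * Real.exp l) := by
      rw [hp]; field_simp; ring
    rw [hrw]
    exact mul_le_mul_of_nonneg_left this hc.le
  have hch := chernoff_count n k π S T i E l a hE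
  have hpow : (∑ s ∈ S, Real.exp (l * (if i ∈ topSet n π s T then 1 else 0))) ^ k
      ≤ ((S.card : ℝ) * Real.exp (p * l + l ^ 2 / 8)) ^ k := by
    apply pow_le_pow_left₀ _ hmgf
    apply Finset.sum_nonneg
    intro s _
    positivity
  have hfinal : (((Fintype.piFinset fun _ : Fin k => S).filter E).card : ℝ) * Real.exp (l * a)
      ≤ (S.card : ℝ) ^ k * Real.exp (k * (p * l + l ^ 2 / 8)) := by
    calc _ ≤ _ := hch
    _ ≤ ((S.card : ℝ) * Real.exp (p * l + l ^ 2 / 8)) ^ k := hpow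
    _ = (S.card : ℝ) ^ k * Real.exp (k * (p * l + l ^ 2 / 8)) := by
        rw [mul_pow, ← Real.exp_nat_mul]
  rw [sub_eq_add_neg, Real.exp_add, ← mul_assoc]
  rw [← le_div_iff₀ (Real.exp_pos (l * a))] at hfinal
  calc (((Fintype.piFinset fun _ : Fin k => S).filter E).card : ℝ)
      ≤ (S.card : ℝ) ^ k * Real.exp (k * (p * l + l ^ 2 / 8)) / Real.exp (l * a) := hfinal
    _ = (S.card : ℝ) ^ k * Real.exp (↑k * (p * l + l ^ 2 / 8)) * Real.exp (-(l * a)) := by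
        rw [Real.exp_neg]; ring

set_option maxHeartbeats 2000000 in
theorem stmt_5 (n : ℕ) (π : Fin n → Equiv.Perm (Fin n)) (θ α β γ : ℝ)
    (hθ : 0 < θ) (hβ : 0 ≤ β) (hβα : β < α) (hα : α ≤ 1) (hγ : γ = α - β)
    (S : Finset (Fin n)) (hS : IsCommunity n π θ α β S)
    (k : ℕ) (hk : k = ⌈2 * Real.log (4 * n) / γ ^ 2⌉₊) :
    (1 / 2 : ℝ) *
      (((Finset.univ : Finset (Fin k → Fin n)).filter
          (fun u => ∀ j, u j ∈ S)).card : ℝ) ≤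
    (((Finset.univ : Finset (Fin k → Fin n)).filter
        (fun u => (∀ j, u j ∈ S) ∧
          Finset.univ.filter (fun i =>
            (α - γ / 2) * k ≤ (tupleVotes n π k u ⌈θ * S.card⌉₊ i : ℝ)) = S)).card : ℝ) := by
  classical
  obtain ⟨hin, hout⟩ := hS
  have hγpos : 0 < γ := by rw [hγ]; linarith
  set T := ⌈θ * (S.card : ℝ)⌉₊ with hT
  set A := Fintype.piFinset fun _ : Fin k => S with hA
  set Q : (Fin k → Fin n) → Prop := fun u =>
    Finset.univ.filter (fun i => (α - γ / 2) * k ≤ (tupleVotes n π k u T i : ℝ)) = S with hQ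
  have hfilA : ((Finset.univ : Finset (Fin k → Fin n)).filter (fun u => ∀ j, u j ∈ S)) = A := by
    ext u; simp [hA, Fintype.mem_piFinset]
  have hfilB : ((Finset.univ : Finset (Fin k → Fin n)).filter
      (fun u => (∀ j, u j ∈ S) ∧
        Finset.univ.filter (fun i =>
          (α - γ / 2) * k ≤ (tupleVotes n π k u T i : ℝ)) = S)) = A.filter Q := by
    ext u; simp [hA, hQ, Fintype.mem_piFinset]
  rw [hfilA, hfilB]
  -- trivial case n = 0
  rcases Nat.eq_zero_or_pos n with hn | hn
  · subst hn
    have hallQ : ∀ u ∈ A, Q u := by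
      intro u _
      rw [hQ]
      ext x
      exact x.elim0
    rw [Finset.filter_true_of_mem hallQ]
    have : (0:ℝ) ≤ (A.card : ℝ) := Nat.cast_nonneg _
    linarith
  -- case S = ∅ (with n ≥ 1, k ≥ 1)
  rcases S.eq_empty_or_nonempty with hSe | hSne
  · have hk1 : 0 < k := by
      rw [hk]
      apply Nat.ceil_pos.mpr
      apply div_pos
      · have : (1:ℝ) < 4 * n := by
          have : (1:ℝ) ≤ (n:ℝ) := by exact_mod_cast hn
          linarith
        have := Real.log_pos this
        linarith
      · positivity
    have hAe : A = ∅ := by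
      rw [Finset.eq_empty_iff_forall_notMem]
      intro u hu
      have := (Fintype.mem_piFinset.mp hu) ⟨0, hk1⟩
      simp [hSe] at this
    rw [hAe]
    simp
  -- main case
  have hn4 : (1:ℝ) < 4 * n := by
    have : (1:ℝ) ≤ (n:ℝ) := by exact_mod_cast hn
    linarith
  have hScpos : (0:ℝ) < S.card := by exact_mod_cast Finset.card_pos.mpr hSne
  have hexp : Real.exp (-(γ ^ 2 * k / 2)) ≤ 1 / (4 * n) := by
    have hkge : 2 * Real.log (4 * n) / γ ^ 2 ≤ (k : ℝ) := by
      rw [hk]; exact Nat.le_ceil _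
    have h1 : Real.log (4 * n) ≤ γ ^ 2 * k / 2 := by
      rw [div_le_iff₀ (by positivity : (0:ℝ) < γ ^ 2)] at hkge
      linarith
    have h2 : Real.exp (-(γ ^ 2 * k / 2)) ≤ Real.exp (-(Real.log (4 * n))) :=
      Real.exp_le_exp.mpr (by linarith)
    calc Real.exp (-(γ ^ 2 * k / 2)) ≤ Real.exp (-(Real.log (4 * n))) := h2
      _ = 1 / (4 * n) := by
          rw [Real.exp_neg, Real.exp_log (by positivity)]
          rw [one_div]
  set E : Fin n → (Fin k → Fin n) → Prop := fun i u =>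
    if i ∈ S then ¬ ((α - γ / 2) * k ≤ (tupleVotes n π k u T i : ℝ))
    else ((α - γ / 2) * k ≤ (tupleVotes n π k u T i : ℝ)) with hE
  -- per-element bound
  have hbadi : ∀ i : Fin n, ((A.filter (E i)).card : ℝ) ≤ (S.card : ℝ) ^ k * (1 / (4 * n)) := by
    intro i
    by_cases hiS : i ∈ S
    · -- lower tail, l = -2γ
      have hp : α ≤ (votes n π S T i : ℝ) / S.card := by
        rw [le_div_iff₀ hScpos]
        exact hin i hiS
      have hEimp : ∀ u, E i u →
          (-(2*γ)) * ((α - γ / 2) * k) ≤ (-(2*γ)) * (tupleVotes n π k u T i : ℝ) := by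
        intro u hu
        rw [hE] at hu
        simp only [if_pos hiS] at hu
        push_neg at hu
        exact mul_le_mul_of_nonpos_left hu.le (by linarith)
      have hb := bad_bound n k π S hSne T i (E i) (-(2*γ)) ((α - γ / 2) * k) hEimp
      refine le_trans hb ?_
      apply mul_le_mul_of_nonneg_left _ (by positivity)
      have : (k : ℝ) * (((votes n π S T i : ℝ) / S.card) * (-(2*γ)) + (-(2*γ)) ^ 2 / 8)
          - (-(2*γ)) * ((α - γ / 2) * k) ≤ -(γ ^ 2 * k / 2) := by
        have hk0 : (0:ℝ) ≤ (k:ℝ) := Nat.cast_nonneg _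
        nlinarith [mul_nonneg hk0 (mul_nonneg hγpos.le (sub_nonneg.mpr hp))]
      calc Real.exp _ ≤ Real.exp (-(γ ^ 2 * k / 2)) := Real.exp_le_exp.mpr this
        _ ≤ 1 / (4 * n) := hexp
    · -- upper tail, l = 2γ
      have hp : (votes n π S T i : ℝ) / S.card ≤ α - γ := by
        rw [div_le_iff₀ hScpos]
        have := hout i hiS
        have : (votes n π S T i : ℝ) ≤ β * S.card := this
        rw [hγ]; simpa using this
      have hEimp : ∀ u, E i u →
          (2*γ) * ((α - γ / 2) * k) ≤ (2*γ) * (tupleVotes n π k u T i : ℝ) := by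
        intro u hu
        rw [hE] at hu
        simp only [if_neg hiS] at hu
        exact mul_le_mul_of_nonneg_left hu (by linarith)
      have hb := bad_bound n k π S hSne T i (E i) (2*γ) ((α - γ / 2) * k) hEimp
      refine le_trans hb ?_
      apply mul_le_mul_of_nonneg_left _ (by positivity)
      have : (k : ℝ) * (((votes n π S T i : ℝ) / S.card) * (2*γ) + (2*γ) ^ 2 / 8)
          - (2*γ) * ((α - γ / 2) * k) ≤ -(γ ^ 2 * k / 2) := by
        have hk0 : (0:ℝ) ≤ (k:ℝ) := Nat.cast_nonneg _
        nlinarith [mul_nonneg hk0 (mul_nonneg hγpos.le (sub_nonneg.mpr hp))]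
      calc Real.exp _ ≤ Real.exp (-(γ ^ 2 * k / 2)) := Real.exp_le_exp.mpr this
        _ ≤ 1 / (4 * n) := hexp
  -- union bound
  have hsub : A.filter (fun u => ¬ Q u) ⊆ Finset.univ.biUnion (fun i => A.filter (E i)) := by
    intro u hu
    rw [Finset.mem_filter] at hu
    obtain ⟨huA, hnQ⟩ := hu
    simp only [hQ, Finset.ext_iff] at hnQ
    push_neg at hnQ
    obtain ⟨i, hi⟩ := hnQ
    rw [Finset.mem_filter] at hi
    simp only [Finset.mem_univ, true_and] at hi
    rw [Finset.mem_biUnion]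
    refine ⟨i, Finset.mem_univ i, ?_⟩
    rw [Finset.mem_filter]
    refine ⟨huA, ?_⟩
    simp only [hE]
    by_cases hiS : i ∈ S
    · rw [if_pos hiS]
      rcases hi with ⟨_, h2⟩ | ⟨h1, _⟩
      · exact absurd hiS h2
      · exact h1
    · rw [if_neg hiS]
      rcases hi with ⟨h1, _⟩ | ⟨_, h2⟩
      · exact h1
      · exact absurd h2 hiS
  have hbadcard : ((A.filter (fun u => ¬ Q u)).card : ℝ) ≤ (S.card : ℝ) ^ k / 4 := by
    have h1 : (A.filter (fun u => ¬ Q u)).card ≤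
        ∑ i : Fin n, (A.filter (E i)).card :=
      le_trans (Finset.card_le_card hsub) (Finset.card_biUnion_le)
    have h2 : ((A.filter (fun u => ¬ Q u)).card : ℝ) ≤
        ∑ i : Fin n, ((A.filter (E i)).card : ℝ) := by
      exact_mod_cast h1
    refine le_trans h2 ?_
    calc ∑ i : Fin n, ((A.filter (E i)).card : ℝ)
        ≤ ∑ _i : Fin n, (S.card : ℝ) ^ k * (1 / (4 * n)) :=
          Finset.sum_le_sum (fun i _ => hbadi i)
      _ = n * ((S.card : ℝ) ^ k * (1 / (4 * n))) := by
          rw [Finset.sum_const, Finset.card_univ, Fintype.card_fin, nsmul_eq_mul]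
      _ = (S.card : ℝ) ^ k / 4 := by
          field_simp
  have hAcard : (A.card : ℝ) = (S.card : ℝ) ^ k := by
    rw [hA, Fintype.card_piFinset]
    push_cast
    rw [Finset.prod_const, Finset.card_univ, Fintype.card_fin]
  have hsplit : (A.filter Q).card + (A.filter (fun u => ¬ Q u)).card = A.card :=
    Finset.card_filter_add_card_filter_not (p := Q)
  have hsplit' : ((A.filter Q).card : ℝ) + ((A.filter (fun u => ¬ Q u)).card : ℝ)
      = (A.card : ℝ) := by exact_mod_cast hsplit
  have h4 : (0:ℝ) ≤ (S.card : ℝ) ^ k := by positivity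
  linarith [hAcard, hsplit', hbadcard]
end

section
/- Let θ ≥ 1 be a constant, let n be a perfect square, and let l be an integer with 2 ≤ l ≤ n^{1/4}/(2√θ). Then for all sufficiently large n there exists an affinity system on n elements, whose element set is partitioned into √n blobs of size √n each, such that every union of l distinct blobs is a (θ, α, β)-self-determined community with α = 1/l and β = 1/(2l) (so γ = α − β = α/2). Consequently, the number of (θ, 1/l, 1/(2l))-self-determined communities in this system is at least C(√n, l) ≥ n^{l/4}, i.e. n^{Ω(1/α)}. -/
open Finset

/-! ### Auxiliary definitions and lemmas -/

def blobF (m : ℕ) (b : Fin m) : Finset (Fin (m ^ 2)) :=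
  Finset.univ.filter (fun x => (x : ℕ) / m = (b : ℕ))

lemma mem_blobF {m : ℕ} {b : Fin m} {x : Fin (m ^ 2)} :
    x ∈ blobF m b ↔ (x : ℕ) / m = (b : ℕ) := by
  simp [blobF]

lemma msq_pos {m : ℕ} (h2 : 2 ≤ m) : 0 < m ^ 2 := by positivity

lemma m_le_msq (m : ℕ) : m ≤ m ^ 2 := by
  nlinarith [sq_nonneg m, Nat.zero_le m]

lemma msq_sub_eq {m : ℕ} (h2 : 2 ≤ m) : m ^ 2 - m = m * (m - 1) := by
  obtain ⟨k, rfl⟩ : ∃ k, m = k + 1 := ⟨m - 1, by omega⟩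
  have : (k + 1) ^ 2 = (k + 1) * k + (k + 1) := by ring
  simp [this]

lemma msq_sub_pos {m : ℕ} (h2 : 2 ≤ m) : 0 < m ^ 2 - m := by
  rw [msq_sub_eq h2]
  exact Nat.mul_pos (by omega) (by omega)

lemma blobF_card {m : ℕ} (hm : 0 < m) (b : Fin m) : (blobF m b).card = m := by
  have hmm : ∀ k : Fin m, (b : ℕ) * m + (k : ℕ) < m ^ 2 := by
    intro k
    have h1 : (b : ℕ) * m + (k : ℕ) < ((b : ℕ) + 1) * m := by
      have := k.isLt; nlinarith
    have h2 : ((b : ℕ) + 1) * m ≤ m * m := Nat.mul_le_mul_right m b.isLt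
    nlinarith [sq_nonneg m]
  have himg : blobF m b
      = Finset.image (fun k : Fin m => (⟨(b : ℕ) * m + (k : ℕ), hmm k⟩ : Fin (m ^ 2)))
          Finset.univ := by
    ext x
    simp only [mem_blobF, Finset.mem_image, Finset.mem_univ, true_and]
    constructor
    · intro hx
      refine ⟨⟨(x : ℕ) % m, Nat.mod_lt _ hm⟩, ?_⟩
      apply Fin.ext
      have := Nat.div_add_mod (x : ℕ) m
      simp only [Fin.val_mk]
      rw [← hx]
      rw [Nat.mul_comm]
      omega
    · rintro ⟨k, rfl⟩
      simp only [Fin.val_mk]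
      rw [Nat.mul_comm, Nat.mul_add_div hm, Nat.div_eq_of_lt k.isLt]
      simp
  have hinj : Function.Injective
      (fun k : Fin m => (⟨(b : ℕ) * m + (k : ℕ), hmm k⟩ : Fin (m ^ 2))) := by
    intro k k' h
    have h2 : (b : ℕ) * m + (k : ℕ) = (b : ℕ) * m + (k' : ℕ) := congrArg Fin.val h
    exact Fin.ext (by omega)
  rw [himg, Finset.card_image_of_injective _ hinj, Finset.card_univ, Fintype.card_fin]

open Fin.NatCast in
def rankEquiv (m : ℕ) (h2 : 2 ≤ m) (s : Fin (m ^ 2)) : Equiv.Perm (Fin (m ^ 2)) :=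
  letI : NeZero (m ^ 2) := ⟨(msq_pos h2).ne'⟩
  letI : NeZero (m ^ 2 - m) := ⟨(msq_sub_pos h2).ne'⟩
  (Equiv.subRight ((((s : ℕ) / m * m : ℕ) : Fin (m ^ 2)))).trans
    ((finCongr (show m + (m ^ 2 - m) = m ^ 2 by have := m_le_msq m; omega)).symm.trans
      ((finSumFinEquiv.symm).trans
        ((Equiv.sumCongr (Equiv.refl (Fin m))
            (Equiv.addRight ((((s : ℕ) % m * m : ℕ) : Fin (m ^ 2 - m))))).trans
          (finSumFinEquiv.trans
            (finCongr (show m + (m ^ 2 - m) = m ^ 2 by have := m_le_msq m; omega))))))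

open Fin.NatCast in
lemma rankEquiv_val (m : ℕ) (h2 : 2 ≤ m) (s x : Fin (m ^ 2)) :
    (rankEquiv m h2 s x : ℕ) =
      if ((x : ℕ) + (m ^ 2 - (s : ℕ) / m * m)) % m ^ 2 < m then
        ((x : ℕ) + (m ^ 2 - (s : ℕ) / m * m)) % m ^ 2
      else
        m + ((((x : ℕ) + (m ^ 2 - (s : ℕ) / m * m)) % m ^ 2 - m
            + ((s : ℕ) % m * m) % (m ^ 2 - m)) % (m ^ 2 - m)) := by
  haveI : NeZero (m ^ 2) := ⟨(msq_pos h2).ne'⟩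
  haveI : NeZero (m ^ 2 - m) := ⟨(msq_sub_pos h2).ne'⟩
  have hmsq := msq_pos h2
  have hNpos := msq_sub_pos h2
  have hle := m_le_msq m
  have hbm : (s : ℕ) / m * m < m ^ 2 :=
    lt_of_le_of_lt (Nat.div_mul_le_self _ _) s.isLt
  set N := m ^ 2 - m with hN
  have hmn : m + N = m ^ 2 := by omega
  set y : Fin (m ^ 2) := x - (((s : ℕ) / m * m : ℕ) : Fin (m ^ 2)) with hydef
  have hy : (y : ℕ) = ((x : ℕ) + (m ^ 2 - (s : ℕ) / m * m)) % m ^ 2 := by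
    rw [hydef, Fin.sub_def]
    simp only [Fin.val_natCast]
    rw [Nat.mod_eq_of_lt hbm, Nat.add_comm]
  rw [rankEquiv]
  simp only [Equiv.trans_apply, Equiv.subRight_apply, finCongr_symm, finCongr_apply]
  rw [← hydef]
  by_cases hcase : (y : ℕ) < m
  · have h1 : finSumFinEquiv.symm (Fin.cast hmn.symm y) = Sum.inl ⟨(y : ℕ), hcase⟩ := by
      rw [Equiv.symm_apply_eq]
      exact Fin.ext (by simp [finSumFinEquiv_apply_left])
    rw [h1]
    simp only [Equiv.sumCongr_apply, Sum.map_inl, Equiv.refl_apply,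
      finSumFinEquiv_apply_left]
    rw [if_pos (hy ▸ hcase)]
    simp [← hy]
  · have hylt : (y : ℕ) - m < N := by have := y.isLt; omega
    have h1 : finSumFinEquiv.symm (Fin.cast hmn.symm y) = Sum.inr ⟨(y : ℕ) - m, hylt⟩ := by
      rw [Equiv.symm_apply_eq]
      refine Fin.ext ?_
      simp only [finSumFinEquiv_apply_right, Fin.coe_natAdd, Fin.coe_cast]
      omega
    rw [h1]
    simp only [Equiv.sumCongr_apply, Sum.map_inr, Equiv.coe_addRight,
      finSumFinEquiv_apply_right]
    rw [if_neg (by rw [← hy]; exact hcase)]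
    simp only [Fin.coe_cast, Fin.coe_natAdd]
    congr 1
    rw [Fin.add_def]
    simp only [Fin.val_natCast]
    rw [← hy]

lemma rank_val_in (m : ℕ) (h2 : 2 ≤ m) (s x : Fin (m ^ 2))
    (hsx : (x : ℕ) / m = (s : ℕ) / m) :
    (rankEquiv m h2 s x : ℕ) = (x : ℕ) % m := by
  have hm : 0 < m := by omega
  have hle := m_le_msq m
  have e1 := Nat.div_add_mod (x : ℕ) m
  have e2 := Nat.mod_lt (x : ℕ) hm
  rw [hsx] at e1
  rw [rankEquiv_val m h2 s x]
  set P := (s : ℕ) / m * m with hP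
  have hPx : P ≤ (x : ℕ) ∧ (x : ℕ) - P = (x : ℕ) % m := by
    constructor <;> · rw [hP, Nat.mul_comm]; omega
  have hPm : P ≤ m ^ 2 := le_trans hPx.1 x.isLt.le
  have key : ((x : ℕ) + (m ^ 2 - P)) % m ^ 2 = (x : ℕ) % m := by
    rw [show (x : ℕ) + (m ^ 2 - P) = ((x : ℕ) - P) + m ^ 2 by omega,
      Nat.add_mod_right, hPx.2, Nat.mod_eq_of_lt (by omega)]
  rw [key, if_pos e2]

lemma rank_val_out (m : ℕ) (h2 : 2 ≤ m) (s x : Fin (m ^ 2))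
    (hsx : (x : ℕ) / m ≠ (s : ℕ) / m) :
    m ≤ ((x : ℕ) + (m ^ 2 - (s : ℕ) / m * m)) % m ^ 2 ∧
    (rankEquiv m h2 s x : ℕ) =
      m + ((((x : ℕ) + (m ^ 2 - (s : ℕ) / m * m)) % m ^ 2 - m
          + ((s : ℕ) % m * m) % (m ^ 2 - m)) % (m ^ 2 - m)) := by
  have hm : 0 < m := by omega
  have hle := m_le_msq m
  have hb : (s : ℕ) / m < m := by
    rw [Nat.div_lt_iff_lt_mul hm]
    have := s.isLt; nlinarith [s.isLt]
  have hmy : m ≤ ((x : ℕ) + (m ^ 2 - (s : ℕ) / m * m)) % m ^ 2 := by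
    set b := (s : ℕ) / m with hbdef
    set P := b * m with hP
    have hPm : P ≤ m ^ 2 - m := by
      rw [hP]
      have h1 : b * m ≤ (m - 1) * m := Nat.mul_le_mul_right m (by omega)
      have h2' : (m - 1) * m = m ^ 2 - m := by
        obtain ⟨k, rfl⟩ : ∃ k, m = k + 1 := ⟨m - 1, by omega⟩
        have : (k + 1) ^ 2 = k * (k + 1) + (k + 1) := by ring
        simp [this]
      omega
    by_cases hge : P ≤ (x : ℕ)
    · have hne : P + m ≤ (x : ℕ) := by
        by_contra hlt
        push_neg at hlt
        have e3 : (b + 1) * m = P + m := by rw [hP]; ring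
        have hdivx : (x : ℕ) / m = b := Nat.div_eq_of_lt_le (by omega) (by omega)
        exact hsx hdivx
      rw [show (x : ℕ) + (m ^ 2 - P) = ((x : ℕ) - P) + m ^ 2 by omega,
        Nat.add_mod_right, Nat.mod_eq_of_lt (by have := x.isLt; omega)]
      omega
    · push_neg at hge
      rw [Nat.mod_eq_of_lt (by omega)]
      omega
  refine ⟨hmy, ?_⟩
  rw [rankEquiv_val m h2 s x, if_neg (by omega)]

lemma aux_count_mod (T m r : ℕ) (hm : 0 < m) :
    ((Finset.range T).filter (fun w => w % m = r)).card ≤ T / m + 1 := by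
  have := Finset.card_le_card_of_injOn (s := (Finset.range T).filter (fun w => w % m = r))
      (t := Finset.range (T / m + 1)) (fun w => w / m) ?_ ?_
  · simpa using this
  · intro w hw
    simp only [Finset.mem_coe, Finset.mem_filter, Finset.mem_range] at hw ⊢
    exact Nat.lt_succ_of_le (Nat.div_le_div_right hw.1.le)
  · intro a ha b hb hab
    simp only [Finset.coe_filter, Set.mem_setOf_eq, Finset.mem_range] at ha hb
    have h1 : a = m * (a / m) + r := by
      conv_lhs => rw [← Nat.div_add_mod a m]
      rw [ha.2]
    have h2 : b = m * (b / m) + r := by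
      conv_lhs => rw [← Nat.div_add_mod b m]
      rw [hb.2]
    simp only at hab
    rw [h1, h2, hab]

lemma aux_blob_count (m N tt y : ℕ) (h2 : 2 ≤ m) (hN : N = m * (m - 1)) :
    ((Finset.range m).filter
        (fun k => (y - m + (k * m) % N) % N < tt - m)).card ≤ (tt - m) / m + 2 := by
  have hm : 0 < m := by omega
  have hNpos : 0 < N := by rw [hN]; exact Nat.mul_pos hm (by omega)
  set Q : ℕ → Prop := fun k => (y - m + (k * m) % N) % N < tt - m with hQ
  have hsub : (Finset.range m).filter Q ⊆ ((Finset.range (m - 1)).filter Q) ∪ {m - 1} := by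
    intro k hk
    simp only [Finset.mem_filter, Finset.mem_range] at hk
    rcases Nat.lt_or_ge k (m - 1) with h | h
    · exact Finset.mem_union_left _ (Finset.mem_filter.mpr ⟨Finset.mem_range.mpr h, hk.2⟩)
    · exact Finset.mem_union_right _ (by simp only [Finset.mem_singleton]; omega)
  have h1 : ((Finset.range m).filter Q).card ≤ ((Finset.range (m - 1)).filter Q).card + 1 := by
    calc ((Finset.range m).filter Q).card ≤ _ := Finset.card_le_card hsub
    _ ≤ ((Finset.range (m - 1)).filter Q).card + ({m - 1} : Finset ℕ).card :=
        Finset.card_union_le _ _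
    _ = ((Finset.range (m - 1)).filter Q).card + 1 := by rw [Finset.card_singleton]
  have h2' : ((Finset.range (m - 1)).filter Q).card ≤
      ((Finset.range (tt - m)).filter (fun w => w % m = (y - m) % m)).card := by
    apply Finset.card_le_card_of_injOn (fun k => (y - m + (k * m) % N) % N)
    · intro k hk
      simp only [Finset.mem_coe, Finset.mem_filter, Finset.mem_range] at hk ⊢
      refine ⟨hk.2, ?_⟩
      have hdvd : m ∣ N := ⟨m - 1, hN⟩
      calc ((y - m + (k * m) % N) % N) % m = (y - m + (k * m) % N) % m :=
            Nat.mod_mod_of_dvd _ hdvd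
      _ = ((y - m) % m + ((k * m) % N) % m) % m := by rw [Nat.add_mod]
      _ = ((y - m) % m + (k * m) % m) % m := by rw [Nat.mod_mod_of_dvd _ hdvd]
      _ = ((y - m) % m + 0) % m := by rw [Nat.mul_mod_left]
      _ = (y - m) % m := by simp
    · intro k hk k' hk' heq
      simp only [Finset.coe_filter, Set.mem_setOf_eq, Finset.mem_range] at hk hk'
      simp only at heq
      have hmq : (y - m) + (k * m) % N ≡ (y - m) + (k' * m) % N [MOD N] := heq
      have hmq2 : (k * m) % N ≡ (k' * m) % N [MOD N] := Nat.ModEq.add_left_cancel' _ hmq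
      have hu : (k * m) % N < N := Nat.mod_lt _ hNpos
      have hv : (k' * m) % N < N := Nat.mod_lt _ hNpos
      have hequ : (k * m) % N = (k' * m) % N := by
        have := hmq2
        unfold Nat.ModEq at this
        rwa [Nat.mod_eq_of_lt hu, Nat.mod_eq_of_lt hv] at this
      have hkm : k * m < N := by
        rw [hN, Nat.mul_comm m (m - 1)]
        exact (Nat.mul_lt_mul_right hm).mpr (by omega)
      have hkm' : k' * m < N := by
        rw [hN, Nat.mul_comm m (m - 1)]
        exact (Nat.mul_lt_mul_right hm).mpr (by omega)
      rw [Nat.mod_eq_of_lt hkm, Nat.mod_eq_of_lt hkm'] at hequ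
      exact Nat.eq_of_mul_eq_mul_right hm hequ
  have h3 := aux_count_mod (tt - m) m ((y - m) % m) hm
  exact le_trans h1 (by omega)

set_option maxHeartbeats 1000000 in
open scoped Classical in
theorem stmt_8 (θ : ℝ) (hθ : 1 ≤ θ) :
    ∃ n₀ : ℕ, ∀ m l : ℕ, n₀ ≤ m ^ 2 → 2 ≤ l →
      (l : ℝ) ≤ Real.sqrt m / (2 * Real.sqrt θ) →
      ∃ (π : Fin (m ^ 2) → Equiv.Perm (Fin (m ^ 2)))
        (B : Fin m → Finset (Fin (m ^ 2))),
        (∀ b, (B b).card = m) ∧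
        (∀ b b', b ≠ b' → Disjoint (B b) (B b')) ∧
        (Finset.univ.biUnion B = Finset.univ) ∧
        (∀ T : Finset (Fin m), T.card = l →
          IsCommunity (m ^ 2) π θ (1 / (l : ℝ)) (1 / (2 * (l : ℝ))) (T.biUnion B)) ∧
        ((m.choose l : ℝ) ≤
          (((Finset.univ : Finset (Finset (Fin (m ^ 2)))).filter
              (fun S => IsCommunity (m ^ 2) π θ (1 / (l : ℝ)) (1 / (2 * (l : ℝ))) S)).card : ℝ)) ∧
        (((m ^ 2 : ℕ) : ℝ) ^ ((l : ℝ) / 4) ≤ (m.choose l : ℝ)) := by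
  refine ⟨10000, ?_⟩
  intro m l hm hl2 hlm
  have hm100 : 100 ≤ m := by
    by_contra h
    push_neg at h
    have : m ^ 2 ≤ 99 ^ 2 := Nat.pow_le_pow_left (by omega) 2
    omega
  have h2 : 2 ≤ m := by omega
  have hm0 : 0 < m := by omega
  have hm0R : (0:ℝ) < m := by exact_mod_cast hm0
  have hm100R : (100:ℝ) ≤ m := by exact_mod_cast hm100
  have hθ0 : (0:ℝ) < θ := by linarith
  have hsqθ : 1 ≤ Real.sqrt θ := by
    rw [show (1:ℝ) = Real.sqrt 1 by simp]
    exact Real.sqrt_le_sqrt hθ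
  have hsqm0 : (0:ℝ) ≤ Real.sqrt m := Real.sqrt_nonneg _
  have hl0R : (0:ℝ) ≤ l := by positivity
  have hlm' : (l : ℝ) * (2 * Real.sqrt θ) ≤ Real.sqrt m := by
    rw [← le_div_iff₀ (by positivity)]
    exact hlm
  have h2l : 2 * (l:ℝ) ≤ Real.sqrt m := by nlinarith [Real.sqrt_nonneg θ]
  have hsqm_sq : Real.sqrt m ^ 2 = (m:ℝ) := Real.sq_sqrt hm0R.le
  have hsqθ_sq : Real.sqrt θ ^ 2 = θ := Real.sq_sqrt hθ0.le
  have hθl2 : 4 * θ * (l:ℝ)^2 ≤ m := by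
    have h' := mul_self_le_mul_self (by positivity : (0:ℝ) ≤ (l:ℝ) * (2 * Real.sqrt θ)) hlm'
    nlinarith [h', Real.mul_self_sqrt hθ0.le, Real.mul_self_sqrt hm0R.le]
  have hsq_m10 : Real.sqrt m ≤ (m:ℝ)/10 := by
    rw [show (m:ℝ)/10 = Real.sqrt (((m:ℝ)/10)^2) from (Real.sqrt_sq (by positivity)).symm]
    apply Real.sqrt_le_sqrt
    nlinarith
  have hlR_m : (l:ℝ) ≤ (m:ℝ)/20 := by nlinarith
  have hlm_nat : l ≤ m := by
    have : (l:ℝ) ≤ (m:ℝ) := by linarith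
    exact_mod_cast this
  have hl0 : 0 < l := by omega
  set π : Fin (m^2) → Equiv.Perm (Fin (m^2)) := fun s => (rankEquiv m h2 s).symm with hπ
  have htop : ∀ (s i : Fin (m^2)) (t : ℕ),
      i ∈ topSet (m^2) π s t ↔ (rankEquiv m h2 s i : ℕ) < t := by
    intro s i t
    simp [topSet, hπ]
  have hdisj : ∀ b b' : Fin m, b ≠ b' → Disjoint (blobF m b) (blobF m b') := by
    intro b b' hne
    rw [Finset.disjoint_left]
    intro x hx hx'
    rw [mem_blobF] at hx hx'
    exact hne (Fin.ext (by omega))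
  have hScard : ∀ T : Finset (Fin m), (T.biUnion (blobF m)).card = T.card * m := by
    intro T
    rw [Finset.card_biUnion (fun b _ b' _ hne => hdisj b b' hne)]
    rw [Finset.sum_congr rfl (fun b _ => blobF_card hm0 b), Finset.sum_const, smul_eq_mul]
  -- the community property
  have hcomm : ∀ T : Finset (Fin m), T.card = l →
      IsCommunity (m ^ 2) π θ (1 / (l : ℝ)) (1 / (2 * (l : ℝ))) (T.biUnion (blobF m)) := by
    intro T hT
    have hSc : (T.biUnion (blobF m)).card = l * m := by rw [hScard, hT]
    have httl : l * m ≤ ⌈θ * ((l * m : ℕ) : ℝ)⌉₊ := by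
      have ha : ((l*m : ℕ):ℝ) ≤ θ * ((l*m:ℕ):ℝ) :=
        le_mul_of_one_le_left (by positivity) hθ
      have hb := Nat.le_ceil (θ * ((l*m:ℕ):ℝ))
      exact_mod_cast ha.trans hb
    have httu : (⌈θ * ((l * m : ℕ) : ℝ)⌉₊ : ℝ) ≤ θ * ((l*m:ℕ):ℝ) + 1 :=
      le_of_lt (Nat.ceil_lt_add_one (by positivity))
    have hmtt : m ≤ ⌈θ * ((l * m : ℕ) : ℝ)⌉₊ :=
      le_trans (Nat.le_mul_of_pos_left m hl0) httl
    constructor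
    · -- lower bound
      intro i hi
      rw [hSc]
      obtain ⟨b, hbT, hib⟩ := Finset.mem_biUnion.mp hi
      have hsub : blobF m b ⊆ (T.biUnion (blobF m)).filter
          (fun s => i ∈ topSet (m^2) π s ⌈θ * ((l * m : ℕ) : ℝ)⌉₊) := by
        intro s hs
        rw [Finset.mem_filter]
        refine ⟨Finset.mem_biUnion.mpr ⟨b, hbT, hs⟩, ?_⟩
        rw [htop]
        rw [rank_val_in m h2 s i (by rw [mem_blobF] at hs hib; omega)]
        exact lt_of_lt_of_le (Nat.mod_lt _ hm0) hmtt
      have hle : m ≤ votes (m^2) π (T.biUnion (blobF m)) ⌈θ * ((l * m : ℕ) : ℝ)⌉₊ i := by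
        rw [votes]
        exact le_trans (le_of_eq (blobF_card hm0 b).symm) (Finset.card_le_card hsub)
      have hle' : (m:ℝ) ≤ (votes (m^2) π (T.biUnion (blobF m)) ⌈θ * ((l * m : ℕ) : ℝ)⌉₊ i : ℝ) := by
        exact_mod_cast hle
      have heq : (1/(l:ℝ)) * ((l*m:ℕ):ℝ) = (m:ℝ) := by push_cast; field_simp
      linarith [heq, hle']
    · -- upper bound
      intro j hj
      rw [hSc]
      have hjb : ∀ b : Fin m, b ∈ T → (j:ℕ)/m ≠ (b:ℕ) := by
        intro b hb heq
        exact hj (Finset.mem_biUnion.mpr ⟨b, hb, mem_blobF.mpr heq⟩)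
      set tt := ⌈θ * ((l * m : ℕ) : ℝ)⌉₊ with htt
      -- per-blob bound
      have hblob : ∀ b ∈ T, ((blobF m b).filter
          (fun s => j ∈ topSet (m^2) π s tt)).card ≤ (tt - m)/m + 2 := by
        intro b hb
        set N := m^2 - m with hN
        set y := ((j:ℕ) + (m^2 - (b:ℕ)*m)) % m^2 with hy
        refine le_trans (Finset.card_le_card_of_injOn (fun s => (s:ℕ) % m) ?_ ?_)
          (aux_blob_count m N tt y h2 (msq_sub_eq h2))
        · intro s hs
          rw [Finset.mem_coe, Finset.mem_filter] at hs
          obtain ⟨hs1, hs2⟩ := hs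
          rw [mem_blobF] at hs1
          rw [htop] at hs2
          have hout := rank_val_out m h2 s j (by rw [hs1]; exact hjb b hb)
          rw [hs1] at hout
          simp only [Finset.mem_coe, Finset.mem_filter, Finset.mem_range]
          refine ⟨Nat.mod_lt _ hm0, ?_⟩
          rw [hout.2] at hs2
          rw [← hy, ← hN] at hs2
          omega
        · intro s hs s' hs' heq
          simp only [Finset.coe_filter, Set.mem_setOf_eq] at hs hs'
          rw [mem_blobF] at hs hs'
          simp only at heq
          have d1 := Nat.div_add_mod (s:ℕ) m
          have d2 := Nat.div_add_mod (s':ℕ) m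
          rw [hs.1] at d1
          rw [hs'.1] at d2
          exact Fin.ext (by rw [← d1, ← d2, heq])
      have hsum : votes (m^2) π (T.biUnion (blobF m)) tt j ≤ l * ((tt - m)/m + 2) := by
        rw [votes, Finset.filter_biUnion]
        calc (T.biUnion fun b => (blobF m b).filter
            (fun s => j ∈ topSet (m^2) π s tt)).card
            ≤ ∑ b ∈ T, ((blobF m b).filter (fun s => j ∈ topSet (m^2) π s tt)).card :=
              Finset.card_biUnion_le
          _ ≤ ∑ _b ∈ T, ((tt - m)/m + 2) := Finset.sum_le_sum hblob
          _ = l * ((tt - m)/m + 2) := by rw [Finset.sum_const, smul_eq_mul, hT]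
      -- numeric conclusion
      set q := (tt - m)/m with hq
      have hqm : m * q + m ≤ tt := by
        have h6 : m * q ≤ tt - m := Nat.mul_div_le (tt - m) m
        have := Nat.sub_add_cancel hmtt
        omega
      have hvR : (votes (m^2) π (T.biUnion (blobF m)) tt j : ℝ) ≤ (l:ℝ) * ((q:ℝ) + 2) := by
        have := hsum
        exact_mod_cast this
      have hqR : (m:ℝ) * (q:ℝ) + (m:ℝ) ≤ θ * ((l:ℝ) * (m:ℝ)) + 1 := by
        have hc : ((m * q + m : ℕ) : ℝ) ≤ (tt : ℝ) := by exact_mod_cast hqm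
        push_cast at hc httu ⊢
        linarith
      have hq0 : (0:ℝ) ≤ (q:ℝ) := by positivity
      have hgoal : (votes (m^2) π (T.biUnion (blobF m)) tt j : ℝ) ≤ (m:ℝ)/2 := by
        nlinarith [mul_le_mul_of_nonneg_left hqR hl0R,
          mul_le_mul_of_nonneg_left hvR hm0R.le,
          mul_le_mul_of_nonneg_right hθl2 hm0R.le,
          mul_le_mul_of_nonneg_right hlR_m hm0R.le]
      have heq2 : (1/(2*(l:ℝ))) * ((l*m:ℕ):ℝ) = (m:ℝ)/2 := by
        push_cast
        field_simp
      linarith [hgoal, heq2]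
  refine ⟨π, blobF m, fun b => blobF_card hm0 b, hdisj, ?_, hcomm, ?_, ?_⟩
  · -- union is everything
    ext x
    simp only [Finset.mem_biUnion, Finset.mem_univ, true_and, iff_true]
    have hxlt : (x:ℕ)/m < m := by
      rw [Nat.div_lt_iff_lt_mul hm0]
      have := x.isLt
      nlinarith [x.isLt]
    exact ⟨⟨(x:ℕ)/m, hxlt⟩, mem_blobF.mpr rfl⟩
  · -- at least choose m l communities
    have hinj : ∀ T1 T2 : Finset (Fin m),
        T1.biUnion (blobF m) = T2.biUnion (blobF m) → T1 = T2 := by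
      have hsub : ∀ T1 T2 : Finset (Fin m),
          T1.biUnion (blobF m) ⊆ T2.biUnion (blobF m) → T1 ⊆ T2 := by
        intro T1 T2 hs b hb
        have hbne : (blobF m b).Nonempty := by
          rw [← Finset.card_pos, blobF_card hm0]; omega
        obtain ⟨x, hx⟩ := hbne
        obtain ⟨b', hb', hx'⟩ := Finset.mem_biUnion.mp (hs (Finset.mem_biUnion.mpr ⟨b, hb, hx⟩))
        have hbb : b = b' := by
          by_contra hne
          exact (Finset.disjoint_left.mp (hdisj b b' hne) hx) hx'
        rwa [hbb]
      intro T1 T2 he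
      exact Finset.Subset.antisymm (hsub T1 T2 he.le) (hsub T2 T1 he.ge)
    have hcard : (Finset.powersetCard l (Finset.univ : Finset (Fin m))).card ≤
        ((Finset.univ : Finset (Finset (Fin (m ^ 2)))).filter
          (fun S => IsCommunity (m ^ 2) π θ (1 / (l : ℝ)) (1 / (2 * (l : ℝ))) S)).card := by
      apply Finset.card_le_card_of_injOn (fun T => T.biUnion (blobF m))
      · intro T hT
        rw [Finset.mem_coe, Finset.mem_powersetCard] at hT
        simp only [Finset.mem_coe, Finset.mem_filter, Finset.mem_univ, true_and]
        exact hcomm T hT.2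
      · intro a _ b _ h
        exact hinj a b h
    rw [Finset.card_powersetCard, Finset.card_univ, Fintype.card_fin] at hcard
    exact_mod_cast hcard
  · -- n^{l/4} ≤ choose m l
    have e1 : ((m^2 : ℕ):ℝ) ^ ((l:ℝ)/4) = Real.sqrt m ^ l := by
      rw [show ((m^2:ℕ):ℝ) = (m:ℝ)^(2:ℕ) by push_cast; ring,
        ← Real.rpow_natCast (m:ℝ) 2, ← Real.rpow_mul hm0R.le,
        show ((2:ℕ):ℝ) * ((l:ℝ)/4) = (1/2) * (l:ℝ) by push_cast; ring,
        Real.rpow_mul hm0R.le, ← Real.sqrt_eq_rpow, Real.rpow_natCast]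
    rw [e1]
    have e2 : Real.sqrt m * l ≤ ((m + 1 - l : ℕ):ℝ) := by
      have hc : ((m + 1 - l : ℕ):ℝ) = (m:ℝ) + 1 - (l:ℝ) := by
        rw [Nat.cast_sub (by omega)]
        push_cast
        ring
      rw [hc]
      nlinarith [mul_le_mul_of_nonneg_left h2l hsqm0]
    have key_nat : (m + 1 - l)^l ≤ l^l * m.choose l :=
      (Nat.pow_sub_le_descFactorial m l).trans (by
        rw [Nat.descFactorial_eq_factorial_mul_choose]
        exact Nat.mul_le_mul_right _ (Nat.factorial_le_pow l))
    have e3 : Real.sqrt m ^ l * (l:ℝ)^l ≤ (m.choose l : ℝ) * (l:ℝ)^l := by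
      calc Real.sqrt m ^ l * (l:ℝ)^l = (Real.sqrt m * l)^l := (mul_pow _ _ _).symm
        _ ≤ ((m + 1 - l : ℕ):ℝ)^l := pow_le_pow_left₀ (by positivity) e2 l
        _ = (((m + 1 - l)^l : ℕ):ℝ) := by push_cast; ring
        _ ≤ ((l^l * m.choose l : ℕ):ℝ) := by exact_mod_cast key_nat
        _ = (m.choose l : ℝ) * (l:ℝ)^l := by push_cast; ring
    exact le_of_mul_le_mul_right e3 (by positivity)
end

section
/- Let S be a (θ,α,β)-self-determined community of size t with α > 1/2. For v ∈ S let O_S(v) = π_v(1:⌈θt⌉) ∩ S and I_S(v) = {u ∈ S : v ∈ π_u(1:⌈θt⌉)}. Let T = {v ∈ S : |O_S(v)| ≥ t/2}. Then |T| ≥ (2α − 1)t, and for every v ∈ T and every u ∈ S one has |O_S(v) ∩ I_S(u)| ≥ (α − 1/2)·t. -/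
open Finset

/-- `O_S(v)`: the elements of `S` that `v` votes for (w.r.t. community size `t`). -/
def outSet (n : ℕ) (π : Fin n → Equiv.Perm (Fin n)) (S : Finset (Fin n)) (T : ℕ)
    (v : Fin n) : Finset (Fin n) :=
  topSet n π v T ∩ S

/-- `I_S(v)`: the elements of `S` that vote for `v` (w.r.t. community size `t`). -/
def inSet (n : ℕ) (π : Fin n → Equiv.Perm (Fin n)) (S : Finset (Fin n)) (T : ℕ)
    (v : Fin n) : Finset (Fin n) :=
  S.filter (fun u => v ∈ topSet n π u T)

open scoped Classical in
theorem stmt_9 (n : ℕ) (π : Fin n → Equiv.Perm (Fin n)) (θ α β : ℝ)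
    (hθ : 1 ≤ θ) (hβ : 0 ≤ β) (hβα : β < α) (hα : α ≤ 1) (hα2 : 1 / 2 < α)
    (S : Finset (Fin n)) (t : ℕ) (ht : t = S.card)
    (hS : IsCommunity n π θ α β S)
    (Tset : Finset (Fin n))
    (hTset : Tset = S.filter (fun v =>
      (t : ℝ) / 2 ≤ ((outSet n π S ⌈θ * (t : ℝ)⌉₊ v).card : ℝ))) :
    (2 * α - 1) * t ≤ (Tset.card : ℝ) ∧
    ∀ v ∈ Tset, ∀ u ∈ S,
      (α - 1 / 2) * t ≤
        (((outSet n π S ⌈θ * (t : ℝ)⌉₊ v ∩ inSet n π S ⌈θ * (t : ℝ)⌉₊ u)).card : ℝ) := by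
  classical
  subst ht
  subst hTset
  set N := ⌈θ * (S.card : ℝ)⌉₊ with hN
  obtain ⟨h1, h2⟩ := hS
  set P : Fin n → Prop := fun v =>
    ((S.card : ℝ)) / 2 ≤ ((outSet n π S N v).card : ℝ) with hP
  -- double counting
  have e1 : ∀ v : Fin n, (outSet n π S N v).card
      = ∑ i ∈ S, if i ∈ topSet n π v N then 1 else 0 := by
    intro v
    rw [outSet, Finset.inter_comm, ← Finset.filter_mem_eq_inter, Finset.card_filter]
  have e2 : ∀ i : Fin n, votes n π S N i
      = ∑ v ∈ S, if i ∈ topSet n π v N then 1 else 0 := by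
    intro i
    rw [votes, Finset.card_filter]
  have hsum : ∑ v ∈ S, (outSet n π S N v).card = ∑ i ∈ S, votes n π S N i := by
    simp_rw [e1, e2]
    exact Finset.sum_comm
  have key : α * S.card * S.card ≤ ∑ v ∈ S, ((outSet n π S N v).card : ℝ) := by
    have : ∑ i ∈ S, (α * S.card) ≤ ∑ i ∈ S, (votes n π S N i : ℝ) :=
      Finset.sum_le_sum (fun i hi => h1 i hi)
    have hcast : (∑ v ∈ S, ((outSet n π S N v).card : ℝ))
        = ∑ i ∈ S, (votes n π S N i : ℝ) := by
      push_cast [← Nat.cast_sum]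
      exact_mod_cast congrArg (fun x : ℕ => (x : ℝ)) hsum
    rw [hcast]
    calc α * S.card * S.card = ∑ i ∈ S, (α * S.card) := by
          rw [Finset.sum_const, nsmul_eq_mul]; ring
      _ ≤ _ := this
  have hTsub : S.filter P ⊆ S := Finset.filter_subset _ _
  have hcards : (S.filter P).card + (S.filter (fun v => ¬ P v)).card = S.card :=
    Finset.card_filter_add_card_filter_not _
  have hsplit : ∑ v ∈ S, ((outSet n π S N v).card : ℝ)
      ≤ (S.filter P).card * S.card + (S.filter (fun v => ¬ P v)).card * (S.card / 2) := by
    have b1 : ∑ v ∈ S.filter P, ((outSet n π S N v).card : ℝ)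
        ≤ (S.filter P).card * S.card := by
      calc ∑ v ∈ S.filter P, ((outSet n π S N v).card : ℝ)
          ≤ ∑ v ∈ S.filter P, (S.card : ℝ) :=
            Finset.sum_le_sum (fun v _ => by
              exact_mod_cast Finset.card_le_card (Finset.inter_subset_right))
        _ = (S.filter P).card * S.card := by rw [Finset.sum_const, nsmul_eq_mul]
    have b2 : ∑ v ∈ S.filter (fun v => ¬ P v), ((outSet n π S N v).card : ℝ)
        ≤ (S.filter (fun v => ¬ P v)).card * ((S.card : ℝ) / 2) := by
      calc ∑ v ∈ S.filter (fun v => ¬ P v), ((outSet n π S N v).card : ℝ)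
          ≤ ∑ v ∈ S.filter (fun v => ¬ P v), ((S.card : ℝ) / 2) :=
            Finset.sum_le_sum (fun v hv =>
              le_of_lt (not_le.mp (Finset.mem_filter.mp hv).2))
        _ = _ := by rw [Finset.sum_const, nsmul_eq_mul]
    rw [← Finset.sum_filter_add_sum_filter_not S P]
    exact add_le_add b1 b2
  constructor
  · rcases Nat.eq_zero_or_pos S.card with h0 | h0
    · rw [h0]
      simp
    · have ht0 : (0 : ℝ) < S.card := by exact_mod_cast h0
      have hc : ((S.filter P).card : ℝ) + ((S.filter (fun v => ¬ P v)).card : ℝ)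
          = S.card := by exact_mod_cast hcards
      nlinarith [key.trans hsplit, ht0]
  · intro v hv u hu
    have hvS : v ∈ S := (Finset.mem_filter.mp hv).1
    have hvO : ((S.card : ℝ)) / 2 ≤ ((outSet n π S N v).card : ℝ) :=
      (Finset.mem_filter.mp hv).2
    have hI : α * S.card ≤ ((inSet n π S N u).card : ℝ) := h1 u hu
    have hunion : ((outSet n π S N v ∪ inSet n π S N u).card : ℝ) ≤ S.card := by
      exact_mod_cast Finset.card_le_card (Finset.union_subset
        (Finset.inter_subset_right) (Finset.filter_subset _ _))
    have hie : ((outSet n π S N v ∩ inSet n π S N u).card : ℝ)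
        + ((outSet n π S N v ∪ inSet n π S N u).card : ℝ)
        = ((outSet n π S N v).card : ℝ) + ((inSet n π S N u).card : ℝ) := by
      exact_mod_cast Finset.card_inter_add_card_union _ _
    linarith
end

section
/- Let c ≥ 8 ln 2 and let k = ⌈2c log₂ n⌉. Form a random graph on n vertices by drawing G(n, 1/2) and planting a clique on a fixed set K of k vertices (adding all edges inside K). Then with probability at least 1 − 1/n, the set K is a (1, 3/4)-cluster of the resulting graph, i.e. every vertex of K has all of K among its neighbors (including the self-loop) and every vertex outside K has at most (3/4)k neighbors in K. -/
open Finset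
open scoped Classical

/-- The unordered pairs of distinct vertices. -/
def pairs (n : ℕ) : Finset (Sym2 (Fin n)) :=
  Finset.univ.filter (fun e => ¬ e.IsDiag)

/-- The probability of the edge set `E` under `G(n,p)`: each non-diagonal pair is an
edge independently with probability `p`. -/
noncomputable def gweight (n : ℕ) (p : ℝ) (E : Finset (Sym2 (Fin n))) : ℝ :=
  p ^ E.card * (1 - p) ^ ((pairs n).card - E.card)

/-- Adjacency in the graph with edge set `E`, where every vertex has a self-loop. -/
def Adj (n : ℕ) (E : Finset (Sym2 (Fin n))) (i j : Fin n) : Prop :=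
  i = j ∨ s(i, j) ∈ E

/-- `S` is an `(α,β)`-cluster with respect to the adjacency relation `A`
(every vertex having a self-loop). -/
def IsClusterRel (n : ℕ) (A : Fin n → Fin n → Prop) (α β : ℝ)
    (S : Finset (Fin n)) : Prop :=
  (∀ i ∈ S, α * S.card ≤ ((S.filter (fun j => A i j)).card : ℝ)) ∧
  (∀ j, j ∉ S → ((S.filter (fun i => A j i)).card : ℝ) ≤ β * S.card)

/-- `S` is a clique (with respect to adjacency including self-loops). -/
def IsClique' (n : ℕ) (E : Finset (Sym2 (Fin n))) (S : Finset (Fin n)) : Prop :=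
  ∀ i ∈ S, ∀ j ∈ S, Adj n E i j

/-- Adjacency after planting a clique on the vertex set `K` (self-loops included). -/
def AdjP (n : ℕ) (K : Finset (Fin n)) (E : Finset (Sym2 (Fin n))) (i j : Fin n) : Prop :=
  i = j ∨ (i ∈ K ∧ j ∈ K) ∨ s(i, j) ∈ E

lemma log3' : (12:ℝ)/11 ≤ Real.log 3 := by
  rw [Real.le_log_iff_exp_le (by norm_num)]
  have h11 : Real.exp (12/11) ^ (11:ℕ) ≤ 3 ^ (11:ℕ) := by
    rw [← Real.exp_nat_mul]
    have h : Real.exp ((11:ℕ) * (12/11)) = Real.exp 1 ^ (12:ℕ) := by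
      rw [← Real.exp_nat_mul]; norm_num
    rw [h]
    calc Real.exp 1 ^ (12:ℕ) ≤ 2.7182818286 ^ (12:ℕ) :=
          pow_le_pow_left₀ (Real.exp_pos 1).le Real.exp_one_lt_d9.le 12
      _ ≤ 3 ^ (11:ℕ) := by norm_num
  exact le_of_pow_le_pow_left₀ (by norm_num) (by norm_num) h11

lemma analytic' (n k : ℕ) (hn : 2 ≤ n) (hkn : 16 * Real.log n ≤ (k:ℝ)) :
    n ^ 2 * 2 ^ k ≤ 3 ^ (3 * k / 4 + 1) := by
  have hlogn : 0 < Real.log n := Real.log_pos (by exact_mod_cast hn)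
  have hR : ((n:ℝ) ^ 2 * 2 ^ k) ≤ (3:ℝ) ^ (3 * k / 4 + 1) := by
    rw [← Real.log_le_log_iff (by positivity) (by positivity),
      Real.log_mul (by positivity) (by positivity), Real.log_pow, Real.log_pow, Real.log_pow]
    have hm : (3:ℝ) * k / 4 ≤ ((3 * k / 4 + 1 : ℕ) : ℝ) := by
      have h3 : ((3 * k / 4 : ℕ) : ℝ) * 4 + 4 > 3 * k := by
        exact_mod_cast (by omega : 3 * k / 4 * 4 + 4 > 3 * k)
      push_cast
      linarith
    have hlog2 : Real.log 2 < 0.6931471808 := Real.log_two_lt_d9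
    have hprod : (3:ℝ) * k / 4 * (12/11) ≤ ((3 * k / 4 + 1 : ℕ) : ℝ) * Real.log 3 :=
      mul_le_mul hm log3' (by norm_num) (by positivity)
    have hk2 : (k:ℝ) * Real.log 2 ≤ (k:ℝ) * 0.6931471808 :=
      mul_le_mul_of_nonneg_left hlog2.le (by positivity)
    push_cast
    push_cast at hprod
    nlinarith [hkn, hlogn]
  exact_mod_cast hR

lemma tail_bound (k m : ℕ) : 3 ^ m * ∑ i ∈ Icc m k, k.choose i ≤ 4 ^ k := by
  calc 3 ^ m * ∑ i ∈ Icc m k, k.choose i = ∑ i ∈ Icc m k, 3 ^ m * k.choose i := by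
        rw [mul_sum]
    _ ≤ ∑ i ∈ Icc m k, 3 ^ i * k.choose i := by
        apply sum_le_sum
        intro i hi
        exact Nat.mul_le_mul_right _ (Nat.pow_le_pow_right (by norm_num) (mem_Icc.mp hi).1)
    _ ≤ ∑ i ∈ range (k+1), 3 ^ i * k.choose i := by
        apply sum_le_sum_of_subset
        intro i hi
        simp only [mem_Icc, mem_range] at *
        omega
    _ = 4 ^ k := by
        have := add_pow (3:ℕ) 1 k
        simp only [one_pow, mul_one] at this
        rw [show (4:ℕ) = 3 + 1 by norm_num, this]; norm_num

lemma count_bound {α : Type*} [DecidableEq α] (T : Finset α) (m : ℕ) :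
    (T.powerset.filter (fun A => m ≤ A.card)).card ≤ ∑ i ∈ Icc m T.card, T.card.choose i := by
  calc (T.powerset.filter (fun A => m ≤ A.card)).card
      ≤ ((Icc m T.card).biUnion (fun i => T.powersetCard i)).card := by
        apply card_le_card
        intro A hA
        simp only [mem_filter, mem_powerset, mem_biUnion, mem_Icc, mem_powersetCard] at *
        exact ⟨A.card, ⟨hA.2, card_le_card hA.1⟩, hA.1, rfl⟩
    _ ≤ ∑ i ∈ Icc m T.card, (T.powersetCard i).card := card_biUnion_le
    _ = ∑ i ∈ Icc m T.card, T.card.choose i := by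
        simp [card_powersetCard]

lemma split_bound {α : Type*} [DecidableEq α] (P T : Finset α) (hT : T ⊆ P) (m : ℕ) :
    (P.powerset.filter (fun E => m ≤ (E ∩ T).card)).card ≤
      (T.powerset.filter (fun A => m ≤ A.card)).card * 2 ^ (P.card - T.card) := by
  have key : (P.powerset.filter (fun E => m ≤ (E ∩ T).card)).card ≤
      ((T.powerset.filter (fun A => m ≤ A.card)) ×ˢ (P \ T).powerset).card := by
    apply card_le_card_of_injOn (fun E => (E ∩ T, E \ T))
    · intro E hE
      simp only [mem_coe, mem_filter, mem_powerset, mem_product] at *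
      exact ⟨⟨inter_subset_right, hE.2⟩, sdiff_subset_sdiff hE.1 le_rfl⟩
    · intro E1 _ E2 _ h
      simp only [Prod.mk.injEq] at h
      ext x
      by_cases hx : x ∈ T
      · constructor <;> intro hxx
        · have : x ∈ E1 ∩ T := mem_inter.mpr ⟨hxx, hx⟩
          rw [h.1] at this; exact (mem_inter.mp this).1
        · have : x ∈ E2 ∩ T := mem_inter.mpr ⟨hxx, hx⟩
          rw [← h.1] at this; exact (mem_inter.mp this).1
      · constructor <;> intro hxx
        · have : x ∈ E1 \ T := mem_sdiff.mpr ⟨hxx, hx⟩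
          rw [h.2] at this; exact (mem_sdiff.mp this).1
        · have : x ∈ E2 \ T := mem_sdiff.mpr ⟨hxx, hx⟩
          rw [← h.2] at this; exact (mem_sdiff.mp this).1
  rw [card_product, card_powerset, card_sdiff_of_subset hT] at key
  exact key

theorem stmt_15 (c : ℝ) (hc : 8 * Real.log 2 ≤ c) (n : ℕ) (k : ℕ)
    (hk : k = ⌈2 * c * Real.logb 2 n⌉₊)
    (K : Finset (Fin n)) (hK : K.card = k) :
    1 - 1 / (n : ℝ) ≤
      ∑ E ∈ (pairs n).powerset, gweight n (1 / 2) E *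
        (if IsClusterRel n (AdjP n K E) 1 (3 / 4) K then 1 else 0) := by
  set P := pairs n with hP
  set N := P.card with hN
  -- each weight equals (1/2)^N
  have hg : ∀ E ∈ P.powerset, gweight n (1/2) E = (1/2:ℝ) ^ N := by
    intro E hE
    have hcard : E.card ≤ N := card_le_card (mem_powerset.mp hE)
    unfold gweight
    rw [show (1:ℝ) - 1/2 = 1/2 by norm_num, ← pow_add, Nat.add_sub_cancel' hcard]
  set pred : Finset (Sym2 (Fin n)) → Prop := fun E => IsClusterRel n (AdjP n K E) 1 (3/4) K with hpred
  have hsum : ∑ E ∈ P.powerset, gweight n (1/2) E * (if pred E then 1 else 0)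
      = (1/2:ℝ) ^ N * ((P.powerset.filter pred).card : ℝ) := by
    rw [← Finset.sum_boole, mul_sum]
    apply sum_congr rfl
    intro E hE
    rw [hg E hE]
  rw [hsum]
  set bad := P.powerset.filter (fun E => ¬ pred E) with hbad
  have hsplit : (P.powerset.filter pred).card + bad.card = 2 ^ N := by
    rw [hbad, card_filter_add_card_filter_not, card_powerset]
  -- main bound
  obtain hn0 | hn1 | hn2 : n = 0 ∨ n = 1 ∨ 2 ≤ n := by omega
  · subst hn0
    have hpredall : ∀ E, pred E :=
      fun E => ⟨fun i _ => Fin.elim0 i, fun j _ => Fin.elim0 j⟩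
    rw [filter_true_of_mem (fun E _ => hpredall E), card_powerset]
    push_cast
    rw [← mul_pow]
    norm_num
  · subst hn1
    have h0 : (1:ℝ) - 1 / ((1:ℕ):ℝ) = 0 := by norm_num
    rw [h0]
    positivity
  · -- key : bad.card * n ≤ 2 ^ N
    have hkey : bad.card * n ≤ 2 ^ N := by
      set m := 3 * k / 4 + 1 with hm
      set tail := ∑ i ∈ Icc m k, k.choose i with htail
      set Bj : Fin n → Finset (Finset (Sym2 (Fin n))) := fun j =>
        P.powerset.filter (fun E =>
          (3:ℝ)/4 * (K.card : ℝ) < ((K.filter (fun i => AdjP n K E j i)).card : ℝ)) with hBjdef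
      have hsub : bad ⊆ (univ \ K).biUnion Bj := by
        intro E hE
        rw [hbad, mem_filter] at hE
        obtain ⟨hEP, hnp⟩ := hE
        have hfirst : ∀ i ∈ K, (1:ℝ) * K.card ≤ ((K.filter (fun j => AdjP n K E i j)).card : ℝ) := by
          intro i hi
          have hall : ∀ j ∈ K, AdjP n K E i j := fun j hj => Or.inr (Or.inl ⟨hi, hj⟩)
          rw [filter_true_of_mem hall, one_mul]
        have hnot2 : ¬ (∀ j, j ∉ K → ((K.filter (fun i => AdjP n K E j i)).card : ℝ) ≤ 3/4 * K.card) := by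
          intro h2; exact hnp ⟨hfirst, h2⟩
        push_neg at hnot2
        obtain ⟨j, hjK, hjlt⟩ := hnot2
        exact mem_biUnion.mpr ⟨j, mem_sdiff.mpr ⟨mem_univ j, hjK⟩,
          mem_filter.mpr ⟨hEP, hjlt⟩⟩
      have hinj : ∀ j : Fin n, Function.Injective (fun i : Fin n => s(j, i)) :=
        fun j a b h => Sym2.congr_right.mp h
      have hTfact : ∀ j : Fin n, j ∉ K →
          K.image (fun i => s(j, i)) ⊆ P ∧ (K.image (fun i => s(j, i))).card = k := by
        intro j hjK
        constructor
        · intro e he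
          rw [mem_image] at he
          obtain ⟨i, hiK, rfl⟩ := he
          rw [hP, pairs, mem_filter]
          refine ⟨mem_univ _, ?_⟩
          rw [Sym2.mk_isDiag_iff]
          rintro rfl; exact hjK hiK
        · rw [card_image_of_injective _ (hinj j), hK]
      have hBj : ∀ j ∈ univ \ K, (Bj j).card ≤ tail * 2 ^ (N - k) := by
        intro j hj
        have hjK : j ∉ K := (mem_sdiff.mp hj).2
        obtain ⟨hTP, hTcard⟩ := hTfact j hjK
        set T := K.image (fun i => s(j, i)) with hT
        have hsub2 : Bj j ⊆ P.powerset.filter (fun E => m ≤ (E ∩ T).card) := by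
          intro E hE
          rw [hBjdef, mem_filter] at hE
          rw [mem_filter]
          refine ⟨hE.1, ?_⟩
          obtain ⟨hEP, hlt⟩ := hE
          have hfe : K.filter (fun i => AdjP n K E j i) = K.filter (fun i => s(j, i) ∈ E) := by
            apply filter_congr
            intro i hi
            constructor
            · rintro (rfl | ⟨hjK', _⟩ | h)
              · exact absurd hi hjK
              · exact absurd hjK' hjK
              · exact h
            · exact fun h => Or.inr (Or.inr h)
          have hcardeq : (E ∩ T).card = (K.filter (fun i => s(j, i) ∈ E)).card := by
            rw [inter_comm, hT, ← filter_mem_eq_inter, filter_image,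
              card_image_of_injective _ (hinj j)]
          rw [hfe, hK] at hlt
          have h34 : 3 * k < 4 * (K.filter (fun i => s(j, i) ∈ E)).card := by
            have : (3:ℝ) * k < 4 * ((K.filter (fun i => s(j, i) ∈ E)).card : ℝ) := by
              linarith
            exact_mod_cast this
          omega
        calc (Bj j).card ≤ (P.powerset.filter (fun E => m ≤ (E ∩ T).card)).card :=
              card_le_card hsub2
          _ ≤ (T.powerset.filter (fun A => m ≤ A.card)).card * 2 ^ (N - k) := by
              have := split_bound P T hTP m
              rw [hTcard] at this
              exact this
          _ ≤ tail * 2 ^ (N - k) := by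
              apply Nat.mul_le_mul_right
              have := count_bound T m
              rw [hTcard] at this
              exact this
      have hbadcard : bad.card ≤ n * (tail * 2 ^ (N - k)) := by
        calc bad.card ≤ ((univ \ K).biUnion Bj).card := card_le_card hsub
          _ ≤ ∑ j ∈ univ \ K, (Bj j).card := card_biUnion_le
          _ ≤ ∑ j ∈ univ \ K, tail * 2 ^ (N - k) := sum_le_sum hBj
          _ = (univ \ K).card * (tail * 2 ^ (N - k)) := by rw [sum_const, smul_eq_mul]
          _ ≤ n * (tail * 2 ^ (N - k)) := by
              apply Nat.mul_le_mul_right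
              calc (univ \ K).card ≤ (univ : Finset (Fin n)).card := card_le_card (sdiff_subset)
                _ = n := by rw [card_univ, Fintype.card_fin]
      rcases (univ \ K).eq_empty_or_nonempty with he | ⟨j0, hj0⟩
      · rw [he] at hsub
        simp only [biUnion_empty, subset_empty] at hsub
        rw [hsub, card_empty, zero_mul]
        positivity
      · have hj0K : j0 ∉ K := (mem_sdiff.mp hj0).2
        obtain ⟨hTP0, hTcard0⟩ := hTfact j0 hj0K
        have hkN : k ≤ N := by
          rw [← hTcard0]
          exact card_le_card hTP0
        have hkn : 16 * Real.log n ≤ (k : ℝ) := by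
          have hlog2pos : (0:ℝ) < Real.log 2 := Real.log_pos one_lt_two
          have hlogb : (0:ℝ) ≤ Real.logb 2 n :=
            Real.logb_nonneg one_lt_two (by exact_mod_cast Nat.one_le_of_lt hn2)
          have h1 : 16 * Real.log n = 16 * Real.log 2 * Real.logb 2 n := by
            rw [Real.logb]
            field_simp
          have h2 : 16 * Real.log 2 * Real.logb 2 n ≤ 2 * c * Real.logb 2 n := by
            apply mul_le_mul_of_nonneg_right _ hlogb
            linarith
          calc 16 * Real.log n ≤ 2 * c * Real.logb 2 n := by rw [h1]; exact h2
            _ ≤ (⌈2 * c * Real.logb 2 (n:ℝ)⌉₊ : ℝ) := Nat.le_ceil _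
            _ = (k : ℝ) := by rw [hk]
        have h3m := tail_bound k m
        have han := analytic' n k hn2 hkn
        have hmul : 3 ^ m * (n ^ 2 * tail) ≤ 3 ^ m * 2 ^ k := by
          calc 3 ^ m * (n ^ 2 * tail) = n ^ 2 * (3 ^ m * tail) := by ring
            _ ≤ n ^ 2 * 4 ^ k := Nat.mul_le_mul_left _ h3m
            _ = (n ^ 2 * 2 ^ k) * 2 ^ k := by
                rw [show (4:ℕ) = 2 * 2 by norm_num, mul_pow]; ring
            _ ≤ 3 ^ m * 2 ^ k := Nat.mul_le_mul_right _ han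
        have hn2tail : n ^ 2 * tail ≤ 2 ^ k :=
          Nat.le_of_mul_le_mul_left hmul (by positivity)
        calc bad.card * n ≤ (n * (tail * 2 ^ (N - k))) * n :=
              Nat.mul_le_mul_right _ hbadcard
          _ = (n ^ 2 * tail) * 2 ^ (N - k) := by ring
          _ ≤ 2 ^ k * 2 ^ (N - k) := Nat.mul_le_mul_right _ hn2tail
          _ = 2 ^ N := by rw [← pow_add, Nat.add_sub_cancel' hkN]
    -- final algebra
    have hb2N : bad.card ≤ 2 ^ N := le_trans (card_le_card (filter_subset _ _)) (by rw [card_powerset])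
    have hgood : ((P.powerset.filter pred).card : ℝ) = 2 ^ N - bad.card := by
      have := hsplit
      have : ((P.powerset.filter pred).card : ℝ) + bad.card = 2 ^ N := by exact_mod_cast congrArg (Nat.cast : ℕ → ℝ) this
      linarith
    rw [hgood]
    have hnpos : (0:ℝ) < n := by positivity
    have h2N : (0:ℝ) < 2 ^ N := by positivity
    have hfrac : (bad.card : ℝ) / 2 ^ N ≤ 1 / n := by
      rw [div_le_div_iff₀ h2N hnpos, one_mul]
      exact_mod_cast hkey
    have heq : (1/2:ℝ) ^ N * ((2:ℝ) ^ N - bad.card) = 1 - (bad.card : ℝ) / 2 ^ N := by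
      rw [div_pow, one_pow, div_mul_eq_mul_div, mul_comm]
      rw [eq_sub_iff_add_eq, ← add_div, mul_one, sub_add_cancel, div_self h2N.ne']
    rw [heq]
    linarith
end

section
/- Let γ = 0.1 and ε = 0.01, and let k = ⌈(1/ε²) ln n⌉. Form a random graph on n vertices by drawing G(n, 1 − γ − ε) and planting a clique on a fixed set K of k vertices (adding all edges inside K). Then for all sufficiently large n, with probability at least 1 − 1/n, the set K is a (1, 1 − γ)-cluster of the resulting graph, i.e. every vertex outside K has at most (1 − γ)k neighbors in K. -/
open Finset
open scoped Classical

lemma binom_sum {X : Type*} [DecidableEq X] (p q : ℝ) (s : Finset X) :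
    ∑ E ∈ s.powerset, p ^ E.card * q ^ (s.card - E.card) = (p + q) ^ s.card := by
  rw [Finset.sum_powerset, add_pow]
  refine Finset.sum_congr rfl fun j hj => ?_
  have h : ∀ E ∈ Finset.powersetCard j s,
      p ^ E.card * q ^ (s.card - E.card) = p ^ j * q ^ (s.card - j) := by
    intro E hE; rw [(Finset.mem_powersetCard.1 hE).2]
  rw [Finset.sum_congr rfl h, Finset.sum_const, Finset.card_powersetCard, nsmul_eq_mul]
  ring

lemma restrict_sum {X : Type*} [DecidableEq X] (p q : ℝ) (hpq : p + q = 1)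
    (s T : Finset X) (hT : T ⊆ s) (f : Finset X → ℝ) :
    ∑ E ∈ s.powerset, p ^ E.card * q ^ (s.card - E.card) * f (E ∩ T)
      = ∑ A ∈ T.powerset, p ^ A.card * q ^ (T.card - A.card) * f A := by
  have hcard : (s \ T).card + T.card = s.card := Finset.card_sdiff_add_card_eq_card hT
  have h1 : ∑ E ∈ s.powerset, p ^ E.card * q ^ (s.card - E.card) * f (E ∩ T)
      = ∑ P ∈ T.powerset ×ˢ (s \ T).powerset,
          (p ^ P.1.card * q ^ (T.card - P.1.card) * f P.1) *
          (p ^ P.2.card * q ^ ((s \ T).card - P.2.card)) := by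
    refine Finset.sum_nbij' (fun E => (E ∩ T, E \ T)) (fun P => P.1 ∪ P.2) ?_ ?_ ?_ ?_ ?_
    · intro E hE
      simp only [Finset.mem_product, Finset.mem_powerset] at *
      exact ⟨Finset.inter_subset_right, Finset.sdiff_subset_sdiff hE (le_refl T)⟩
    · intro P hP
      simp only [Finset.mem_product, Finset.mem_powerset] at *
      exact Finset.union_subset (hP.1.trans hT) (hP.2.trans (Finset.sdiff_subset))
    · intro E hE; ext x
      simp only [Finset.mem_union, Finset.mem_inter, Finset.mem_sdiff]
      tauto
    · intro P hP
      simp only [Finset.mem_product, Finset.mem_powerset] at hP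
      have h2 : P.2 ∩ T = ∅ := by
        rw [Finset.eq_empty_iff_forall_notMem]
        intro x hx
        exact (Finset.mem_sdiff.1 (hP.2 (Finset.mem_inter.1 hx).1)).2 (Finset.mem_inter.1 hx).2
      have : (P.1 ∪ P.2) ∩ T = P.1 := by
        rw [Finset.union_inter_distrib_right, Finset.inter_eq_left.2 hP.1, h2, Finset.union_empty]
      have h3 : (P.1 ∪ P.2) \ T = P.2 := by
        rw [Finset.union_sdiff_distrib, Finset.sdiff_eq_empty_iff_subset.2 hP.1,
          Finset.empty_union, Finset.sdiff_eq_self_iff_disjoint.2]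
        exact Finset.disjoint_left.2 fun x hx hxT => (Finset.mem_sdiff.1 (hP.2 hx)).2 hxT
      exact Prod.ext this h3
    · intro E hE
      simp only [Finset.mem_powerset] at hE
      have hc : (E ∩ T).card + (E \ T).card = E.card := Finset.card_inter_add_card_sdiff E T
      have hc1 : (E ∩ T).card ≤ T.card := Finset.card_le_card Finset.inter_subset_right
      have hc2 : (E \ T).card ≤ (s \ T).card :=
        Finset.card_le_card (Finset.sdiff_subset_sdiff hE (le_refl T))
      have hEs : E.card ≤ s.card := Finset.card_le_card hE
      have hexp : s.card - E.card = (T.card - (E ∩ T).card) + ((s \ T).card - (E \ T).card) := by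
        omega
      simp only
      rw [hexp, ← hc, pow_add, pow_add]
      ring
  rw [h1, Finset.sum_product]
  have : ∀ A ∈ T.powerset,
      (∑ B ∈ (s \ T).powerset, (p ^ A.card * q ^ (T.card - A.card) * f A) *
        (p ^ B.card * q ^ ((s \ T).card - B.card)))
      = p ^ A.card * q ^ (T.card - A.card) * f A := by
    intro A hA
    rw [← Finset.mul_sum, binom_sum, hpq, one_pow, mul_one]
  exact Finset.sum_congr rfl this

lemma tail_bound_s17 {X : Type*} [DecidableEq X] (T : Finset X) (b : ℕ)
    (p q : ℝ) (hp : 0 ≤ p) (hq : 0 ≤ q) :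
    ∑ A ∈ T.powerset, p ^ A.card * q ^ (T.card - A.card) * (if b ≤ A.card then (1:ℝ) else 0)
      ≤ (1.1 * p + q) ^ T.card / 1.1 ^ b := by
  rw [div_eq_mul_inv, ← binom_sum (1.1 * p) q T, Finset.sum_mul]
  refine Finset.sum_le_sum fun A hA => ?_
  rw [mul_pow]
  by_cases h : b ≤ A.card
  · rw [if_pos h, mul_one]
    have h1 : (1.1:ℝ) ^ b ≤ 1.1 ^ A.card := pow_le_pow_right₀ (by norm_num) h
    have hpq : (0:ℝ) ≤ p ^ A.card * q ^ (T.card - A.card) := by positivity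
    calc p ^ A.card * q ^ (T.card - A.card)
        = (p ^ A.card * q ^ (T.card - A.card)) * ((1.1:ℝ) ^ b * ((1.1:ℝ) ^ b)⁻¹) := by
          rw [mul_inv_cancel₀ (by positivity), mul_one]
      _ ≤ (p ^ A.card * q ^ (T.card - A.card)) * ((1.1:ℝ) ^ A.card * ((1.1:ℝ) ^ b)⁻¹) := by
          refine mul_le_mul_of_nonneg_left ?_ hpq
          exact mul_le_mul_of_nonneg_right h1 (by positivity)
      _ = (1.1:ℝ) ^ A.card * p ^ A.card * q ^ (T.card - A.card) * ((1.1:ℝ) ^ b)⁻¹ := by ring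
  · rw [if_neg h, mul_zero]
    positivity

lemma numeric (n k b : ℕ) (hn : 1 ≤ n) (hk : (10000:ℝ) * Real.log n ≤ k)
    (hb : (0.9:ℝ) * k < b) :
    (1.089:ℝ) ^ k / 1.1 ^ b ≤ 1 / (n:ℝ) ^ 2 := by
  have hnpos : (0:ℝ) < n := by exact_mod_cast hn
  have hn1 : (1:ℝ) ≤ n := by exact_mod_cast hn
  have hexp : Real.exp 0.004 ≤ 1.005 := by
    have h := Real.add_one_le_exp (-0.004 : ℝ)
    have hmul : Real.exp 0.004 * Real.exp (-0.004) = 1 := by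
      rw [← Real.exp_add]; norm_num
    nlinarith [Real.exp_pos (0.004:ℝ), Real.exp_pos (-0.004:ℝ)]
  have h20 : (n:ℝ) ^ 20 ≤ 1.005 ^ k := by
    have h1 : (n:ℝ) ^ 20 ≤ (n:ℝ) ^ 40 := pow_le_pow_right₀ hn1 (by norm_num)
    have h2 : Real.exp (40 * Real.log n) = (n:ℝ) ^ 40 := by
      rw [show (40:ℝ) * Real.log n = ((40:ℕ):ℝ) * Real.log n by norm_num,
        Real.exp_nat_mul, Real.exp_log hnpos]
    have h3 : Real.exp (40 * Real.log n) ≤ Real.exp (0.004 * k) :=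
      Real.exp_le_exp.2 (by nlinarith)
    have h4 : Real.exp (0.004 * k) = Real.exp 0.004 ^ k := by
      rw [show (0.004:ℝ) * k = ((k:ℕ):ℝ) * 0.004 by ring, Real.exp_nat_mul]
    calc (n:ℝ) ^ 20 ≤ (n:ℝ) ^ 40 := h1
      _ = Real.exp (40 * Real.log n) := h2.symm
      _ ≤ Real.exp (0.004 * k) := h3
      _ = Real.exp 0.004 ^ k := h4
      _ ≤ 1.005 ^ k := pow_le_pow_left₀ (Real.exp_pos _).le hexp k
  have hbk : 9 * k + 1 ≤ 10 * b := by
    have : (9 * k : ℝ) < 10 * b := by nlinarith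
    have : 9 * k < 10 * b := by exact_mod_cast this
    omega
  have hkey : (1.089:ℝ) ^ (10 * k) * (n:ℝ) ^ 20 ≤ (1.1:ℝ) ^ (9 * k) := by
    have hr : (1.005:ℝ) * (1.089:ℝ) ^ 10 ≤ (1.1:ℝ) ^ 9 := by norm_num
    calc (1.089:ℝ) ^ (10 * k) * (n:ℝ) ^ 20
        = ((1.089:ℝ) ^ 10) ^ k * (n:ℝ) ^ 20 := by rw [pow_mul]
      _ ≤ ((1.089:ℝ) ^ 10) ^ k * 1.005 ^ k := by
          exact mul_le_mul_of_nonneg_left h20 (by positivity)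
      _ = ((1.005:ℝ) * (1.089:ℝ) ^ 10) ^ k := by rw [← mul_pow]; ring_nf
      _ ≤ ((1.1:ℝ) ^ 9) ^ k := pow_le_pow_left₀ (by positivity) hr k
      _ = (1.1:ℝ) ^ (9 * k) := by rw [pow_mul]
  rw [div_le_div_iff₀ (by positivity) (by positivity), one_mul]
  apply le_of_pow_le_pow_left₀ (n := 10) (by norm_num) (by positivity)
  calc ((1.089:ℝ) ^ k * (n:ℝ) ^ 2) ^ 10
      = (1.089:ℝ) ^ (10 * k) * (n:ℝ) ^ 20 := by
        rw [mul_pow, ← pow_mul, ← pow_mul]; ring_nf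
    _ ≤ (1.1:ℝ) ^ (9 * k) := hkey
    _ ≤ (1.1:ℝ) ^ (10 * b) := pow_le_pow_right₀ (by norm_num) (by omega)
    _ = ((1.1:ℝ) ^ b) ^ 10 := by rw [← pow_mul]; ring_nf

theorem stmt_17 (γ ε : ℝ) (hγ : γ = 0.1) (hε : ε = 0.01) :
    ∃ n₀ : ℕ, ∀ n : ℕ, n₀ ≤ n →
      ∀ K : Finset (Fin n), K.card = ⌈(1 / ε ^ 2) * Real.log n⌉₊ →
        1 - 1 / (n : ℝ) ≤
          ∑ E ∈ (pairs n).powerset, gweight n (1 - γ - ε) E *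
            (if IsClusterRel n (AdjP n K E) 1 (1 - γ) K then 1 else 0) := by
  subst hγ hε
  refine ⟨1, fun n hn K hK => ?_⟩
  have hn0 : (0:ℝ) < n := by exact_mod_cast hn
  set k := K.card with hkdef
  have hklog : (10000:ℝ) * Real.log n ≤ k := by
    rw [hK]
    calc (10000:ℝ) * Real.log n = (1 / 0.01 ^ 2) * Real.log n := by norm_num
      _ ≤ ⌈(1 / 0.01 ^ 2) * Real.log n⌉₊ := Nat.le_ceil _
  set b := ⌊(0.9:ℝ) * k⌋₊ + 1 with hbdef
  have hbgt : (0.9:ℝ) * k < b := by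
    have h := Nat.lt_floor_add_one ((0.9:ℝ) * k)
    rw [hbdef]; push_cast; linarith
  have hw : ∀ E : Finset (Sym2 (Fin n)), gweight n (1 - 0.1 - 0.01) E
      = (0.89:ℝ) ^ E.card * (0.11:ℝ) ^ ((pairs n).card - E.card) := by
    intro E; simp only [gweight]; norm_num
  set T : Fin n → Finset (Sym2 (Fin n)) := fun j => K.image (fun i => s(j, i)) with hT
  have hinj : ∀ j ∉ K, Set.InjOn (fun i => s(j, i)) K := by
    intro j hj a ha c hc hac
    simp only [Sym2.eq_iff] at hac
    rcases hac with ⟨-, h⟩ | ⟨h1, h2⟩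
    · exact h
    · exact absurd (show j ∈ K by rw [h1]; exact hc) hj
  have hTcard : ∀ j ∉ K, (T j).card = k := by
    intro j hj
    rw [hT]
    exact Finset.card_image_of_injOn (hinj j hj)
  have hTsub : ∀ j ∉ K, T j ⊆ pairs n := by
    intro j hj e he
    simp only [hT, Finset.mem_image] at he
    obtain ⟨i, hiK, rfl⟩ := he
    simp only [pairs, Finset.mem_filter, Finset.mem_univ, true_and, Sym2.mk_isDiag_iff]
    exact fun h => hj (h ▸ hiK)
  have hcnt : ∀ j ∉ K, ∀ E : Finset (Sym2 (Fin n)),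
      (K.filter (fun i => AdjP n K E j i)).card = (E ∩ T j).card := by
    intro j hj E
    have h1 : K.filter (fun i => AdjP n K E j i) = K.filter (fun i => s(j, i) ∈ E) := by
      apply Finset.filter_congr
      intro i hi
      simp only [AdjP]
      constructor
      · rintro (rfl | ⟨hjK, -⟩ | h)
        · exact absurd hi hj
        · exact absurd hjK hj
        · exact h
      · exact fun h => Or.inr (Or.inr h)
    have himg : (K.filter (fun i => s(j, i) ∈ E)).image (fun i => s(j, i)) = E ∩ T j := by
      ext e
      simp only [Finset.mem_image, Finset.mem_filter, Finset.mem_inter, hT]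
      constructor
      · rintro ⟨i, ⟨hiK, hiE⟩, rfl⟩
        exact ⟨hiE, i, hiK, rfl⟩
      · rintro ⟨heE, i, hiK, rfl⟩
        exact ⟨i, ⟨hiK, heE⟩, rfl⟩
    rw [h1, ← himg,
      Finset.card_image_of_injOn ((hinj j hj).mono (Finset.coe_subset.2 (Finset.filter_subset _ _)))]
  set J := Finset.univ.filter (fun j : Fin n => j ∉ K) with hJ
  have hpoint : ∀ E ∈ (pairs n).powerset,
      (1:ℝ) - ∑ j ∈ J, (if b ≤ (E ∩ T j).card then (1:ℝ) else 0)
        ≤ (if IsClusterRel n (AdjP n K E) 1 (1 - 0.1) K then (1:ℝ) else 0) := by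
    intro E _
    by_cases hc : IsClusterRel n (AdjP n K E) 1 (1 - 0.1) K
    · rw [if_pos hc]
      have h0 : (0:ℝ) ≤ ∑ j ∈ J, (if b ≤ (E ∩ T j).card then (1:ℝ) else 0) :=
        Finset.sum_nonneg fun j _ => by split <;> norm_num
      linarith
    · rw [if_neg hc]
      have hcomp1 : ∀ i ∈ K, (1:ℝ) * K.card ≤ ((K.filter (fun j => AdjP n K E i j)).card : ℝ) := by
        intro i hi
        have hfil : K.filter (fun j => AdjP n K E i j) = K := by
          apply Finset.filter_true_of_mem
          intro j hj
          exact Or.inr (Or.inl ⟨hi, hj⟩)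
        rw [hfil, one_mul]
      have hnB : ¬(∀ j, j ∉ K → ((K.filter (fun i => AdjP n K E j i)).card : ℝ)
          ≤ (1 - 0.1) * K.card) := fun hB => hc ⟨hcomp1, hB⟩
      push_neg at hnB
      obtain ⟨j, hjK, hjbad⟩ := hnB
      have hji : j ∈ J := by simp [hJ, hjK]
      have hind : (if b ≤ (E ∩ T j).card then (1:ℝ) else 0) = 1 := by
        rw [if_pos]
        rw [← hcnt j hjK E]
        have h09 : (0.9:ℝ) * k < ((K.filter (fun i => AdjP n K E j i)).card : ℝ) := by
          calc (0.9:ℝ) * k = (1 - 0.1) * K.card := by norm_num; exact hkdef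
            _ < _ := hjbad
        have hfl := (Nat.floor_lt (mul_nonneg (by norm_num) (Nat.cast_nonneg k))).2 h09
        omega
      have hsum : (1:ℝ) ≤ ∑ j ∈ J, (if b ≤ (E ∩ T j).card then (1:ℝ) else 0) := by
        calc (1:ℝ) = (if b ≤ (E ∩ T j).card then (1:ℝ) else 0) := hind.symm
          _ ≤ _ := Finset.single_le_sum (f := fun j => if b ≤ (E ∩ T j).card then (1:ℝ) else 0) (fun i _ => by split <;> norm_num) hji
      linarith
  have hsum1 : ∑ E ∈ (pairs n).powerset, gweight n (1 - 0.1 - 0.01) E = 1 := by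
    calc ∑ E ∈ (pairs n).powerset, gweight n (1 - 0.1 - 0.01) E
        = ∑ E ∈ (pairs n).powerset,
            (0.89:ℝ) ^ E.card * (0.11:ℝ) ^ ((pairs n).card - E.card) :=
          Finset.sum_congr rfl fun E _ => hw E
      _ = ((0.89:ℝ) + 0.11) ^ (pairs n).card := binom_sum _ _ _
      _ = 1 := by norm_num
  have hPj : ∀ j ∈ J, ∑ E ∈ (pairs n).powerset, gweight n (1 - 0.1 - 0.01) E *
      (if b ≤ (E ∩ T j).card then (1:ℝ) else 0) ≤ 1 / (n:ℝ) ^ 2 := by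
    intro j hj
    have hjK : j ∉ K := by simpa [hJ] using hj
    calc ∑ E ∈ (pairs n).powerset, gweight n (1 - 0.1 - 0.01) E *
          (if b ≤ (E ∩ T j).card then (1:ℝ) else 0)
        = ∑ E ∈ (pairs n).powerset, (0.89:ℝ) ^ E.card * (0.11:ℝ) ^ ((pairs n).card - E.card) *
            (if b ≤ (E ∩ T j).card then (1:ℝ) else 0) :=
          Finset.sum_congr rfl fun E _ => by rw [hw E]
      _ = ∑ A ∈ (T j).powerset, (0.89:ℝ) ^ A.card * (0.11:ℝ) ^ ((T j).card - A.card) *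
            (if b ≤ A.card then (1:ℝ) else 0) :=
          restrict_sum 0.89 0.11 (by norm_num) (pairs n) (T j) (hTsub j hjK)
            (fun A => if b ≤ A.card then (1:ℝ) else 0)
      _ ≤ (1.1 * 0.89 + 0.11) ^ (T j).card / 1.1 ^ b :=
          tail_bound_s17 (T j) b 0.89 0.11 (by norm_num) (by norm_num)
      _ = (1.089:ℝ) ^ k / 1.1 ^ b := by rw [hTcard j hjK]; norm_num
      _ ≤ 1 / (n:ℝ) ^ 2 := numeric n k b hn hklog hbgt
  have hJcard : (J.card : ℝ) ≤ n := by
    have h1 := Finset.card_filter_le Finset.univ (fun j : Fin n => j ∉ K)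
    have h2 : (Finset.univ : Finset (Fin n)).card = n := by simp
    rw [hJ]
    exact_mod_cast h1.trans (le_of_eq h2)
  calc 1 - 1 / (n:ℝ)
      ≤ 1 - (J.card : ℝ) * (1 / (n:ℝ) ^ 2) := by
        have h1 : (J.card:ℝ) * (1 / (n:ℝ) ^ 2) ≤ n * (1 / (n:ℝ) ^ 2) :=
          mul_le_mul_of_nonneg_right hJcard (by positivity)
        have h2 : (n:ℝ) * (1 / (n:ℝ) ^ 2) = 1 / n := by
          field_simp
        linarith
    _ ≤ 1 - ∑ j ∈ J, ∑ E ∈ (pairs n).powerset, gweight n (1 - 0.1 - 0.01) E *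
          (if b ≤ (E ∩ T j).card then (1:ℝ) else 0) := by
        have h1 := Finset.sum_le_sum hPj
        rw [Finset.sum_const, nsmul_eq_mul] at h1
        linarith
    _ = ∑ E ∈ (pairs n).powerset, gweight n (1 - 0.1 - 0.01) E *
          (1 - ∑ j ∈ J, (if b ≤ (E ∩ T j).card then (1:ℝ) else 0)) := by
        simp_rw [mul_sub, mul_one, Finset.mul_sum]
        rw [Finset.sum_sub_distrib, hsum1, Finset.sum_comm]
    _ ≤ ∑ E ∈ (pairs n).powerset, gweight n (1 - 0.1 - 0.01) E *
          (if IsClusterRel n (AdjP n K E) 1 (1 - 0.1) K then (1:ℝ) else 0) := by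
        refine Finset.sum_le_sum fun E hE => ?_
        have hwpos : 0 ≤ gweight n (1 - 0.1 - 0.01) E := by rw [hw]; positivity
        exact mul_le_mul_of_nonneg_left (hpoint E hE) hwpos
end

section
/- Let (V, A) be a weighted affinity system, let θ > 0, 0 ≤ β < α ≤ 1, 0 < ε < α, t a community size, and k = ⌈1/ε⌉. Then there exist an unweighted affinity system (V', Π) on k·|V| members, in which each member ranks only a subset of V' (members vote only for members they rank), and a map f : V' → V mapping exactly k members of V' onto each member of V, such that for every (θ,α,β) weighted self-determined community S of size t in (V, A), the set S' = f^{−1}(S), of size kt, is a (θ, α − ε, β) self-determined community in (V', Π) with f(S') = S. -/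
open Finset
open scoped Classical

/-- `a'` is the capped vote vector obtained from the affinity vector `a` with voting
budget `W`: if the total weight of `a` is at most `W` nothing is capped; otherwise the
weights strictly above some threshold value `τ` are kept, the weights at the boundary
value `τ` are scaled down by a common factor `c ∈ [0,1]`, the rest are zeroed out, and
the retained weights sum to exactly `W`. -/
def IsCappedVote (n : ℕ) (a : Fin n → ℝ) (W : ℝ) (a' : Fin n → ℝ) : Prop :=
  ((∑ j, a j) ≤ W ∧ a' = a) ∨
  (W < (∑ j, a j) ∧ ∃ τ c : ℝ, 0 ≤ τ ∧ 0 ≤ c ∧ c ≤ 1 ∧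
    (∀ j, a' j = if τ < a j then a j else if a j = τ then c * a j else 0) ∧
    (∑ j, a' j) = W)

/-- `S` is a `(θ,α,β)` weighted self-determined community of the weighted affinity
system `a`. -/
def IsWeightedCommunity (n : ℕ) (a : Fin n → Fin n → ℝ) (θ α β : ℝ)
    (S : Finset (Fin n)) : Prop :=
  ∃ cap : Fin n → Fin n → ℝ,
    (∀ s, IsCappedVote n (a s) (θ * S.card) (cap s)) ∧
    (∀ i ∈ S, α * S.card ≤ ∑ s ∈ S, cap s i) ∧
    (∀ j, j ∉ S → (∑ s ∈ S, cap s j) ≤ β * S.card)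

/-- A self-determined community in an unweighted affinity system in which each member
ranks only a subset of the members (given as a duplicate-free list, most preferred
first); a member votes for the members among the top `⌈θ|S|⌉` entries of her list. -/
def IsListCommunity (N : ℕ) (π : Fin N → List (Fin N)) (θ α β : ℝ)
    (S : Finset (Fin N)) : Prop :=
  (∀ i ∈ S, α * S.card ≤
    ((S.filter (fun s => i ∈ (π s).take ⌈θ * (S.card : ℝ)⌉₊)).card : ℝ)) ∧
  (∀ j, j ∉ S →
    ((S.filter (fun s => j ∈ (π s).take ⌈θ * (S.card : ℝ)⌉₊)).card : ℝ) ≤ β * S.card)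

lemma cappedVote_le_aux {n : ℕ} {a : Fin n → ℝ} {τ1 c1 τ2 c2 : ℝ} {b b' : Fin n → ℝ}
    (hτ1 : 0 ≤ τ1) (hc1 : 0 ≤ c1) (hc1' : c1 ≤ 1)
    (hτ2 : 0 ≤ τ2) (hc2 : 0 ≤ c2) (hc2' : c2 ≤ 1)
    (hb : ∀ j, b j = if τ1 < a j then a j else if a j = τ1 then c1 * a j else 0)
    (hb' : ∀ j, b' j = if τ2 < a j then a j else if a j = τ2 then c2 * a j else 0)
    (hlt : τ1 < τ2 ∨ (τ1 = τ2 ∧ c2 ≤ c1)) :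
    ∀ j, b' j ≤ b j := by
  intro j
  rw [hb j, hb' j]
  rcases hlt with hl | ⟨heq, hcc⟩
  · split_ifs <;> first
      | linarith
      | nlinarith [hτ1, hτ2, hc1, hc2, hc1', hc2']
  · subst heq
    split_ifs <;> first
      | linarith
      | nlinarith [hτ1, hc1, hc2, hc1', hc2', hcc]

lemma cappedVote_unique {n : ℕ} {a : Fin n → ℝ} {W : ℝ} {b b' : Fin n → ℝ}
    (h : IsCappedVote n a W b) (h' : IsCappedVote n a W b') : b = b' := by
  rcases h with ⟨hs, rfl⟩ | ⟨hs, τ1, c1, hτ1, hc1, hc1', hb, hsum⟩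
  · rcases h' with ⟨hs', rfl⟩ | ⟨hs', _⟩
    · rfl
    · linarith
  · rcases h' with ⟨hs', rfl⟩ | ⟨hs', τ2, c2, hτ2, hc2, hc2', hb', hsum'⟩
    · linarith
    · have hdir : (∀ j, b' j ≤ b j) ∨ (∀ j, b j ≤ b' j) := by
        rcases lt_trichotomy τ1 τ2 with h | h | h
        · exact Or.inl (cappedVote_le_aux hτ1 hc1 hc1' hτ2 hc2 hc2' hb hb' (Or.inl h))
        · rcases le_total c2 c1 with hc | hc
          · exact Or.inl (cappedVote_le_aux hτ1 hc1 hc1' hτ2 hc2 hc2' hb hb' (Or.inr ⟨h, hc⟩))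
          · exact Or.inr (cappedVote_le_aux hτ2 hc2 hc2' hτ1 hc1 hc1' hb' hb (Or.inr ⟨h.symm, hc⟩))
        · exact Or.inr (cappedVote_le_aux hτ2 hc2 hc2' hτ1 hc1 hc1' hb' hb (Or.inl h))
      have hsum2 : ∑ j, b j = ∑ j, b' j := by rw [hsum, hsum']
      rcases hdir with hd | hd
      · funext j
        exact ((Finset.sum_eq_sum_iff_of_le (fun i _ => hd i)).mp hsum2.symm j (mem_univ j)).symm
      · funext j
        exact (Finset.sum_eq_sum_iff_of_le (fun i _ => hd i)).mp hsum2 j (mem_univ j)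

lemma cappedVote_props {n : ℕ} {a : Fin n → ℝ} {W : ℝ} {b : Fin n → ℝ}
    (ha : ∀ j, 0 ≤ a j) (h : IsCappedVote n a W b) :
    (∀ j, 0 ≤ b j) ∧ (∀ j, b j ≤ a j) ∧ (∑ j, b j ≤ W) := by
  rcases h with ⟨hs, rfl⟩ | ⟨hs, τ, c, hτ, hc, hc', hb, hsum⟩
  · exact ⟨ha, fun j => le_refl _, hs⟩
  · refine ⟨?_, ?_, hsum.le⟩
    · intro j; rw [hb j]; split_ifs with h1 h2
      · exact ha j
      · exact mul_nonneg hc (ha j)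
      · exact le_refl 0
    · intro j; rw [hb j]; split_ifs with h1 h2
      · exact le_refl _
      · nlinarith [ha j]
      · exact ha j

theorem stmt_18 (n : ℕ) (a : Fin n → Fin n → ℝ)
    (ha : ∀ i j, 0 ≤ a i j ∧ a i j ≤ 1)
    (θ α β ε : ℝ) (hθ : 0 < θ) (hβ : 0 ≤ β) (hβα : β < α) (hα : α ≤ 1)
    (hε0 : 0 < ε) (hεα : ε < α) (t : ℕ) (k : ℕ) (hk : k = ⌈1 / ε⌉₊) :
    ∃ (π : Fin (k * n) → List (Fin (k * n))) (f : Fin (k * n) → Fin n),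
      (∀ i, (π i).Nodup) ∧
      (∀ v : Fin n, (Finset.univ.filter (fun x => f x = v)).card = k) ∧
      ∀ S : Finset (Fin n), S.card = t → IsWeightedCommunity n a θ α β S →
        (Finset.univ.filter (fun x => f x ∈ S)).card = k * t ∧
        IsListCommunity (k * n) π θ (α - ε) β (Finset.univ.filter (fun x => f x ∈ S)) ∧
        (Finset.univ.filter (fun x => f x ∈ S)).image f = S := by
  have hkpos : 0 < k := by
    rw [hk]
    exact Nat.ceil_pos.mpr (by positivity)
  have hk1 : (1 : ℝ) ≤ ε * k := by
    have h1 : (1 : ℝ) / ε ≤ (k : ℝ) := by rw [hk]; exact_mod_cast Nat.le_ceil _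
    rw [div_le_iff₀ hε0] at h1
    nlinarith
  set e : Fin k × Fin n ≃ Fin (k * n) := finProdFinEquiv with he
  set f : Fin (k * n) → Fin n := fun x => (e.symm x).2 with hf
  set cp : Fin n → Fin n → ℝ := fun s =>
    if h : ∃ c, IsCappedVote n (a s) (θ * (t : ℝ)) c then h.choose else a s with hcp
  have hcp_is : ∀ s, (∃ c, IsCappedVote n (a s) (θ * (t : ℝ)) c) →
      IsCappedVote n (a s) (θ * (t : ℝ)) (cp s) := by
    intro s h
    simp only [hcp, dif_pos h]
    exact h.choose_spec
  have hcp_spec : ∀ s (c : Fin n → ℝ), IsCappedVote n (a s) (θ * (t : ℝ)) c → cp s = c := by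
    intro s c hc
    exact cappedVote_unique (hcp_is s ⟨c, hc⟩) hc
  have hcp01 : ∀ s j, 0 ≤ cp s j ∧ cp s j ≤ a s j := by
    intro s j
    by_cases h : ∃ c, IsCappedVote n (a s) (θ * (t : ℝ)) c
    · have hp := cappedVote_props (fun j => (ha s j).1) (hcp_is s h)
      exact ⟨hp.1 j, hp.2.1 j⟩
    · simp only [hcp, dif_neg h]
      exact ⟨(ha s j).1, le_refl _⟩
  set w : Fin n → Fin n → ℕ := fun s j => ⌊(k : ℝ) * cp s j⌋₊ with hw
  have hwk : ∀ s j, w s j ≤ k := by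
    intro s j
    simp only [hw]
    calc ⌊(k : ℝ) * cp s j⌋₊ ≤ ⌊(k : ℝ)⌋₊ := by
          apply Nat.floor_le_floor
          nlinarith [(hcp01 s j).1, (hcp01 s j).2, (ha s j).2,
            (Nat.cast_nonneg k : (0 : ℝ) ≤ k)]
      _ = k := Nat.floor_natCast k
  have hwle : ∀ s j, (w s j : ℝ) ≤ (k : ℝ) * cp s j := by
    intro s j
    simp only [hw]
    exact Nat.floor_le (mul_nonneg (Nat.cast_nonneg k) (hcp01 s j).1)
  set π : Fin (k * n) → List (Fin (k * n)) := fun x =>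
    (List.finRange n).flatMap (fun j => (List.range (w (f x) j)).map
      (fun o => e (⟨(((e.symm x).1 : ℕ) + o) % k, Nat.mod_lt _ hkpos⟩, j))) with hπ
  have hmem : ∀ x y : Fin (k * n),
      y ∈ π x ↔ ∃ o, o < w (f x) (f y) ∧
        (((e.symm x).1 : ℕ) + o) % k = ((e.symm y).1 : ℕ) := by
    intro x y
    simp only [hπ, List.mem_flatMap, List.mem_map, List.mem_finRange, List.mem_range, true_and]
    constructor
    · rintro ⟨j, o, ho, rfl⟩
      simp only [hf, Equiv.symm_apply_apply]
      exact ⟨o, ho, rfl⟩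
    · rintro ⟨o, ho, hoq⟩
      refine ⟨f y, o, ho, ?_⟩
      conv_rhs => rw [← e.apply_symm_apply y]
      congr 1
      refine Prod.ext_iff.mpr ⟨Fin.ext ?_, ?_⟩
      · simpa using hoq
      · simp [hf]
  refine ⟨π, f, ?_, ?_, ?_⟩
  · -- Nodup
    intro x
    simp only [hπ]
    rw [List.nodup_flatMap]
    constructor
    · intro j _
      refine List.Nodup.map_on ?_ List.nodup_range
      intro o1 h1 o2 h2 heq
      rw [List.mem_range] at h1 h2
      have h3 : (((e.symm x).1 : ℕ) + o1) % k = (((e.symm x).1 : ℕ) + o2) % k := by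
        have := e.injective heq
        have := congrArg Prod.fst this
        exact congrArg Fin.val this
      have h4 : o1 % k = o2 % k := Nat.ModEq.add_left_cancel' _ h3
      rwa [Nat.mod_eq_of_lt (lt_of_lt_of_le h1 (hwk _ _)),
        Nat.mod_eq_of_lt (lt_of_lt_of_le h2 (hwk _ _))] at h4
    · refine List.Pairwise.imp ?_ (List.nodup_finRange n)
      intro j j' hne y hy hy'
      simp only [List.mem_map, List.mem_range] at hy hy'
      obtain ⟨o1, _, rfl⟩ := hy
      obtain ⟨o2, _, h2⟩ := hy'
      exact hne (congrArg Prod.snd (e.injective h2)).symm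
  · -- fibers of f
    intro v
    have hset : (univ.filter (fun x => f x = v)) =
        (univ : Finset (Fin k)).image (fun r => e (r, v)) := by
      ext x
      simp only [Finset.mem_filter, Finset.mem_univ, true_and, Finset.mem_image]
      constructor
      · intro hx
        refine ⟨(e.symm x).1, ?_⟩
        rw [← hx]
        simp [hf]
      · rintro ⟨r, rfl⟩
        simp [hf]
    rw [hset, Finset.card_image_of_injective _ (fun r r' h => by
      simpa using congrArg Prod.fst (e.injective h)), Finset.card_univ, Fintype.card_fin]
  · -- main
    intro S hST hWC
    obtain ⟨cap, hcap, hA, hB⟩ := hWC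
    rw [hST] at hcap hA hB
    have hcpe : ∀ s, cp s = cap s := fun s => hcp_spec s (cap s) (hcap s)
    have hsum_cp : ∀ s, ∑ j, cp s j ≤ θ * (t : ℝ) := by
      intro s
      exact (cappedVote_props (fun j => (ha s j).1) (hcp_is s ⟨cap s, hcap s⟩)).2.2
    have hcard : (univ.filter (fun x => f x ∈ S)).card = k * t := by
      have hset : (univ.filter (fun x => f x ∈ S)) = (univ ×ˢ S).image (fun q => e q) := by
        ext x
        simp only [Finset.mem_filter, Finset.mem_univ, true_and, Finset.mem_image,
          Finset.mem_product]
        constructor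
        · intro hx
          refine ⟨e.symm x, ?_, by simp⟩
          simpa [hf] using hx
        · rintro ⟨q, hq, rfl⟩
          simpa [hf] using hq
      rw [hset, Finset.card_image_of_injective _ e.injective, Finset.card_product,
        Finset.card_univ, Fintype.card_fin, hST]
    have himg : (univ.filter (fun x => f x ∈ S)).image f = S := by
      apply Finset.Subset.antisymm
      · intro v hv
        obtain ⟨x, hx, rfl⟩ := Finset.mem_image.mp hv
        exact (Finset.mem_filter.mp hx).2
      · intro v hv
        refine Finset.mem_image.mpr ⟨e (⟨0, hkpos⟩, v), Finset.mem_filter.mpr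
          ⟨Finset.mem_univ _, ?_⟩, ?_⟩
        · simpa [hf] using hv
        · simp [hf]
    -- length bound
    have hlen : ∀ x : Fin (k * n), (π x).length ≤ ⌈θ * ((k * t : ℕ) : ℝ)⌉₊ := by
      intro x
      have h1 : (π x).length = ∑ j : Fin n, w (f x) j := by
        simp only [hπ, List.length_flatMap, List.map_map]
        rw [Fin.sum_univ_def]
        congr 1
        apply List.map_congr_left
        intro j _
        simp
      rw [h1]
      have h2 : ((∑ j, w (f x) j : ℕ) : ℝ) ≤ θ * ((k * t : ℕ) : ℝ) := by
        push_cast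
        calc (∑ j, (w (f x) j : ℝ)) ≤ ∑ j, (k : ℝ) * cp (f x) j :=
              Finset.sum_le_sum (fun j _ => hwle (f x) j)
          _ = (k : ℝ) * ∑ j, cp (f x) j := by rw [Finset.mul_sum]
          _ ≤ (k : ℝ) * (θ * t) :=
              mul_le_mul_of_nonneg_left (hsum_cp (f x)) (Nat.cast_nonneg k)
          _ = θ * ((k : ℝ) * (t : ℝ)) := by ring
      exact_mod_cast h2.trans (Nat.le_ceil _)
    have hfiltake : ∀ y : Fin (k * n),
        (univ.filter (fun x => f x ∈ S)).filter
            (fun x => y ∈ (π x).take ⌈θ * ((k * t : ℕ) : ℝ)⌉₊)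
          = (univ.filter (fun x => f x ∈ S)).filter (fun x => y ∈ π x) := by
      intro y
      apply Finset.filter_congr
      intro x _
      rw [List.take_of_length_le (hlen x)]
    -- the vote count
    have hwin : ∀ (qv : Fin k) (wv : ℕ), wv ≤ k →
        (univ.filter (fun r : Fin k => ∃ o, o < wv ∧ ((r : ℕ) + o) % k = (qv : ℕ))).card
          = wv := by
      intro qv wv hwv
      have key : ∀ o1 o2 : ℕ, o1 ≤ o2 → o2 < k →
          ((qv : ℕ) + k - o1) % k = ((qv : ℕ) + k - o2) % k → o1 = o2 := by
        intro o1 o2 hle ho2 hmm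
        have hd : k ∣ ((qv : ℕ) + k - o1) - ((qv : ℕ) + k - o2) :=
          (Nat.modEq_iff_dvd' (by omega)).mp hmm.symm
        have heq2 : ((qv : ℕ) + k - o1) - ((qv : ℕ) + k - o2) = o2 - o1 := by omega
        rw [heq2] at hd
        have h0 : o2 - o1 = 0 := Nat.eq_zero_of_dvd_of_lt hd (by omega)
        omega
      have hsetw : (univ.filter (fun r : Fin k => ∃ o, o < wv ∧ ((r : ℕ) + o) % k = (qv : ℕ)))
          = (Finset.range wv).image
              (fun o => (⟨((qv : ℕ) + k - o) % k, Nat.mod_lt _ hkpos⟩ : Fin k)) := by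
        ext r
        simp only [Finset.mem_filter, Finset.mem_univ, true_and, Finset.mem_image,
          Finset.mem_range]
        constructor
        · rintro ⟨o, ho, heq⟩
          have hok : o < k := lt_of_lt_of_le ho hwv
          refine ⟨o, ho, ?_⟩
          have hq : (qv : ℕ) % k = ((r : ℕ) + o) % k := by
            rw [← heq]
            exact Nat.mod_mod_of_dvd _ dvd_rfl
          have h3 : ((qv : ℕ) + (k - o)) % k = ((r : ℕ) + o + (k - o)) % k :=
            Nat.ModEq.add_right (k - o) hq
          have h4 : (r : ℕ) + o + (k - o) = (r : ℕ) + k := by omega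
          rw [h4] at h3
          apply Fin.ext
          show ((qv : ℕ) + k - o) % k = (r : ℕ)
          rw [show (qv : ℕ) + k - o = (qv : ℕ) + (k - o) by omega, h3,
            Nat.add_mod_right, Nat.mod_eq_of_lt r.isLt]
        · rintro ⟨o, ho, rfl⟩
          have hok : o < k := lt_of_lt_of_le ho hwv
          refine ⟨o, ho, ?_⟩
          show (((qv : ℕ) + k - o) % k + o) % k = (qv : ℕ)
          have h1 : (((qv : ℕ) + k - o) % k + o) % k = (((qv : ℕ) + k - o) + o) % k :=
            Nat.ModEq.add_right o (Nat.mod_modEq _ _)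
          rw [h1, show (qv : ℕ) + k - o + o = (qv : ℕ) + k by omega,
            Nat.add_mod_right, Nat.mod_eq_of_lt qv.isLt]
      rw [hsetw, Finset.card_image_of_injOn, Finset.card_range]
      intro o1 h1 o2 h2 heq
      simp only [Finset.coe_range, Set.mem_Iio] at h1 h2
      have hmm : ((qv : ℕ) + k - o1) % k = ((qv : ℕ) + k - o2) % k := congrArg Fin.val heq
      rcases le_total o1 o2 with hle | hle
      · exact key o1 o2 hle (lt_of_lt_of_le h2 hwv) hmm
      · exact (key o2 o1 hle (lt_of_lt_of_le h1 hwv) hmm.symm).symm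
    have hvote : ∀ y : Fin (k * n),
        ((univ.filter (fun x => f x ∈ S)).filter (fun x => y ∈ π x)).card
          = ∑ s ∈ S, w s (f y) := by
      intro y
      have v1 : ((univ.filter (fun x => f x ∈ S)).filter (fun x => y ∈ π x)).card
          = (univ.filter (fun q : Fin k × Fin n => q.2 ∈ S ∧ ∃ o, o < w q.2 (f y) ∧
              ((q.1 : ℕ) + o) % k = ((e.symm y).1 : ℕ))).card := by
        apply Finset.card_bij (fun x _ => e.symm x)
        · intro x hx
          simp only [Finset.mem_filter, Finset.mem_univ, true_and] at hx ⊢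
          obtain ⟨hx1, hx2⟩ := hx
          rw [hmem] at hx2
          exact ⟨hx1, by simpa [hf] using hx2⟩
        · intro x1 h1 x2 h2 h
          exact e.symm.injective h
        · intro q hq
          refine ⟨e q, ?_, by simp⟩
          simp only [Finset.mem_filter, Finset.mem_univ, true_and] at hq ⊢
          obtain ⟨hq1, hq2⟩ := hq
          constructor
          · simpa [hf] using hq1
          · rw [hmem]
            simpa [hf] using hq2
      have v2 : (univ.filter (fun q : Fin k × Fin n => q.2 ∈ S ∧ ∃ o, o < w q.2 (f y) ∧
            ((q.1 : ℕ) + o) % k = ((e.symm y).1 : ℕ))).card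
          = ∑ s ∈ S, (univ.filter (fun r : Fin k => ∃ o, o < w s (f y) ∧
              ((r : ℕ) + o) % k = ((e.symm y).1 : ℕ))).card := by
        rw [Finset.card_filter, Fintype.sum_prod_type_right]
        have h1 : ∀ s : Fin n, (∑ r : Fin k, if s ∈ S ∧ ∃ o, o < w s (f y) ∧
              ((r : ℕ) + o) % k = ((e.symm y).1 : ℕ) then 1 else 0)
            = if s ∈ S then (univ.filter (fun r : Fin k => ∃ o, o < w s (f y) ∧
              ((r : ℕ) + o) % k = ((e.symm y).1 : ℕ))).card else 0 := by
          intro s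
          by_cases hs : s ∈ S
          · simp only [hs, true_and, if_true, Finset.card_filter]
          · simp [hs]
        simp_rw [h1]
        rw [Finset.sum_ite_mem, Finset.univ_inter]
      rw [v1, v2]
      exact Finset.sum_congr rfl (fun s _ => hwin ((e.symm y).1) (w s (f y)) (hwk s (f y)))
    refine ⟨hcard, ⟨?_, ?_⟩, himg⟩
    · -- alpha condition
      intro y hy
      rw [hcard, hfiltake y, hvote y]
      have hi : f y ∈ S := (Finset.mem_filter.mp hy).2
      have hstep : ∀ s ∈ S, (k : ℝ) * cap s (f y) - 1 ≤ (w s (f y) : ℝ) := by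
        intro s _
        have h2 : (k : ℝ) * cp s (f y) - 1 < (w s (f y) : ℝ) := by
          simp only [hw]
          exact Nat.sub_one_lt_floor _
        rw [hcpe s] at h2
        linarith
      have hsum := Finset.sum_le_sum hstep
      rw [Finset.sum_sub_distrib, Finset.sum_const, nsmul_eq_mul, mul_one,
        ← Finset.mul_sum, hST] at hsum
      have hAy := hA (f y) hi
      push_cast
      linarith [hsum, mul_le_mul_of_nonneg_left hAy (Nat.cast_nonneg k),
        mul_nonneg (Nat.cast_nonneg t) (sub_nonneg.mpr hk1)]
    · -- beta condition
      intro y hy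
      rw [hcard, hfiltake y, hvote y]
      have hi : f y ∉ S := fun hyS => hy (Finset.mem_filter.mpr ⟨Finset.mem_univ _, hyS⟩)
      have hstep : ∀ s ∈ S, (w s (f y) : ℝ) ≤ (k : ℝ) * cap s (f y) := by
        intro s _
        rw [← hcpe s]
        exact hwle s (f y)
      have hsum := Finset.sum_le_sum hstep
      rw [← Finset.mul_sum] at hsum
      have hBy := hB (f y) hi
      push_cast
      calc ∑ s ∈ S, (w s (f y) : ℝ) ≤ (k : ℝ) * ∑ s ∈ S, cap s (f y) := hsum
        _ ≤ (k : ℝ) * (β * t) := mul_le_mul_of_nonneg_left hBy (Nat.cast_nonneg k)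
        _ = β * ((k : ℝ) * (t : ℝ)) := by ring
end

section
/- Let (V, {π_i^1,…,π_i^f}_{i∈V}) be an f-faceted affinity system on n elements, let 0 ≤ β < α ≤ 1 and θ > 0 with γ = α − β > 0, and let S ⊆ V with |S| = t > 8 ln n / γ². Suppose ψ_f : S × {1,…,f} → [0,1] is a fractional facet assignment satisfying: (1) Σ_{i=1}^f ψ_f(s,i) = 1 for all s ∈ S; (2) Σ_{s∈S} Σ_{i=1}^f ψ_f(s,i)·χ[x ∈ π_s^i(1:⌈θt⌉)] ≥ αt for all x ∈ S; and (3) Σ_{s∈S} Σ_{i=1}^f ψ_f(s,i)·χ[y ∈ π_s^i(1:⌈θt⌉)] < βt for all y ∉ S. If ψ' : S → {1,…,f} is obtained by independently setting ψ'(s) = i with probability ψ_f(s,i), then with positive probability (S, ψ') is an (α − γ/4, β + γ/4, θ)-multifaceted community; in particular such an integral facet assignment ψ' exists. -/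
open Finset
open scoped Classical

/-- The set of the `t` top-ranked elements of the `j`-th ranking of member `s` in an
`f`-faceted affinity system. -/
def topSetF (n f : ℕ) (π : Fin n → Fin f → Equiv.Perm (Fin n)) (s : Fin n) (j : Fin f)
    (t : ℕ) : Finset (Fin n) :=
  Finset.univ.filter (fun x => (((π s j).symm x : ℕ) < t))

/-- `φ^θ_{S,ψ}(i)`: the number of members `s` of `S` ranking `i` among the top
`⌈θ|S|⌉` elements of their facet `ψ s`. -/
noncomputable def facetVotes (n f : ℕ) (π : Fin n → Fin f → Equiv.Perm (Fin n)) (θ : ℝ)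
    (S : Finset (Fin n)) (ψ : Fin n → Fin f) (i : Fin n) : ℕ :=
  (S.filter (fun s => i ∈ topSetF n f π s (ψ s) ⌈θ * (S.card : ℝ)⌉₊)).card

/-- `(S, ψ)` is an `(α, β, θ)`-multifaceted community. -/
def IsMFCommunity (n f : ℕ) (π : Fin n → Fin f → Equiv.Perm (Fin n)) (α β θ : ℝ)
    (S : Finset (Fin n)) (ψ : Fin n → Fin f) : Prop :=
  (∀ i ∈ S, α * S.card ≤ (facetVotes n f π θ S ψ i : ℝ)) ∧
  (∀ j, j ∉ S → (facetVotes n f π θ S ψ j : ℝ) < β * S.card)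


lemma bernoulli_hoeffding (p : ℝ) (hp0 : 0 ≤ p) (hp1 : p ≤ 1) (l : ℝ) :
    1 - p + p * Real.exp l ≤ Real.exp (l * p + l ^ 2 / 8) := by
  have hF : ∀ x : ℝ, 0 < 1 - p + p * Real.exp x := by
    intro x
    rcases eq_or_lt_of_le hp0 with h | h
    · simp [← h]
    · nlinarith [Real.exp_pos x]
  set F : ℝ → ℝ := fun x => 1 - p + p * Real.exp x with hFdef
  have hFx : ∀ x, F x = 1 - p + p * Real.exp x := fun _ => rfl
  have hF' : ∀ x : ℝ, HasDerivAt F (p * Real.exp x) x := fun x =>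
    ((Real.hasDerivAt_exp x).const_mul p).const_add (1 - p)
  set G : ℝ → ℝ := fun x => p + x / 4 - p * Real.exp x / F x with hGdef
  have hGx : ∀ x, G x = p + x / 4 - p * Real.exp x / F x := fun _ => rfl
  have hG' : ∀ x : ℝ, HasDerivAt G (1 / 4 - p * Real.exp x * (1 - p) / (F x) ^ 2) x := by
    intro x
    have h1 : HasDerivAt (fun y : ℝ => p + y / 4) (1 / 4) x := by
      simpa using ((hasDerivAt_id x).div_const 4).const_add p
    have h2 : HasDerivAt (fun y => p * Real.exp y / F y)
        ((p * Real.exp x * F x - p * Real.exp x * (p * Real.exp x)) / (F x) ^ 2) x :=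
      ((Real.hasDerivAt_exp x).const_mul p).div (hF' x) (hF x).ne'
    have h3 := h1.sub h2
    refine h3.congr_deriv ?_
    rw [hFx x]
    have hne : (1 - p + p * Real.exp x) ^ 2 ≠ 0 := pow_ne_zero 2 (hF x).ne'
    field_simp
    ring
  have hGmono : Monotone G := by
    apply monotone_of_deriv_nonneg (fun x => (hG' x).differentiableAt)
    intro x
    rw [(hG' x).deriv]
    have h1 : 0 < (F x) ^ 2 := pow_pos (hF x) 2
    have h2 : p * Real.exp x * (1 - p) / (F x) ^ 2 ≤ 1 / 4 := by
      rw [div_le_iff₀ h1, hFx x]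
      nlinarith [sq_nonneg ((1 - p) - p * Real.exp x), Real.exp_pos x]
    linarith
  have hG0 : G 0 = 0 := by
    rw [hGx 0, hFx 0, Real.exp_zero]
    have h1 : 1 - p + p * 1 = 1 := by ring
    rw [h1]
    ring
  set g : ℝ → ℝ := fun x => x * p + x ^ 2 / 8 - Real.log (F x) with hgdef
  have hgx : ∀ x, g x = x * p + x ^ 2 / 8 - Real.log (F x) := fun _ => rfl
  have hg' : ∀ x : ℝ, HasDerivAt g (G x) x := by
    intro x
    have h1 : HasDerivAt (fun y : ℝ => y * p + y ^ 2 / 8) (p + x / 4) x := by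
      have ha := (hasDerivAt_id x).mul_const p
      have hb := (hasDerivAt_pow 2 x).div_const 8
      refine (ha.add hb).congr_deriv ?_
      all_goals push_cast
      all_goals ring
    have h2 : HasDerivAt (fun y => Real.log (F y)) (p * Real.exp x / F x) x :=
      (hF' x).log (hF x).ne'
    have h3 := h1.sub h2
    exact h3
  have hgdiff : Differentiable ℝ g := fun x => (hg' x).differentiableAt
  have hg0 : g 0 = 0 := by
    rw [hgx 0, hFx 0, Real.exp_zero]
    have h1 : 1 - p + p * 1 = 1 := by ring
    rw [h1, Real.log_one]
    ring
  have hkey : ∀ x : ℝ, 0 ≤ g x := by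
    intro x
    rcases le_total 0 x with hx | hx
    · have hmono : MonotoneOn g (Set.Ici 0) := by
        apply monotoneOn_of_deriv_nonneg (convex_Ici 0) hgdiff.continuous.continuousOn
          hgdiff.differentiableOn
        intro y hy
        rw [interior_Ici] at hy
        rw [(hg' y).deriv]
        calc (0:ℝ) = G 0 := hG0.symm
          _ ≤ G y := hGmono (le_of_lt hy)
      have := hmono (Set.self_mem_Ici) (Set.mem_Ici.mpr hx) hx
      linarith [hg0 ▸ this]
    · have hanti : AntitoneOn g (Set.Iic 0) := by
        apply antitoneOn_of_deriv_nonpos (convex_Iic 0) hgdiff.continuous.continuousOn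
          hgdiff.differentiableOn
        intro y hy
        rw [interior_Iic] at hy
        rw [(hg' y).deriv]
        calc G y ≤ G 0 := hGmono (le_of_lt hy)
          _ = 0 := hG0
      have := hanti (Set.mem_Iic.mpr hx) (Set.self_mem_Iic) hx
      linarith [hg0 ▸ this]
  have h1 : Real.log (F l) ≤ l * p + l ^ 2 / 8 := by
    have := hkey l
    rw [hgx l] at this
    linarith
  calc 1 - p + p * Real.exp l = F l := (hFx l).symm
    _ = Real.exp (Real.log (F l)) := (Real.exp_log (hF l)).symm
    _ ≤ Real.exp (l * p + l ^ 2 / 8) := Real.exp_le_exp.mpr h1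



lemma sum_fn_prod {n f : ℕ} (S : Finset (Fin n)) (g : Fin n → Fin f → ℝ) :
    ∑ ψ : Fin n → Fin f, ∏ s ∈ S, g s (ψ s)
      = (f : ℝ) ^ (n - S.card) * ∏ s ∈ S, ∑ i : Fin f, g s i := by
  have h1 : ∀ ψ : Fin n → Fin f, ∏ s ∈ S, g s (ψ s)
      = ∏ s : Fin n, (if s ∈ S then g s (ψ s) else 1) := by
    intro ψ
    rw [Finset.prod_ite_mem Finset.univ S (fun s => g s (ψ s)), Finset.univ_inter]
  simp only [h1]
  have h2 : ∑ ψ : Fin n → Fin f, ∏ s : Fin n, (if s ∈ S then g s (ψ s) else 1)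
      = ∏ s : Fin n, ∑ i : Fin f, (if s ∈ S then g s i else 1) :=
    (Fintype.prod_sum (fun s i => if s ∈ S then g s i else 1)).symm
  rw [h2, ← Finset.prod_mul_prod_compl S (fun s => ∑ i : Fin f, (if s ∈ S then g s i else 1))]
  have h3 : ∏ s ∈ S, (∑ i : Fin f, (if s ∈ S then g s i else 1))
      = ∏ s ∈ S, ∑ i : Fin f, g s i := by
    apply Finset.prod_congr rfl
    intro s hs
    simp [hs]
  have h4 : ∏ s ∈ Sᶜ, (∑ i : Fin f, (if s ∈ S then g s i else 1))
      = (f : ℝ) ^ (n - S.card) := by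
    have : ∀ s ∈ Sᶜ, (∑ i : Fin f, (if s ∈ S then g s i else 1)) = (f:ℝ) := by
      intro s hs
      rw [Finset.mem_compl] at hs
      simp [hs]
    rw [Finset.prod_congr rfl this, Finset.prod_const, Finset.card_compl,
      Fintype.card_fin]
  rw [h3, h4, mul_comm]

set_option maxHeartbeats 1000000 in
theorem stmt_19 (n f : ℕ) (π : Fin n → Fin f → Equiv.Perm (Fin n))
    (α β θ γ : ℝ) (hβ : 0 ≤ β) (hβα : β < α) (hα : α ≤ 1) (hθ : 0 < θ)
    (hγ : γ = α - β)
    (S : Finset (Fin n)) (t : ℕ) (ht : t = S.card)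
    (htLarge : 8 * Real.log n / γ ^ 2 < (t : ℝ))
    (ψf : Fin n → Fin f → ℝ)
    (hψ01 : ∀ s ∈ S, ∀ i : Fin f, 0 ≤ ψf s i ∧ ψf s i ≤ 1)
    (hψsum : ∀ s ∈ S, (∑ i : Fin f, ψf s i) = 1)
    (hin : ∀ x ∈ S, α * t ≤
      ∑ s ∈ S, ∑ i : Fin f, ψf s i *
        (if x ∈ topSetF n f π s i ⌈θ * (t : ℝ)⌉₊ then 1 else 0))
    (hout : ∀ y, y ∉ S →
      (∑ s ∈ S, ∑ i : Fin f, ψf s i *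
        (if y ∈ topSetF n f π s i ⌈θ * (t : ℝ)⌉₊ then 1 else 0)) < β * t) :
    (0 < ∑ ψ' : Fin n → Fin f, (∏ s ∈ S, ψf s (ψ' s)) *
        (if IsMFCommunity n f π (α - γ / 4) (β + γ / 4) θ S ψ' then 1 else 0)) ∧
    ∃ ψ' : Fin n → Fin f, IsMFCommunity n f π (α - γ / 4) (β + γ / 4) θ S ψ' := by
  classical
  have hγpos : 0 < γ := by rw [hγ]; linarith
  have hγ2 : 0 < γ ^ 2 := by positivity
  have htpos : 0 < t := by
    by_contra hcon
    push_neg at hcon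
    have h0 : t = 0 := Nat.le_zero.mp hcon
    rw [h0] at htLarge
    have hln : (0:ℝ) ≤ 8 * Real.log n / γ ^ 2 := by
      have := Real.log_natCast_nonneg n
      positivity
    simp only [Nat.cast_zero] at htLarge
    linarith
  have hS : S.Nonempty := by
    rw [← Finset.card_pos, ← ht]; exact htpos
  obtain ⟨s₀, hs₀⟩ := hS
  have hn : 0 < n := s₀.pos
  have hfpos : 0 < f := by
    rcases Nat.eq_zero_or_pos f with h0 | h
    · exfalso
      have := hψsum s₀ hs₀
      subst h0
      simp at this
    · exact h
  have hlog : Real.log n < γ ^ 2 * t / 8 := by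
    rw [div_lt_iff₀ hγ2] at htLarge
    nlinarith
  -- Abbreviations
  set T : ℕ := ⌈θ * (t : ℝ)⌉₊ with hT
  set a : Fin n → Fin n → Fin f → ℝ :=
    fun x s i => if x ∈ topSetF n f π s i T then 1 else 0 with ha
  set votes : Fin n → (Fin n → Fin f) → ℝ := fun x ψ => ∑ s ∈ S, a x s (ψ s) with hvotes
  set μ : Fin n → ℝ := fun x => ∑ s ∈ S, ∑ i : Fin f, ψf s i * a x s i with hμ
  set w : (Fin n → Fin f) → ℝ := fun ψ => ∏ s ∈ S, ψf s (ψ s) with hw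
  have ha01 : ∀ x s i, a x s i = 0 ∨ a x s i = 1 := by
    intro x s i
    simp only [ha]
    split_ifs <;> simp
  have ha0 : ∀ x s i, 0 ≤ a x s i := by
    intro x s i; rcases ha01 x s i with h | h <;> rw [h] <;> norm_num
  have ha1 : ∀ x s i, a x s i ≤ 1 := by
    intro x s i; rcases ha01 x s i with h | h <;> rw [h] <;> norm_num
  have hwpos : ∀ ψ, 0 ≤ w ψ := fun ψ =>
    Finset.prod_nonneg (fun s hs => (hψ01 s hs (ψ s)).1)
  have hμin : ∀ x ∈ S, α * t ≤ μ x := by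
    intro x hx
    simpa only [hμ, ha] using hin x hx
  have hμout : ∀ y, y ∉ S → μ y < β * t := by
    intro y hy
    simpa only [hμ, ha] using hout y hy
  have hfv : ∀ (ψ : Fin n → Fin f) (x : Fin n),
      (facetVotes n f π θ S ψ x : ℝ) = votes x ψ := by
    intro ψ x
    have hcard : ⌈θ * (S.card : ℝ)⌉₊ = T := by rw [hT, ht]
    simp only [facetVotes, hcard, Finset.card_filter, hvotes, ha]
    push_cast
    rfl
  -- p bounds
  have hp0 : ∀ x, ∀ s ∈ S, 0 ≤ ∑ i : Fin f, ψf s i * a x s i := by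
    intro x s hs
    exact Finset.sum_nonneg fun i _ => mul_nonneg (hψ01 s hs i).1 (ha0 x s i)
  have hp1 : ∀ x, ∀ s ∈ S, ∑ i : Fin f, ψf s i * a x s i ≤ 1 := by
    intro x s hs
    rw [← hψsum s hs]
    apply Finset.sum_le_sum
    intro i _
    calc ψf s i * a x s i ≤ ψf s i * 1 :=
          mul_le_mul_of_nonneg_left (ha1 x s i) (hψ01 s hs i).1
      _ = ψf s i := mul_one _
  have hfpow : (0:ℝ) ≤ (f:ℝ) ^ (n - t) := by positivity
  -- MGF bound
  have hmgf : ∀ (x : Fin n) (l : ℝ),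
      ∑ ψ : Fin n → Fin f, w ψ * Real.exp (l * votes x ψ)
        ≤ (f:ℝ) ^ (n - t) * Real.exp (l * μ x + l ^ 2 * t / 8) := by
    intro x l
    have step1 : ∀ ψ : Fin n → Fin f, w ψ * Real.exp (l * votes x ψ)
        = ∏ s ∈ S, (ψf s (ψ s) * Real.exp (l * a x s (ψ s))) := by
      intro ψ
      rw [Finset.prod_mul_distrib]
      congr 1
      simp only [hvotes]
      rw [Finset.mul_sum, Real.exp_sum]
    calc ∑ ψ : Fin n → Fin f, w ψ * Real.exp (l * votes x ψ)
        = ∑ ψ : Fin n → Fin f, ∏ s ∈ S, (ψf s (ψ s) * Real.exp (l * a x s (ψ s))) :=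
          Finset.sum_congr rfl fun ψ _ => step1 ψ
      _ = (f:ℝ) ^ (n - S.card) * ∏ s ∈ S, ∑ i : Fin f, ψf s i * Real.exp (l * a x s i) :=
          sum_fn_prod (n := n) (f := f) S (fun s i => ψf s i * Real.exp (l * a x s i))
      _ ≤ (f:ℝ) ^ (n - S.card) * Real.exp (l * μ x + l ^ 2 * t / 8) := by
          apply mul_le_mul_of_nonneg_left _ (by positivity)
          have hterm : ∀ s ∈ S, ∑ i : Fin f, ψf s i * Real.exp (l * a x s i)
              = 1 - (∑ i : Fin f, ψf s i * a x s i)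
                + (∑ i : Fin f, ψf s i * a x s i) * Real.exp l := by
            intro s hs
            have hpt : ∀ i : Fin f, ψf s i * Real.exp (l * a x s i)
                = ψf s i + ψf s i * a x s i * (Real.exp l - 1) := by
              intro i
              rcases ha01 x s i with h | h <;> rw [h] <;> simp [Real.exp_zero] <;> ring
            rw [Finset.sum_congr rfl fun i _ => hpt i, Finset.sum_add_distrib,
              hψsum s hs, ← Finset.sum_mul]
            ring
          calc ∏ s ∈ S, ∑ i : Fin f, ψf s i * Real.exp (l * a x s i)
              ≤ ∏ s ∈ S, Real.exp (l * (∑ i : Fin f, ψf s i * a x s i) + l ^ 2 / 8) := by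
                apply Finset.prod_le_prod
                · intro s hs
                  exact Finset.sum_nonneg fun i _ =>
                    mul_nonneg (hψ01 s hs i).1 (Real.exp_pos _).le
                · intro s hs
                  rw [hterm s hs]
                  exact bernoulli_hoeffding _ (hp0 x s hs) (hp1 x s hs) l
            _ = Real.exp (l * μ x + l ^ 2 * t / 8) := by
                rw [← Real.exp_sum]
                congr 1
                rw [Finset.sum_add_distrib, ← Finset.mul_sum, Finset.sum_const,
                  nsmul_eq_mul, ← ht]
                simp only [hμ]
                ring
      _ = (f:ℝ) ^ (n - t) * Real.exp (l * μ x + l ^ 2 * t / 8) := by rw [← ht]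
  -- Bad-event bound
  set bad : Fin n → (Fin n → Fin f) → ℝ := fun x ψ =>
    if x ∈ S then (if votes x ψ < (α - γ/4) * t then 1 else 0)
    else (if (β + γ/4) * t ≤ votes x ψ then 1 else 0) with hbad
  have hbad0 : ∀ x ψ, 0 ≤ bad x ψ := by
    intro x ψ
    simp only [hbad]
    split_ifs <;> norm_num
  have hbadsum : ∀ x : Fin n,
      ∑ ψ : Fin n → Fin f, w ψ * bad x ψ
        ≤ (f:ℝ) ^ (n - t) * Real.exp (-(γ ^ 2 * t / 8)) := by
    intro x
    by_cases hx : x ∈ S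
    · have pt : ∀ ψ, bad x ψ ≤ Real.exp (γ * ((α - γ/4) * t - votes x ψ)) := by
        intro ψ
        simp only [hbad, if_pos hx]
        split_ifs with h
        · exact Real.one_le_exp (le_of_lt (mul_pos hγpos (by linarith)))
        · exact (Real.exp_pos _).le
      calc ∑ ψ : Fin n → Fin f, w ψ * bad x ψ
          ≤ ∑ ψ : Fin n → Fin f, w ψ * Real.exp (γ * ((α - γ/4) * t - votes x ψ)) :=
            Finset.sum_le_sum fun ψ _ =>
              mul_le_mul_of_nonneg_left (pt ψ) (hwpos ψ)
        _ = Real.exp (γ * (α - γ/4) * t) *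
            ∑ ψ : Fin n → Fin f, w ψ * Real.exp ((-γ) * votes x ψ) := by
            rw [Finset.mul_sum]
            apply Finset.sum_congr rfl
            intro ψ _
            have : γ * ((α - γ/4) * t - votes x ψ)
                = γ * (α - γ/4) * t + (-γ) * votes x ψ := by ring
            rw [this, Real.exp_add]
            ring
        _ ≤ Real.exp (γ * (α - γ/4) * t) *
            ((f:ℝ) ^ (n - t) * Real.exp ((-γ) * μ x + (-γ) ^ 2 * t / 8)) :=
            mul_le_mul_of_nonneg_left (hmgf x (-γ)) (Real.exp_pos _).le
        _ ≤ (f:ℝ) ^ (n - t) * Real.exp (-(γ ^ 2 * t / 8)) := by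
            rw [← mul_assoc, mul_comm (Real.exp _) ((f:ℝ) ^ (n - t)), mul_assoc,
              ← Real.exp_add]
            apply mul_le_mul_of_nonneg_left _ hfpow
            apply Real.exp_le_exp.mpr
            have hμx := hμin x hx
            nlinarith [hμx, hγpos]
    · have pt : ∀ ψ, bad x ψ ≤ Real.exp (γ * (votes x ψ - (β + γ/4) * t)) := by
        intro ψ
        simp only [hbad, if_neg hx]
        split_ifs with h
        · exact Real.one_le_exp (mul_nonneg hγpos.le (by linarith))
        · exact (Real.exp_pos _).le
      calc ∑ ψ : Fin n → Fin f, w ψ * bad x ψ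
          ≤ ∑ ψ : Fin n → Fin f, w ψ * Real.exp (γ * (votes x ψ - (β + γ/4) * t)) :=
            Finset.sum_le_sum fun ψ _ =>
              mul_le_mul_of_nonneg_left (pt ψ) (hwpos ψ)
        _ = Real.exp (-(γ * (β + γ/4) * t)) *
            ∑ ψ : Fin n → Fin f, w ψ * Real.exp (γ * votes x ψ) := by
            rw [Finset.mul_sum]
            apply Finset.sum_congr rfl
            intro ψ _
            have : γ * (votes x ψ - (β + γ/4) * t)
                = -(γ * (β + γ/4) * t) + γ * votes x ψ := by ring
            rw [this, Real.exp_add]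
            ring
        _ ≤ Real.exp (-(γ * (β + γ/4) * t)) *
            ((f:ℝ) ^ (n - t) * Real.exp (γ * μ x + γ ^ 2 * t / 8)) :=
            mul_le_mul_of_nonneg_left (hmgf x γ) (Real.exp_pos _).le
        _ ≤ (f:ℝ) ^ (n - t) * Real.exp (-(γ ^ 2 * t / 8)) := by
            rw [← mul_assoc, mul_comm (Real.exp _) ((f:ℝ) ^ (n - t)), mul_assoc,
              ← Real.exp_add]
            apply mul_le_mul_of_nonneg_left _ hfpow
            apply Real.exp_le_exp.mpr
            have hμx := hμout x hx
            nlinarith [hμx, hγpos]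
  -- pointwise union bound
  have hpoint : ∀ ψ : Fin n → Fin f,
      (if IsMFCommunity n f π (α - γ/4) (β + γ/4) θ S ψ then (0:ℝ) else 1)
        ≤ ∑ x : Fin n, bad x ψ := by
    intro ψ
    split_ifs with h
    · exact Finset.sum_nonneg fun x _ => hbad0 x ψ
    · rw [IsMFCommunity, not_and_or] at h
      rcases h with h | h
      · push_neg at h
        obtain ⟨x, hx, hlt⟩ := h
        rw [hfv ψ x, ← ht] at hlt
        have hb : bad x ψ = 1 := by
          simp only [hbad, if_pos hx]
          rw [if_pos hlt]
        calc (1:ℝ) = bad x ψ := hb.symm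
          _ ≤ ∑ y : Fin n, bad y ψ :=
            Finset.single_le_sum (fun y _ => hbad0 y ψ) (Finset.mem_univ x)
      · push_neg at h
        obtain ⟨x, hx, hge⟩ := h
        rw [hfv ψ x, ← ht] at hge
        have hb : bad x ψ = 1 := by
          simp only [hbad, if_neg hx]
          rw [if_pos hge]
        calc (1:ℝ) = bad x ψ := hb.symm
          _ ≤ ∑ y : Fin n, bad y ψ :=
            Finset.single_le_sum (fun y _ => hbad0 y ψ) (Finset.mem_univ x)
  -- total mass
  have htotal : ∑ ψ : Fin n → Fin f, w ψ = (f:ℝ) ^ (n - t) := by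
    simp only [hw]
    rw [sum_fn_prod (n := n) (f := f) S ψf, ← ht]
    rw [Finset.prod_congr rfl hψsum, Finset.prod_const_one, mul_one]
  -- bad mass
  have hbadmass : ∑ ψ : Fin n → Fin f,
      w ψ * (if IsMFCommunity n f π (α - γ/4) (β + γ/4) θ S ψ then (0:ℝ) else 1)
        ≤ (n:ℝ) * ((f:ℝ) ^ (n - t) * Real.exp (-(γ ^ 2 * t / 8))) := by
    calc ∑ ψ : Fin n → Fin f,
        w ψ * (if IsMFCommunity n f π (α - γ/4) (β + γ/4) θ S ψ then (0:ℝ) else 1)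
        ≤ ∑ ψ : Fin n → Fin f, w ψ * ∑ x : Fin n, bad x ψ :=
          Finset.sum_le_sum fun ψ _ =>
            mul_le_mul_of_nonneg_left (hpoint ψ) (hwpos ψ)
      _ = ∑ x : Fin n, ∑ ψ : Fin n → Fin f, w ψ * bad x ψ := by
          rw [Finset.sum_comm]
          apply Finset.sum_congr rfl
          intro ψ _
          rw [Finset.mul_sum]
      _ ≤ ∑ _x : Fin n, (f:ℝ) ^ (n - t) * Real.exp (-(γ ^ 2 * t / 8)) :=
          Finset.sum_le_sum fun x _ => hbadsum x
      _ = (n:ℝ) * ((f:ℝ) ^ (n - t) * Real.exp (-(γ ^ 2 * t / 8))) := by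
          rw [Finset.sum_const, Finset.card_univ, Fintype.card_fin, nsmul_eq_mul]
  -- small exponential
  have hexp : (n:ℝ) * Real.exp (-(γ ^ 2 * t / 8)) < 1 := by
    have hnpos : (0:ℝ) < (n:ℝ) := Nat.cast_pos.mpr hn
    have h1 : Real.exp (-(γ ^ 2 * t / 8)) < Real.exp (-(Real.log n)) := by
      apply Real.exp_lt_exp.mpr
      linarith
    have h2 : Real.exp (-(Real.log n)) = ((n:ℝ))⁻¹ := by
      rw [Real.exp_neg, Real.exp_log hnpos]
    calc (n:ℝ) * Real.exp (-(γ ^ 2 * t / 8)) < (n:ℝ) * ((n:ℝ))⁻¹ := by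
          rw [← h2]
          exact mul_lt_mul_of_pos_left h1 hnpos
      _ = 1 := mul_inv_cancel₀ hnpos.ne'
  -- conclude positivity
  have hsplit : ∑ ψ : Fin n → Fin f,
      w ψ * (if IsMFCommunity n f π (α - γ/4) (β + γ/4) θ S ψ then (1:ℝ) else 0)
      = (∑ ψ : Fin n → Fin f, w ψ)
        - ∑ ψ : Fin n → Fin f,
            w ψ * (if IsMFCommunity n f π (α - γ/4) (β + γ/4) θ S ψ then (0:ℝ) else 1) := by
    rw [← Finset.sum_sub_distrib]
    apply Finset.sum_congr rfl
    intro ψ _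
    split_ifs <;> ring
  have hfpowpos : (0:ℝ) < (f:ℝ) ^ (n - t) := by positivity
  have hpos : 0 < ∑ ψ : Fin n → Fin f,
      w ψ * (if IsMFCommunity n f π (α - γ/4) (β + γ/4) θ S ψ then (1:ℝ) else 0) := by
    rw [hsplit, htotal]
    have h1 := hbadmass
    have h2 : (n:ℝ) * ((f:ℝ) ^ (n - t) * Real.exp (-(γ ^ 2 * t / 8)))
        < (f:ℝ) ^ (n - t) := by
      calc (n:ℝ) * ((f:ℝ) ^ (n - t) * Real.exp (-(γ ^ 2 * t / 8)))
          = ((n:ℝ) * Real.exp (-(γ ^ 2 * t / 8))) * (f:ℝ) ^ (n - t) := by ring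
        _ < 1 * (f:ℝ) ^ (n - t) := by
            exact mul_lt_mul_of_pos_right hexp hfpowpos
        _ = (f:ℝ) ^ (n - t) := one_mul _
    linarith
  constructor
  · exact hpos
  · by_contra hno
    push_neg at hno
    have : ∑ ψ : Fin n → Fin f,
        w ψ * (if IsMFCommunity n f π (α - γ/4) (β + γ/4) θ S ψ then (1:ℝ) else 0) = 0 := by
      apply Finset.sum_eq_zero
      intro ψ _
      rw [if_neg (hno ψ), mul_zero]
    rw [this] at hpos
    exact lt_irrefl 0 hpos
end
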